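/- arXiv:0803.1477 — 7 statements merged into one kernel-verified Lean document; each statement's English description precedes it below -/
import Mathlib

section
/- Let R be a commutative ring and let r, s ∈ R. For x ∈ R and k ∈ ℕ write x^{↓k} = ∏_{j=0}^{k-1} (x - j) for the falling factorial. Then for every integer m ≥ 1: Σ_{ω ∈ Π_m} r^{↓|ω|} · ∏_{B ∈ ω} s^{↓|B|} = (r·s)^{↓m}, where the sum runs over all partitions ω of the set {1,…,m} into nonempty blocks, |ω| is the number of blocks of ω, and |B| is the size of a block B. -/
open Finset

/-- The falling factorial `x^{↓k} = x(x-1)⋯(x-k+1)` in a commutative ring. -/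
def fallingFactorial {R : Type*} [CommRing R] (x : R) (k : ℕ) : R :=
  ∏ j ∈ Finset.range k, (x - (j : R))

lemma ffact_zero {R : Type*} [CommRing R] (x : R) : fallingFactorial x 0 = 1 :=
  Finset.prod_range_zero _

lemma ffact_succ {R : Type*} [CommRing R] (x : R) (k : ℕ) :
    fallingFactorial x (k + 1) = fallingFactorial x k * (x - k) :=
  Finset.prod_range_succ _ _

lemma ffact_one {R : Type*} [CommRing R] (x : R) : fallingFactorial x 1 = x := by
  simp [fallingFactorial]

section Partitions

variable {α : Type*} [DecidableEq α] {A : Finset α} {a : α}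

/-- Extend a partition of `A.erase a` by the singleton block `{a}`. -/
def extSingle (ha : a ∈ A) (ω : Finpartition (A.erase a)) : Finpartition A :=
  ω.extend (b := {a}) (by simp [Finset.bot_eq_empty])
    (Finset.disjoint_singleton_right.2 (Finset.notMem_erase a A))
    (by rw [sup_eq_union, Finset.union_comm, ← Finset.insert_eq, Finset.insert_erase ha])

lemma extSingle_parts (ha : a ∈ A) (ω : Finpartition (A.erase a)) :
    (extSingle ha ω).parts = insert {a} ω.parts := rfl

/-- Insert `a` into the block `B` of a partition of `A.erase a`. -/
def insPart (ha : a ∈ A) (ω : Finpartition (A.erase a)) {B : Finset α}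
    (hB : B ∈ ω.parts) : Finpartition A where
  parts := insert (insert a B) (ω.parts.erase B)
  supIndep := by
    have haB : ∀ C ∈ ω.parts, a ∉ C := fun C hC h => Finset.notMem_erase a A (ω.le hC h)
    rw [Finset.supIndep_iff_pairwiseDisjoint, Finset.coe_insert]
    refine Set.PairwiseDisjoint.insert
      (ω.disjoint.subset (Finset.coe_subset.2 (Finset.erase_subset _ _))) ?_
    intro C hC hne
    simp only [Finset.coe_erase, Set.mem_diff, Finset.mem_coe, Set.mem_singleton_iff] at hC
    simp only [id]
    rw [Finset.disjoint_insert_left]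
    exact ⟨haB C hC.1, ω.disjoint hB hC.1 (fun h => hC.2 h.symm)⟩
  sup_parts := by
    have h1 : B ⊔ (ω.parts.erase B).sup id = A.erase a := by
      rw [show B ⊔ (ω.parts.erase B).sup id = (insert B (ω.parts.erase B)).sup id from
        (Finset.sup_insert).symm, Finset.insert_erase hB, ω.sup_parts]
    rw [Finset.sup_insert, id, sup_eq_union, Finset.insert_union]
    rw [sup_eq_union] at h1
    rw [h1, Finset.insert_erase ha]
  bot_notMem := by
    simp only [Finset.bot_eq_empty, Finset.mem_insert]
    rintro (h | h)
    · exact (Finset.insert_ne_empty a B) h.symm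
    · exact ω.bot_notMem (by rw [Finset.bot_eq_empty]; exact Finset.mem_of_mem_erase h)

lemma insPart_parts (ha : a ∈ A) (ω : Finpartition (A.erase a)) {B : Finset α}
    (hB : B ∈ ω.parts) :
    (insPart ha ω hB).parts = insert (insert a B) (ω.parts.erase B) := rfl

/-- Restrict a partition of `A` to `A.erase a`. -/
def resPart (a : α) (ω' : Finpartition A) : Finpartition (A.erase a) :=
  (ω'.avoid {a}).copy (Finset.sdiff_singleton_eq_erase a A)

lemma resPart_parts (ω' : Finpartition A) :
    (resPart a ω').parts = (ω'.parts.image (fun C => C.erase a)).erase ∅ := by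
  have : (fun C : Finset α => C \ {a}) = (fun C => C.erase a) := by
    funext C; exact Finset.sdiff_singleton_eq_erase a C
  simp [resPart, Finpartition.avoid, Finpartition.ofErase, Finpartition.copy, this]

end Partitions

section Classify

variable {α : Type*} [DecidableEq α] {A : Finset α} {a : α}

lemma not_mem_of_mem_parts (ω : Finpartition (A.erase a)) {C : Finset α}
    (hC : C ∈ ω.parts) : a ∉ C := fun h => Finset.notMem_erase a A (ω.le hC h)

lemma image_erase_parts (ω : Finpartition (A.erase a)) :
    ω.parts.image (fun C => C.erase a) = ω.parts := by
  rw [show ω.parts.image (fun C => C.erase a) = ω.parts.image id from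
    Finset.image_congr (fun C hC =>
      Finset.erase_eq_of_notMem (not_mem_of_mem_parts ω hC)), Finset.image_id]

lemma resPart_extSingle (ha : a ∈ A) (ω : Finpartition (A.erase a)) :
    resPart a (extSingle ha ω) = ω := by
  ext1
  rw [resPart_parts, extSingle_parts, Finset.image_insert, Finset.erase_singleton,
    image_erase_parts, Finset.erase_insert (by simpa using ω.bot_notMem)]

lemma resPart_insPart (ha : a ∈ A) (ω : Finpartition (A.erase a)) {B : Finset α}
    (hB : B ∈ ω.parts) : resPart a (insPart ha ω hB) = ω := by
  have haB : a ∉ B := not_mem_of_mem_parts ω hB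
  have hBne : B.Nonempty := ω.nonempty_of_mem_parts hB
  ext1
  rw [resPart_parts, insPart_parts, Finset.image_insert, Finset.erase_insert haB,
    show (ω.parts.erase B).image (fun C => C.erase a) = ω.parts.erase B from ?_,
    Finset.erase_insert_of_ne hBne.ne_empty,
    Finset.erase_eq_of_notMem (fun h => ω.bot_notMem
      (by rw [Finset.bot_eq_empty]; exact Finset.mem_of_mem_erase h)),
    Finset.insert_erase hB]
  rw [show (ω.parts.erase B).image (fun C => C.erase a) = (ω.parts.erase B).image id from
    Finset.image_congr (fun C hC => Finset.erase_eq_of_notMem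
      (not_mem_of_mem_parts ω (Finset.mem_of_mem_erase hC))), Finset.image_id]

lemma classify (ha : a ∈ A) (ω' : Finpartition A) :
    ω' = extSingle ha (resPart a ω') ∨
    ∃ B, ∃ hB : B ∈ (resPart a ω').parts, ω' = insPart ha (resPart a ω') hB := by
  set P := ω'.part a with hPdef
  have hP : P ∈ ω'.parts := ω'.part_mem.2 ha
  have haP : a ∈ P := ω'.mem_part ha
  have hkey : ∀ C ∈ ω'.parts.erase P, a ∉ C := fun C hC h =>
    (Finset.ne_of_mem_erase hC)
      (ω'.eq_of_mem_parts (Finset.mem_of_mem_erase hC) hP h haP)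
  have hbot : (∅ : Finset α) ∉ ω'.parts.erase P := fun h => ω'.bot_notMem
    (by rw [Finset.bot_eq_empty]; exact Finset.mem_of_mem_erase h)
  have hres : (resPart a ω').parts
      = (insert (P.erase a) (ω'.parts.erase P)).erase ∅ := by
    rw [resPart_parts]
    conv_lhs => rw [← Finset.insert_erase hP]
    rw [Finset.image_insert,
      show (ω'.parts.erase P).image (fun C => C.erase a)
          = (ω'.parts.erase P).image id from
        Finset.image_congr (fun C hC => Finset.erase_eq_of_notMem (hkey C hC)),
      Finset.image_id]
  by_cases hsing : P = {a}
  · left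
    ext1
    rw [extSingle_parts, hres,
      show P.erase a = ∅ by rw [hsing]; exact Finset.erase_singleton a,
      Finset.erase_insert hbot, ← hsing, Finset.insert_erase hP]
  · right
    obtain ⟨b, hbP, hba⟩ : ∃ b ∈ P, b ≠ a := by
      by_contra h
      push_neg at h
      exact hsing (Finset.eq_singleton_iff_unique_mem.2 ⟨haP, h⟩)
    have hBne : (P.erase a).Nonempty := ⟨b, Finset.mem_erase.2 ⟨hba, hbP⟩⟩
    have hres2 : (resPart a ω').parts = insert (P.erase a) (ω'.parts.erase P) := by
      rw [hres, Finset.erase_insert_of_ne hBne.ne_empty,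
        Finset.erase_eq_of_notMem hbot]
    have hBQ : P.erase a ∉ ω'.parts.erase P := by
      intro h
      have hne : P.erase a ≠ P := by intro he; rw [← he] at haP; exact Finset.notMem_erase a P haP
      exact (Finset.disjoint_left.1
        (ω'.disjoint (Finset.mem_of_mem_erase h) hP hne)
        (Finset.mem_erase.2 ⟨hba, hbP⟩) hbP)
    refine ⟨P.erase a, by rw [hres2]; exact Finset.mem_insert_self _ _, ?_⟩
    ext1
    rw [insPart_parts, hres2, Finset.erase_insert hBQ,
      Finset.insert_erase haP, Finset.insert_erase hP]

end Classify

section Distinct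

variable {α : Type*} [DecidableEq α] {A : Finset α} {a : α}

lemma extSingle_part (ha : a ∈ A) (ω : Finpartition (A.erase a)) :
    (extSingle ha ω).part a = {a} :=
  (extSingle ha ω).part_eq_of_mem (by rw [extSingle_parts]; exact Finset.mem_insert_self _ _)
    (Finset.mem_singleton_self a)

lemma insPart_part (ha : a ∈ A) (ω : Finpartition (A.erase a)) {B : Finset α}
    (hB : B ∈ ω.parts) : (insPart ha ω hB).part a = insert a B :=
  (insPart ha ω hB).part_eq_of_mem (by rw [insPart_parts]; exact Finset.mem_insert_self _ _)
    (Finset.mem_insert_self _ _)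

lemma extSingle_ne_insPart (ha : a ∈ A) (ω : Finpartition (A.erase a)) {B : Finset α}
    (hB : B ∈ ω.parts) : extSingle ha ω ≠ insPart ha ω hB := by
  intro h
  have h2 : ({a} : Finset α) = insert a B := by
    rw [← extSingle_part ha ω, h, insPart_part ha ω hB]
  obtain ⟨b, hb⟩ := ω.nonempty_of_mem_parts hB
  have : b ∈ ({a} : Finset α) := h2 ▸ Finset.mem_insert_of_mem hb
  exact not_mem_of_mem_parts ω hB (Finset.mem_singleton.1 this ▸ hb)

lemma insPart_injective (ha : a ∈ A) (ω : Finpartition (A.erase a)) {B₁ B₂ : Finset α}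
    (hB₁ : B₁ ∈ ω.parts) (hB₂ : B₂ ∈ ω.parts)
    (h : insPart ha ω hB₁ = insPart ha ω hB₂) : B₁ = B₂ := by
  have h2 : insert a B₁ = insert a B₂ := by
    rw [← insPart_part ha ω hB₁, h, insPart_part ha ω hB₂]
  have e1 := Finset.erase_insert (not_mem_of_mem_parts ω hB₁)
  have e2 := Finset.erase_insert (not_mem_of_mem_parts ω hB₂)
  rw [← e1, ← e2, h2]

end Distinct

lemma key {R : Type*} [CommRing R] (r s : R) {α : Type*} [DecidableEq α] (A : Finset α) :
    ∑ ω : Finpartition A,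
        fallingFactorial r ω.parts.card * ∏ B ∈ ω.parts, fallingFactorial s B.card
      = fallingFactorial (r * s) A.card := by
  classical
  induction A using Finset.strongInduction with
  | _ A ih =>
  rcases A.eq_empty_or_nonempty with rfl | ⟨a, ha⟩
  · have h1 : ∀ ω : Finpartition (∅ : Finset α), ω.parts = ∅ := fun ω =>
      Finpartition.parts_eq_empty_iff.2 Finset.bot_eq_empty.symm
    haveI : Subsingleton (Finpartition (∅ : Finset α)) :=
      ⟨fun x y => by ext1; rw [h1 x, h1 y]⟩
    have ω₀ : Finpartition (∅ : Finset α) :=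
      (default : Finpartition (⊥ : Finset α)).copy Finset.bot_eq_empty
    rw [Fintype.sum_subsingleton _ ω₀, h1 ω₀]
    simp [ffact_zero]
  · have hAsub : A.erase a ⊂ A := Finset.erase_ssubset ha
    have hIH := ih (A.erase a) hAsub
    set n := (A.erase a).card with hndef
    have hn : n + 1 = A.card := Finset.card_erase_add_one ha
    rw [← Finset.sum_fiberwise Finset.univ (fun ω' : Finpartition A => resPart a ω')
      (fun ω' => fallingFactorial r ω'.parts.card
        * ∏ B ∈ ω'.parts, fallingFactorial s B.card)]
    have hfiber : ∀ ω : Finpartition (A.erase a),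
        (Finset.univ.filter fun ω' : Finpartition A => resPart a ω' = ω)
          = insert (extSingle ha ω)
              (ω.parts.attach.image fun B => insPart ha ω B.2) := by
      intro ω
      ext ω'
      simp only [Finset.mem_filter, Finset.mem_univ, true_and, Finset.mem_insert,
        Finset.mem_image, Finset.mem_attach, true_and, Subtype.exists]
      constructor
      · rintro rfl
        rcases classify ha ω' with h | ⟨B, hB, h⟩
        · exact Or.inl h
        · exact Or.inr ⟨B, hB, h.symm⟩
      · rintro (rfl | ⟨B, hB, rfl⟩)
        · exact resPart_extSingle ha ω
        · exact resPart_insPart ha ω hB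
    have hinner : ∀ ω : Finpartition (A.erase a),
        ∑ ω' ∈ Finset.univ.filter (fun ω' : Finpartition A => resPart a ω' = ω),
          (fallingFactorial r ω'.parts.card * ∏ B ∈ ω'.parts, fallingFactorial s B.card)
        = (r * s - n) * (fallingFactorial r ω.parts.card
            * ∏ B ∈ ω.parts, fallingFactorial s B.card) := by
      intro ω
      have hnotmem : extSingle ha ω ∉ ω.parts.attach.image fun B => insPart ha ω B.2 := by
        simp only [Finset.mem_image, Finset.mem_attach, true_and, Subtype.exists]
        rintro ⟨B, hB, h⟩
        exact extSingle_ne_insPart ha ω hB h.symm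
      have hsingnot : ({a} : Finset α) ∉ ω.parts := fun h =>
        not_mem_of_mem_parts ω h (Finset.mem_singleton_self a)
      rw [hfiber ω, Finset.sum_insert hnotmem,
        Finset.sum_image (fun x _ y _ h => Subtype.ext (insPart_injective ha ω x.2 y.2 h))]
      have hext : fallingFactorial r (extSingle ha ω).parts.card
            * ∏ B ∈ (extSingle ha ω).parts, fallingFactorial s B.card
          = fallingFactorial r ω.parts.card * (r - ω.parts.card) * s
            * ∏ B ∈ ω.parts, fallingFactorial s B.card := by
        rw [extSingle_parts, Finset.card_insert_of_notMem hsingnot,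
          Finset.prod_insert hsingnot, Finset.card_singleton, ffact_one, ffact_succ]
        ring
      have hins : ∀ (B : Finset α) (hB : B ∈ ω.parts),
          fallingFactorial r (insPart ha ω hB).parts.card
            * ∏ C ∈ (insPart ha ω hB).parts, fallingFactorial s C.card
          = fallingFactorial r ω.parts.card * (s - B.card)
            * ∏ C ∈ ω.parts, fallingFactorial s C.card := by
        intro B hB
        have haB : a ∉ B := not_mem_of_mem_parts ω hB
        have hnot : insert a B ∉ ω.parts.erase B := fun h =>
          not_mem_of_mem_parts ω (Finset.mem_of_mem_erase h) (Finset.mem_insert_self a B)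
        rw [insPart_parts, Finset.card_insert_of_notMem hnot, Finset.card_erase_add_one hB,
          Finset.prod_insert hnot, Finset.card_insert_of_notMem haB, ffact_succ,
          ← Finset.mul_prod_erase ω.parts (fun C => fallingFactorial s C.card) hB]
        ring
      rw [hext, Finset.sum_congr rfl (fun B _ => hins B.1 B.2)]
      have h2 : ∑ B ∈ ω.parts.attach,
            (fallingFactorial r ω.parts.card * (s - (B.1.card : R))
              * ∏ C ∈ ω.parts, fallingFactorial s C.card)
          = (fallingFactorial r ω.parts.card * ∏ C ∈ ω.parts, fallingFactorial s C.card)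
            * ∑ B ∈ ω.parts.attach, (s - (B.1.card : R)) := by
        rw [Finset.mul_sum]
        exact Finset.sum_congr rfl (fun _ _ => by ring)
      rw [h2, Finset.sum_attach ω.parts (fun B => s - (B.card : R))]
      have hsum : ∑ B ∈ ω.parts, (s - (B.card : R)) = ω.parts.card * s - n := by
        rw [Finset.sum_sub_distrib, Finset.sum_const, nsmul_eq_mul, ← Nat.cast_sum,
          ω.sum_card_parts]
      rw [hsum]
      ring
    calc ∑ ω : Finpartition (A.erase a),
          ∑ ω' ∈ Finset.univ.filter (fun ω' : Finpartition A => resPart a ω' = ω),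
            (fallingFactorial r ω'.parts.card * ∏ B ∈ ω'.parts, fallingFactorial s B.card)
        = ∑ ω : Finpartition (A.erase a), (r * s - n) * (fallingFactorial r ω.parts.card
            * ∏ B ∈ ω.parts, fallingFactorial s B.card) :=
          Finset.sum_congr rfl (fun ω _ => hinner ω)
      _ = (r * s - n) * ∑ ω : Finpartition (A.erase a), (fallingFactorial r ω.parts.card
            * ∏ B ∈ ω.parts, fallingFactorial s B.card) := (Finset.mul_sum _ _ _).symm
      _ = (r * s - n) * fallingFactorial (r * s) n := by rw [hIH]
      _ = fallingFactorial (r * s) (n + 1) := by rw [ffact_succ]; ring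
      _ = fallingFactorial (r * s) A.card := by rw [hn]

theorem stmt3 {R : Type*} [CommRing R] (r s : R) (m : ℕ) (hm : 1 ≤ m) :
    ∑ ω : Finpartition (Finset.univ : Finset (Fin m)),
        fallingFactorial r ω.parts.card * ∏ B ∈ ω.parts, fallingFactorial s B.card
      = fallingFactorial (r * s) m := by
  have := key r s (Finset.univ : Finset (Fin m))
  rwa [Finset.card_univ, Fintype.card_fin] at this
end

section
/- Let S be a finite set and let R be a commutative ring. For q1, q2 ∈ R and partitions σ, π of S, define μ_{q1,q2}(σ,π) ∈ R as follows: if σ refines π (every block of σ is contained in a block of π), and π has blocks B_1,…,B_k where block B_i contains exactly λ_i blocks of σ, set μ_{q1,q2}(σ,π) = ∏_{i=1}^{k} ∏_{j=1}^{λ_i - 1} (q2 - j·q1); otherwise set μ_{q1,q2}(σ,π) = 0. Then for all q1, q2, q3 ∈ R and all partitions σ, π of S: Σ_{τ ∈ Π(S)} μ_{q1,q2}(σ,τ) · μ_{q2,q3}(τ,π) = μ_{q1,q3}(σ,π). -/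
open Finset
open scoped Classical

/-- `σ` refines `π`: every block of `σ` is contained in some block of `π`. -/
def Refines {S : Type*} [DecidableEq S] {s : Finset S}
    (σ π : Finpartition s) : Prop :=
  ∀ B ∈ σ.parts, ∃ C ∈ π.parts, B ⊆ C

/-- The generalized Möbius function `μ_{q1,q2}(σ,π)`:
if `σ ≤ π`, the product over blocks `C` of `π` of `∏_{j=1}^{λ_C - 1} (q2 - j·q1)`,
where `λ_C` is the number of blocks of `σ` contained in `C`; and `0` otherwise. -/
noncomputable def muQ {S : Type*} [DecidableEq S] {s : Finset S} {R : Type*} [CommRing R]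
    (q1 q2 : R) (σ π : Finpartition s) : R :=
  if Refines σ π then
    ∏ C ∈ π.parts, ∏ j ∈ Finset.Icc 1 ((σ.parts.filter (fun B => B ⊆ C)).card - 1),
      (q2 - (j : R) * q1)
  else 0



section Phi
variable {R : Type*} [CommRing R]

/-- `phi a b m = ∏_{j=1}^{m-1} (b - j a)`. -/
noncomputable def phi (a b : R) (m : ℕ) : R := ∏ j ∈ Finset.Icc 1 (m-1), (b - (j : R) * a)

@[simp] lemma phi_zero (a b : R) : phi a b 0 = 1 := by simp [phi]
@[simp] lemma phi_one (a b : R) : phi a b 1 = 1 := by simp [phi]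

lemma phi_succ (a b : R) {m : ℕ} (hm : 1 ≤ m) :
    phi a b (m+1) = phi a b m * (b - (m : R) * a) := by
  unfold phi
  rw [Nat.add_sub_cancel]
  have : m = (m-1) + 1 := (Nat.succ_pred_eq_of_pos hm).symm
  rw [show Finset.Icc 1 m = insert m (Finset.Icc 1 (m-1)) by
    ext j; simp [Finset.mem_Icc]; omega]
  rw [Finset.prod_insert (by simp; omega), mul_comm]

end Phi

section PartLemmas
variable {α : Type*} [DecidableEq α] {s : Finset α}

/-- Every part of a finpartition that refines another partition: the part of `x` is inside
the τ-part containing `x`. Here the basic fact: a τ-part is the union of the σ-parts inside it. -/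
lemma blocks_sup {σ τ : Finpartition s} (h : ∀ B ∈ σ.parts, ∃ C ∈ τ.parts, B ⊆ C)
    {D : Finset α} (hD : D ∈ τ.parts) :
    (σ.parts.filter (fun B => B ⊆ D)).sup id = D := by
  apply le_antisymm
  · exact Finset.sup_le fun B hB => (Finset.mem_filter.1 hB).2
  · intro x hx
    have hxs : x ∈ s := τ.le hD hx
    obtain ⟨B, hB, hxB⟩ := σ.exists_mem hxs
    obtain ⟨D', hD', hBD'⟩ := h B hB
    have : D = D' := τ.eq_of_mem_parts hD hD' hx (hBD' hxB)
    subst this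
    have hmem : B ∈ σ.parts.filter (fun B => B ⊆ D) := Finset.mem_filter.2 ⟨hB, hBD'⟩
    exact Finset.le_sup (f := id) hmem hxB

lemma blocks_nonempty {σ τ : Finpartition s} (h : ∀ B ∈ σ.parts, ∃ C ∈ τ.parts, B ⊆ C)
    {D : Finset α} (hD : D ∈ τ.parts) :
    (σ.parts.filter (fun B => B ⊆ D)).Nonempty := by
  by_contra hne
  rw [Finset.not_nonempty_iff_eq_empty] at hne
  have := blocks_sup h hD
  rw [hne] at this
  simp only [Finset.sup_empty] at this
  exact τ.ne_bot hD this.symm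

/-- Distinct groups of σ-parts have disjoint unions. -/
lemma sup_disjoint_of_disjoint {σ : Finpartition s} {P Q : Finset (Finset α)}
    (hP : P ⊆ σ.parts) (hQ : Q ⊆ σ.parts) (hPQ : Disjoint P Q) :
    Disjoint (P.sup id) (Q.sup id) := by
  rw [Finset.disjoint_sup_left]
  intro B hB
  rw [Finset.disjoint_sup_right]
  intro B' hB'
  exact σ.disjoint (hP hB) (hQ hB') (fun hEq => Finset.disjoint_left.1 hPQ hB (hEq ▸ hB'))

lemma sup_ne_empty {σ : Finpartition s} {P : Finset (Finset α)}
    (hP : P ⊆ σ.parts) (hne : P.Nonempty) : (P.sup id : Finset α).Nonempty := by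
  obtain ⟨B, hB⟩ := hne
  obtain ⟨x, hx⟩ := σ.nonempty_of_mem_parts (hP hB)
  exact ⟨x, (Finset.le_sup (f := id) hB) hx⟩

/-- Recover a group of σ-parts from its union. -/
lemma filter_sup_eq {σ : Finpartition s} {P : Finset (Finset α)} (hP : P ⊆ σ.parts) :
    σ.parts.filter (fun B => B ⊆ P.sup id) = P := by
  ext B
  simp only [Finset.mem_filter]
  constructor
  · rintro ⟨hB, hBs⟩
    obtain ⟨x, hx⟩ := σ.nonempty_of_mem_parts hB
    have := hBs hx
    rw [Finset.mem_sup] at this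
    obtain ⟨B', hB', hxB'⟩ := this
    rwa [σ.eq_of_mem_parts hB (hP hB') hx hxB']
  · intro hB
    exact ⟨hP hB, Finset.le_sup (f := id) hB⟩

lemma sup_injOn {σ : Finpartition s} {t : Finset (Finset α)} (ht : t ⊆ σ.parts)
    (ρ : Finpartition t) :
    Set.InjOn (fun P : Finset (Finset α) => P.sup id) ρ.parts := by
  intro P hP Q hQ hEq
  by_contra hne
  have hPt : P ⊆ t := ρ.le hP
  have hQt : Q ⊆ t := ρ.le hQ
  have hd : Disjoint (P.sup id) (Q.sup id) :=
    sup_disjoint_of_disjoint (hPt.trans ht) (hQt.trans ht) (ρ.disjoint hP hQ hne)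
  have hP' : P ∈ ρ.parts := hP
  have hne' : (P.sup id : Finset α).Nonempty :=
    sup_ne_empty (hPt.trans ht) (ρ.nonempty_of_mem_parts hP')
  simp only at hEq
  rw [hEq] at hd
  have hbot : Q.sup id = (⊥ : Finset α) := disjoint_self.1 hd
  rw [← hEq] at hbot
  rw [Finset.bot_eq_empty] at hbot
  rw [hbot] at hne'
  exact Finset.not_nonempty_empty hne'

/-- Glue a partition of a set of σ-parts into a partition of the union. -/
noncomputable def glue (σ : Finpartition s) (t : Finset (Finset α)) (ht : t ⊆ σ.parts)
    (ρ : Finpartition t) : Finpartition (t.sup id) where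
  parts := ρ.parts.image fun P => P.sup id
  supIndep := by
    rw [Finset.supIndep_iff_pairwiseDisjoint]
    intro x hx y hy hxy
    rw [Finset.mem_coe, Finset.mem_image] at hx hy
    obtain ⟨P, hP, rfl⟩ := hx
    obtain ⟨Q, hQ, rfl⟩ := hy
    have hne : P ≠ Q := fun h => hxy (by rw [h])
    exact sup_disjoint_of_disjoint ((ρ.le hP).trans ht) ((ρ.le hQ).trans ht)
      (ρ.disjoint hP hQ hne)
  sup_parts := by
    rw [Finset.sup_image]
    have h1 : t = ρ.parts.biUnion id := ρ.biUnion_parts.symm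
    conv_rhs => rw [h1, Finset.sup_biUnion]
    rfl
  bot_notMem := by
    rw [Finset.mem_image]
    rintro ⟨P, hP, hbot⟩
    obtain ⟨x, hx⟩ := sup_ne_empty ((ρ.le hP).trans ht) (ρ.nonempty_of_mem_parts hP)
    rw [hbot] at hx
    exact absurd hx (by simp)

@[simp] lemma glue_parts (σ : Finpartition s) (t : Finset (Finset α)) (ht : t ⊆ σ.parts)
    (ρ : Finpartition t) : (glue σ t ht ρ).parts = ρ.parts.image fun P => P.sup id := rfl

/-- Insert a new element `a` into the part `B` of a finpartition of `s`. -/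
noncomputable def insertIntoPart {a : α} (ha : a ∉ s) (τ : Finpartition s) (B : Finset α)
    (hB : B ∈ τ.parts) : Finpartition (insert a s) where
  parts := insert (insert a B) (τ.parts.erase B)
  supIndep := by
    rw [Finset.supIndep_iff_pairwiseDisjoint, Finset.coe_insert]
    refine Set.PairwiseDisjoint.insert ?_ ?_
    · exact τ.disjoint.subset (by intro x hx; exact Finset.mem_of_mem_erase hx)
    · intro D hD hne
      rw [Finset.mem_coe, Finset.mem_erase] at hD
      show Disjoint (insert a B) D
      rw [Finset.disjoint_insert_left]
      constructor
      · exact fun haD => ha (τ.le hD.2 haD)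
      · exact τ.disjoint hB hD.2 (Ne.symm hD.1)
  sup_parts := by
    ext x
    rw [Finset.mem_sup]
    simp only [Finset.mem_insert, Finset.mem_erase, id]
    constructor
    · rintro ⟨v, (rfl | ⟨hvB, hv⟩), hxv⟩
      · rcases Finset.mem_insert.1 hxv with rfl | hxB
        · exact Or.inl rfl
        · exact Or.inr (τ.le hB hxB)
      · exact Or.inr (τ.le hv hxv)
    · rintro (rfl | hxs)
      · exact ⟨_, Or.inl rfl, Finset.mem_insert_self _ _⟩
      · by_cases hxB : x ∈ B
        · exact ⟨insert a B, Or.inl rfl, Finset.mem_insert_of_mem hxB⟩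
        · obtain ⟨D, hD, hxD⟩ := τ.exists_mem hxs
          have hDB : D ≠ B := fun h => hxB (h ▸ hxD)
          exact ⟨D, Or.inr ⟨hDB, hD⟩, hxD⟩
  bot_notMem := by
    rw [Finset.mem_insert]
    rintro (h | h)
    · exact (Finset.insert_ne_empty a B) h.symm
    · exact τ.bot_notMem (Finset.mem_of_mem_erase h)

@[simp] lemma insertIntoPart_parts {a : α} (ha : a ∉ s) (τ : Finpartition s) (B : Finset α)
    (hB : B ∈ τ.parts) :
    (insertIntoPart ha τ B hB).parts = insert (insert a B) (τ.parts.erase B) := rfl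

/-- The map realizing `Finpartition (insert a s) ≃ Σ τ : Finpartition s, Option τ.parts`. -/
noncomputable def Fmap {a : α} (ha : a ∉ s) :
    (Σ τ : Finpartition s, Option {B // B ∈ τ.parts}) → Finpartition (insert a s)
  | ⟨τ, none⟩ => τ.extend (b := {a}) (by simp [Finset.bot_eq_empty])
      (Finset.disjoint_singleton_right.2 ha)
      (by rw [Finset.sup_eq_union, Finset.union_comm, ← Finset.insert_eq])
  | ⟨τ, some ⟨B, hB⟩⟩ => insertIntoPart ha τ B hB

lemma Fmap_none_parts {a : α} (ha : a ∉ s) (τ : Finpartition s) :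
    (Fmap ha ⟨τ, none⟩).parts = insert {a} τ.parts := rfl

lemma Fmap_some_parts {a : α} (ha : a ∉ s) (τ : Finpartition s) (B : Finset α)
    (hB : B ∈ τ.parts) :
    (Fmap ha ⟨τ, some ⟨B, hB⟩⟩).parts = insert (insert a B) (τ.parts.erase B) := rfl

lemma not_mem_of_part {a : α} (ha : a ∉ s) {τ : Finpartition s} {B : Finset α}
    (hB : B ∈ τ.parts) : a ∉ B := fun h => ha (τ.le hB h)

lemma Fmap_recover {a : α} (ha : a ∉ s)
    (x : Σ τ : Finpartition s, Option {B // B ∈ τ.parts}) :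
    ((Fmap ha x).parts.image (fun D => D.erase a)).erase ∅ = x.1.parts := by
  obtain ⟨τ, o⟩ := x
  have himg : ∀ u ⊆ τ.parts, u.image (fun D => D.erase a) = u := by
    intro u hu
    ext c
    simp only [Finset.mem_image]
    constructor
    · rintro ⟨D, hD, rfl⟩
      rwa [Finset.erase_eq_of_notMem (not_mem_of_part ha (hu hD))]
    · intro hc
      exact ⟨c, hc, Finset.erase_eq_of_notMem (not_mem_of_part ha (hu hc))⟩
  have hbot : (∅ : Finset α) ∉ τ.parts := τ.bot_notMem
  match o with
  | none =>
    rw [Fmap_none_parts, Finset.image_insert, himg _ Finset.Subset.rfl,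
      Finset.erase_singleton, Finset.erase_insert hbot]
  | some ⟨B, hB⟩ =>
    rw [Fmap_some_parts, Finset.image_insert, himg _ (Finset.erase_subset _ _),
      Finset.erase_insert (not_mem_of_part ha hB), Finset.insert_erase hB,
      Finset.erase_eq_of_notMem hbot]

lemma Fmap_injective {a : α} (ha : a ∉ s) : Function.Injective (Fmap ha) := by
  rintro ⟨τ1, o1⟩ ⟨τ2, o2⟩ h
  have hτ : τ1 = τ2 := Finpartition.ext
    (by rw [← Fmap_recover ha ⟨τ1, o1⟩, ← Fmap_recover ha ⟨τ2, o2⟩, h])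
  subst hτ
  suffices ho : o1 = o2 by rw [ho]
  have hp1 : (Fmap ha ⟨τ1, none⟩).part a = {a} :=
    Finpartition.part_eq_of_mem _ (by rw [Fmap_none_parts]; exact Finset.mem_insert_self _ _)
      (Finset.mem_singleton_self a)
  have hp2 : ∀ B (hB : B ∈ τ1.parts), (Fmap ha ⟨τ1, some ⟨B, hB⟩⟩).part a = insert a B :=
    fun B hB => Finpartition.part_eq_of_mem _
      (by rw [Fmap_some_parts]; exact Finset.mem_insert_self _ _)
      (Finset.mem_insert_self a B)
  match o1, o2 with
  | none, none => rfl
  | none, some ⟨B, hB⟩ =>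
    exfalso
    have h2 : ({a} : Finset α) = insert a B := by rw [← hp1, h, hp2]
    obtain ⟨x, hx⟩ := τ1.nonempty_of_mem_parts hB
    have hxa : x ≠ a := fun hxa => not_mem_of_part ha hB (hxa ▸ hx)
    have hmx : x ∈ ({a} : Finset α) := by rw [h2]; exact Finset.mem_insert_of_mem hx
    exact hxa (Finset.mem_singleton.1 hmx)
  | some ⟨B, hB⟩, none =>
    exfalso
    have h2 : ({a} : Finset α) = insert a B := by rw [← hp1, ← h, hp2]
    obtain ⟨x, hx⟩ := τ1.nonempty_of_mem_parts hB
    have hxa : x ≠ a := fun hxa => not_mem_of_part ha hB (hxa ▸ hx)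
    have hmx : x ∈ ({a} : Finset α) := by rw [h2]; exact Finset.mem_insert_of_mem hx
    exact hxa (Finset.mem_singleton.1 hmx)
  | some ⟨B1, hB1⟩, some ⟨B2, hB2⟩ =>
    have h2 : insert a B1 = insert a B2 := by rw [← hp2 B1 hB1, h, hp2]
    have hBeq : B1 = B2 := by
      have e1 : (insert a B1).erase a = B1 := Finset.erase_insert (not_mem_of_part ha hB1)
      have e2 : (insert a B2).erase a = B2 := Finset.erase_insert (not_mem_of_part ha hB2)
      rw [← e1, ← e2, h2]
    subst hBeq
    rfl

lemma Fmap_surjective {a : α} (ha : a ∉ s) : Function.Surjective (Fmap ha) := by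
  intro τp
  have haM : a ∈ insert a s := Finset.mem_insert_self a s
  have hDp : τp.part a ∈ τp.parts := τp.part_mem.2 haM
  have haD : a ∈ τp.part a := τp.mem_part haM
  set D := τp.part a with hD
  have hmemD : ∀ d ∈ τp.parts, a ∈ d → d = D := fun d hd had =>
    τp.eq_of_mem_parts hd hDp had haD
  have hcopy : insert a s \ {a} = s := by
    ext x
    simp only [Finset.mem_sdiff, Finset.mem_insert, Finset.mem_singleton]
    constructor
    · rintro ⟨(rfl | h), hne⟩
      · exact absurd rfl hne
      · exact h
    · intro hx
      exact ⟨Or.inr hx, fun h => ha (h ▸ hx)⟩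
  let τ' := (τp.avoid {a}).copy hcopy
  have hmem' : ∀ c, c ∈ τ'.parts ↔ ∃ d ∈ τp.parts, ¬d ⊆ {a} ∧ d \ {a} = c := by
    intro c
    show c ∈ ((τp.avoid {a}).copy hcopy).parts ↔ _
    rw [Finpartition.copy_parts]
    have := Finpartition.mem_avoid (P := τp) (b := ({a} : Finset α)) (c := c)
    simpa using this
  by_cases hDa : D = {a}
  · refine ⟨⟨τ', none⟩, Finpartition.ext ?_⟩
    rw [Fmap_none_parts]
    have hparts : τ'.parts = τp.parts.erase {a} := by
      ext c
      rw [hmem', Finset.mem_erase]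
      constructor
      · rintro ⟨d, hd, hnd, rfl⟩
        have had : a ∉ d := fun h => hnd (by rw [hmemD d hd h, hDa])
        rw [Finset.sdiff_singleton_eq_erase, Finset.erase_eq_of_notMem had]
        refine ⟨fun h => hnd (by rw [h]), hd⟩
      · rintro ⟨hc1, hc2⟩
        have hac : a ∉ c := fun h => hc1 (by rw [hmemD c hc2 h, hDa])
        refine ⟨c, hc2, ?_, by rw [Finset.sdiff_singleton_eq_erase,
          Finset.erase_eq_of_notMem hac]⟩
        intro hsub
        obtain ⟨x, hx⟩ := τp.nonempty_of_mem_parts hc2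
        exact hac (Finset.mem_singleton.1 (hsub hx) ▸ hx)
    rw [hparts, ← hDa, Finset.insert_erase hDp]
  · have hBne : (D.erase a).Nonempty := by
      rcases Finset.eq_empty_or_nonempty (D.erase a) with h | h
      · exfalso
        apply hDa
        apply Finset.eq_singleton_iff_unique_mem.2
        refine ⟨haD, fun x hx => ?_⟩
        by_contra hxa
        exact absurd (Finset.mem_erase.2 ⟨hxa, hx⟩) (by rw [h]; simp)
      · exact h
    have hparts : τ'.parts = insert (D.erase a) (τp.parts.erase D) := by
      ext c
      rw [hmem', Finset.mem_insert, Finset.mem_erase]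
      constructor
      · rintro ⟨d, hd, hnd, rfl⟩
        by_cases hdD : d = D
        · subst hdD
          left
          rw [Finset.sdiff_singleton_eq_erase]
        · right
          have had : a ∉ d := fun h => hdD (hmemD d hd h)
          rw [Finset.sdiff_singleton_eq_erase, Finset.erase_eq_of_notMem had]
          exact ⟨hdD, hd⟩
      · rintro (rfl | ⟨hc1, hc2⟩)
        · refine ⟨D, hDp, ?_, by rw [Finset.sdiff_singleton_eq_erase]⟩
          intro hsub
          exact hDa ((Finset.subset_singleton_iff.1 hsub).resolve_left
            (τp.nonempty_of_mem_parts hDp).ne_empty)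
        · have hac : a ∉ c := fun h => hc1 (hmemD c hc2 h)
          refine ⟨c, hc2, ?_, by rw [Finset.sdiff_singleton_eq_erase,
            Finset.erase_eq_of_notMem hac]⟩
          intro hsub
          obtain ⟨x, hx⟩ := τp.nonempty_of_mem_parts hc2
          exact hac (Finset.mem_singleton.1 (hsub hx) ▸ hx)
    have hB : D.erase a ∈ τ'.parts := by rw [hparts]; exact Finset.mem_insert_self _ _
    refine ⟨⟨τ', some ⟨D.erase a, hB⟩⟩, Finpartition.ext ?_⟩
    rw [Fmap_some_parts]
    have h1 : insert a (D.erase a) = D := Finset.insert_erase haD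
    have h2 : τ'.parts.erase (D.erase a) = τp.parts.erase D := by
      rw [hparts]
      apply Finset.erase_insert
      intro hmem
      have h3 : D.erase a ≠ D := fun h => (h ▸ (Finset.notMem_erase a D)) haD
      obtain ⟨x, hx⟩ := hBne
      exact h3 (τp.eq_of_mem_parts (Finset.mem_of_mem_erase hmem) hDp hx
        (Finset.mem_of_mem_erase hx))
    rw [h1, h2, Finset.insert_erase hDp]

variable {R : Type*} [CommRing R]

lemma parts_of_singleton (a : α) (τ : Finpartition ({a} : Finset α)) : τ.parts = {{a}} := by
  have h1 : ∀ B ∈ τ.parts, B = {a} := fun B hB =>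
    (Finset.subset_singleton_iff.1 (τ.le hB)).resolve_left (τ.ne_bot hB)
  obtain ⟨B, hB⟩ := τ.parts_nonempty (by simp)
  apply Finset.eq_singleton_iff_unique_mem.2
  exact ⟨h1 B hB ▸ hB, h1⟩

lemma sum_singleton_partition (a : α) (f : Finpartition ({a} : Finset α) → R) :
    ∑ τ : Finpartition ({a} : Finset α), f τ = f ⊥ := by
  have hcard : Fintype.card (Finpartition ({a} : Finset α)) = 1 := by
    rw [Fintype.card_eq_one_iff]
    exact ⟨⊥, fun τ => Finpartition.ext (by rw [parts_of_singleton, parts_of_singleton])⟩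
  rw [Fintype.sum_eq_single ⊥ (fun τ hτ => absurd
    (Finpartition.ext (by rw [parts_of_singleton, parts_of_singleton])) hτ)]

theorem keyA (q1 q2 q3 : R) (t : Finset α) :
    ∑ τ : Finpartition t, (∏ B ∈ τ.parts, phi q1 q2 B.card) * phi q2 q3 τ.parts.card
      = phi q1 q3 t.card := by
  induction t using Finset.induction_on with
  | empty =>
    have hparts : ∀ τ : Finpartition (∅ : Finset α), τ.parts = ∅ := fun τ =>
      Finpartition.parts_eq_empty_iff.2 (by rfl)
    have h1 : ∀ τ : Finpartition (∅ : Finset α),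
        (∏ B ∈ τ.parts, phi q1 q2 B.card) * phi q2 q3 τ.parts.card = 1 := by
      intro τ; rw [hparts]; simp
    rw [Finset.sum_congr rfl (fun τ _ => h1 τ), Finset.sum_const]
    have hcard : Fintype.card (Finpartition (∅ : Finset α)) = 1 := by
      rw [Fintype.card_eq_one_iff]
      exact ⟨⊥, fun τ => Finpartition.ext (by rw [hparts, hparts])⟩
    simp [Finset.card_univ, hcard]
  | @insert a s ha ih =>
    rcases Finset.eq_empty_or_nonempty s with rfl | hs
    · -- t = {a}
      rw [show (insert a ∅ : Finset α) = {a} from rfl, sum_singleton_partition]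
      have hb : (⊥ : Finpartition ({a} : Finset α)).parts = {{a}} := parts_of_singleton a ⊥
      rw [hb]
      simp [phi_one]
    · -- main case
      have hbij : Function.Bijective (Fmap ha) := ⟨Fmap_injective ha, Fmap_surjective ha⟩
      have hsum : ∑ τp : Finpartition (insert a s),
          (∏ B ∈ τp.parts, phi q1 q2 B.card) * phi q2 q3 τp.parts.card
          = ∑ x : (Σ τ : Finpartition s, Option {B // B ∈ τ.parts}),
            (∏ B ∈ (Fmap ha x).parts, phi q1 q2 B.card) * phi q2 q3 (Fmap ha x).parts.card :=
        (Fintype.sum_bijective (Fmap ha) hbij _ _ (fun x => rfl)).symm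
      rw [hsum, ← Finset.univ_sigma_univ, Finset.sum_sigma]
      have hterm : ∀ τ : Finpartition s,
          ∑ o : Option {B // B ∈ τ.parts},
            (∏ B ∈ (Fmap ha ⟨τ, o⟩).parts, phi q1 q2 B.card)
              * phi q2 q3 (Fmap ha ⟨τ, o⟩).parts.card
          = ((∏ B ∈ τ.parts, phi q1 q2 B.card) * phi q2 q3 τ.parts.card)
              * (q3 - (s.card : R) * q1) := by
        intro τ
        have hk : 1 ≤ τ.parts.card := Finset.card_pos.2 (τ.parts_nonempty (by
          simp only [Finset.bot_eq_empty]; exact hs.ne_empty))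
        have hsingnm : ({a} : Finset α) ∉ τ.parts := fun h =>
          (not_mem_of_part ha h) (Finset.mem_singleton_self a)
        rw [Fintype.sum_option]
        -- none term
        have hnone : (∏ B ∈ (Fmap ha ⟨τ, none⟩).parts, phi q1 q2 B.card)
            * phi q2 q3 (Fmap ha ⟨τ, none⟩).parts.card
            = (∏ B ∈ τ.parts, phi q1 q2 B.card) * phi q2 q3 (τ.parts.card + 1) := by
          rw [Fmap_none_parts, Finset.prod_insert hsingnm, Finset.card_insert_of_notMem hsingnm]
          simp [phi_one]
        -- some terms
        have hsome : ∀ (B : {B // B ∈ τ.parts}),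
            (∏ C ∈ (Fmap ha ⟨τ, some B⟩).parts, phi q1 q2 C.card)
              * phi q2 q3 (Fmap ha ⟨τ, some B⟩).parts.card
            = ((q2 - (B.1.card : R) * q1) * ∏ C ∈ τ.parts, phi q1 q2 C.card)
              * phi q2 q3 τ.parts.card := by
          rintro ⟨B, hB⟩
          have hanB : a ∉ B := not_mem_of_part ha hB
          have hnm : insert a B ∉ τ.parts.erase B := fun h =>
            not_mem_of_part ha (Finset.mem_of_mem_erase h) (Finset.mem_insert_self a B)
          have hBpos : 1 ≤ B.card := Finset.card_pos.2 (τ.nonempty_of_mem_parts hB)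
          rw [Fmap_some_parts, Finset.prod_insert hnm, Finset.card_insert_of_notMem hnm,
            Finset.card_erase_of_mem hB, Finset.card_insert_of_notMem hanB]
          have hc : τ.parts.card - 1 + 1 = τ.parts.card := Nat.succ_pred_eq_of_pos hk
          rw [hc, phi_succ q1 q2 hBpos]
          have hrest : phi q1 q2 B.card * ∏ C ∈ τ.parts.erase B, phi q1 q2 C.card
              = ∏ C ∈ τ.parts, phi q1 q2 C.card :=
            Finset.mul_prod_erase τ.parts (fun C => phi q1 q2 C.card) hB
          calc (phi q1 q2 B.card * (q2 - (B.card : R) * q1)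
                * ∏ C ∈ τ.parts.erase B, phi q1 q2 C.card) * phi q2 q3 τ.parts.card
              = ((q2 - (B.card : R) * q1) * (phi q1 q2 B.card
                * ∏ C ∈ τ.parts.erase B, phi q1 q2 C.card)) * phi q2 q3 τ.parts.card := by ring
            _ = ((q2 - (B.card : R) * q1) * ∏ C ∈ τ.parts, phi q1 q2 C.card)
                * phi q2 q3 τ.parts.card := by rw [hrest]
        rw [hnone, Finset.sum_congr rfl (fun B _ => hsome B)]
        rw [Finset.univ_eq_attach]
        rw [Finset.sum_attach τ.parts (fun B => ((q2 - (B.card : R) * q1)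
          * ∏ C ∈ τ.parts, phi q1 q2 C.card) * phi q2 q3 τ.parts.card)]
        have hsum2 : ∑ B ∈ τ.parts, (q2 - (B.card : R) * q1)
            = (τ.parts.card : R) * q2 - (s.card : R) * q1 := by
          rw [Finset.sum_sub_distrib, Finset.sum_const, nsmul_eq_mul, ← Finset.sum_mul]
          congr 2
          rw [← Nat.cast_sum]
          congr 1
          exact τ.sum_card_parts
        have hfac : ∑ B ∈ τ.parts, ((q2 - (B.card : R) * q1)
              * ∏ C ∈ τ.parts, phi q1 q2 C.card) * phi q2 q3 τ.parts.card
            = (∑ B ∈ τ.parts, (q2 - (B.card : R) * q1))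
              * ((∏ C ∈ τ.parts, phi q1 q2 C.card) * phi q2 q3 τ.parts.card) := by
          rw [Finset.sum_mul]
          apply Finset.sum_congr rfl
          intros
          ring
        rw [hfac, hsum2, phi_succ q2 q3 hk]
        ring
      rw [Finset.sum_congr rfl (fun τ _ => hterm τ)]
      rw [← Finset.sum_mul, ih, Finset.card_insert_of_notMem ha,
        phi_succ q1 q3 (Finset.card_pos.2 hs)]

end PartLemmas


section StepB
variable {S : Type*} [DecidableEq S] {s : Finset S}

/-- Glue a family of partitions of the σ-blocks within each π-block into a partition of `s`. -/
noncomputable def toTau (σ π : Finpartition s) (hσπ : Refines σ π)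
    (p : ∀ C ∈ π.parts, Finpartition (σ.parts.filter (fun B => B ⊆ C))) : Finpartition s :=
  π.bind (fun C hC =>
    (glue σ _ (Finset.filter_subset _ _) (p C hC)).copy (blocks_sup hσπ hC))

lemma toTau_parts (σ π : Finpartition s) (hσπ : Refines σ π)
    (p : ∀ C ∈ π.parts, Finpartition (σ.parts.filter (fun B => B ⊆ C))) :
    (toTau σ π hσπ p).parts
      = π.parts.attach.biUnion (fun x => (p x.1 x.2).parts.image fun P => P.sup id) := rfl

lemma sup_subset_of_mem (σ π : Finpartition s) {C : Finset S} (hC : C ∈ π.parts)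
    (ρ : Finpartition (σ.parts.filter (fun B => B ⊆ C))) {P : Finset (Finset S)}
    (hP : P ∈ ρ.parts) : P.sup id ⊆ C :=
  Finset.sup_le fun B hB => (Finset.mem_filter.1 (ρ.le hP hB)).2

lemma sup_mem_nonempty (σ π : Finpartition s) {C : Finset S} (hC : C ∈ π.parts)
    (ρ : Finpartition (σ.parts.filter (fun B => B ⊆ C))) {P : Finset (Finset S)}
    (hP : P ∈ ρ.parts) : (P.sup id : Finset S).Nonempty :=
  sup_ne_empty ((ρ.le hP).trans (Finset.filter_subset _ _)) (ρ.nonempty_of_mem_parts hP)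

lemma toTau_refines_left (σ π : Finpartition s) (hσπ : Refines σ π)
    (p : ∀ C ∈ π.parts, Finpartition (σ.parts.filter (fun B => B ⊆ C))) :
    Refines σ (toTau σ π hσπ p) := by
  intro B hB
  obtain ⟨C, hC, hBC⟩ := hσπ B hB
  have hBblk : B ∈ σ.parts.filter (fun B => B ⊆ C) := Finset.mem_filter.2 ⟨hB, hBC⟩
  obtain ⟨P, hP, hBP⟩ := (p C hC).exists_mem hBblk
  refine ⟨P.sup id, ?_, Finset.le_sup (f := id) hBP⟩
  rw [toTau_parts]
  rw [Finset.mem_biUnion]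
  exact ⟨⟨C, hC⟩, Finset.mem_attach _ _, Finset.mem_image_of_mem _ hP⟩

lemma toTau_refines_right (σ π : Finpartition s) (hσπ : Refines σ π)
    (p : ∀ C ∈ π.parts, Finpartition (σ.parts.filter (fun B => B ⊆ C))) :
    Refines (toTau σ π hσπ p) π := by
  intro D hD
  rw [toTau_parts, Finset.mem_biUnion] at hD
  obtain ⟨⟨C, hC⟩, -, hD⟩ := hD
  obtain ⟨P, hP, rfl⟩ := Finset.mem_image.1 hD
  exact ⟨C, hC, sup_subset_of_mem σ π hC _ hP⟩

lemma toTau_filter (σ π : Finpartition s) (hσπ : Refines σ π)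
    (p : ∀ C ∈ π.parts, Finpartition (σ.parts.filter (fun B => B ⊆ C)))
    {C : Finset S} (hC : C ∈ π.parts) :
    (toTau σ π hσπ p).parts.filter (fun D => D ⊆ C)
      = (p C hC).parts.image fun P => P.sup id := by
  ext D
  rw [Finset.mem_filter, toTau_parts, Finset.mem_biUnion]
  constructor
  · rintro ⟨⟨⟨C', hC'⟩, -, hD⟩, hDC⟩
    obtain ⟨P, hP, rfl⟩ := Finset.mem_image.1 hD
    have hCC' : C = C' := by
      by_contra hne
      obtain ⟨x, hx⟩ := sup_mem_nonempty σ π hC' (p C' hC') hP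
      exact (Finset.disjoint_left.1 (π.disjoint hC hC' hne)) (hDC hx)
        (sup_subset_of_mem σ π hC' (p C' hC') hP hx)
    subst hCC'
    exact Finset.mem_image_of_mem _ hP
  · intro hD
    obtain ⟨P, hP, rfl⟩ := Finset.mem_image.1 hD
    exact ⟨⟨⟨C, hC⟩, Finset.mem_attach _ _, Finset.mem_image_of_mem _ hP⟩,
      sup_subset_of_mem σ π hC _ hP⟩

lemma sigma_filter_sup (σ π : Finpartition s) {C : Finset S} (hC : C ∈ π.parts)
    (ρ : Finpartition (σ.parts.filter (fun B => B ⊆ C))) {P : Finset (Finset S)}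
    (hP : P ∈ ρ.parts) :
    σ.parts.filter (fun B => B ⊆ P.sup id) = P :=
  filter_sup_eq ((ρ.le hP).trans (Finset.filter_subset _ _))

/-- Cut a partition `τ` with `σ ≤ τ ≤ π` into a family over the blocks of `π`. -/
noncomputable def unglue {σ τ π : Finpartition s} (hστ : Refines σ τ) (hτπ : Refines τ π)
    (C : Finset S) (hC : C ∈ π.parts) :
    Finpartition (σ.parts.filter (fun B => B ⊆ C)) where
  parts := (τ.parts.filter (fun D => D ⊆ C)).image (fun D => σ.parts.filter (fun B => B ⊆ D))
  supIndep := by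
    rw [Finset.supIndep_iff_pairwiseDisjoint]
    intro x hx y hy hxy
    rw [Finset.mem_coe, Finset.mem_image] at hx hy
    obtain ⟨D, hD, rfl⟩ := hx
    obtain ⟨D', hD', rfl⟩ := hy
    obtain ⟨hD1, -⟩ := Finset.mem_filter.1 hD
    obtain ⟨hD'1, -⟩ := Finset.mem_filter.1 hD'
    have hne : D ≠ D' := fun h => hxy (by rw [h])
    show Disjoint (σ.parts.filter (fun B => B ⊆ D)) (σ.parts.filter (fun B => B ⊆ D'))
    rw [Finset.disjoint_left]
    intro B hB hB'
    obtain ⟨hBσ, hBD⟩ := Finset.mem_filter.1 hB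
    obtain ⟨-, hBD'⟩ := Finset.mem_filter.1 hB'
    exact σ.ne_bot hBσ (le_bot_iff.1 ((τ.disjoint hD1 hD'1 hne) hBD hBD'))
  sup_parts := by
    apply le_antisymm
    · apply Finset.sup_le
      intro x hx
      obtain ⟨D, hD, rfl⟩ := Finset.mem_image.1 hx
      obtain ⟨hD1, hD2⟩ := Finset.mem_filter.1 hD
      intro B hB
      obtain ⟨hBσ, hBD⟩ := Finset.mem_filter.1 hB
      exact Finset.mem_filter.2 ⟨hBσ, hBD.trans hD2⟩
    · intro B hB
      obtain ⟨hBσ, hBC⟩ := Finset.mem_filter.1 hB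
      obtain ⟨D, hD, hBD⟩ := hστ B hBσ
      obtain ⟨C', hC', hDC'⟩ := hτπ D hD
      have hCC' : C = C' := by
        obtain ⟨x, hx⟩ := σ.nonempty_of_mem_parts hBσ
        exact π.eq_of_mem_parts hC hC' (hBC hx) (hDC' (hBD hx))
      subst hCC'
      have hDf : D ∈ τ.parts.filter (fun D => D ⊆ C) := Finset.mem_filter.2 ⟨hD, hDC'⟩
      have hmem : σ.parts.filter (fun B => B ⊆ D)
          ∈ (τ.parts.filter (fun D => D ⊆ C)).image (fun D => σ.parts.filter (fun B => B ⊆ D)) :=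
        Finset.mem_image_of_mem _ hDf
      exact (Finset.le_sup (f := id) hmem) (Finset.mem_filter.2 ⟨hBσ, hBD⟩)
  bot_notMem := by
    rw [Finset.mem_image]
    rintro ⟨D, hD, hbot⟩
    obtain ⟨hD1, -⟩ := Finset.mem_filter.1 hD
    obtain ⟨B, hB⟩ := blocks_nonempty hστ hD1
    rw [hbot] at hB
    exact absurd hB (by simp)

lemma unglue_parts {σ τ π : Finpartition s} (hστ : Refines σ τ) (hτπ : Refines τ π)
    (C : Finset S) (hC : C ∈ π.parts) :
    (unglue hστ hτπ C hC).parts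
      = (τ.parts.filter (fun D => D ⊆ C)).image (fun D => σ.parts.filter (fun B => B ⊆ D)) := rfl

lemma toTau_unglue (σ τ π : Finpartition s) (hσπ : Refines σ π)
    (hστ : Refines σ τ) (hτπ : Refines τ π) :
    toTau σ π hσπ (fun C hC => unglue hστ hτπ C hC) = τ := by
  apply Finpartition.ext
  ext D
  rw [toTau_parts, Finset.mem_biUnion]
  constructor
  · rintro ⟨⟨C, hC⟩, -, hD⟩
    obtain ⟨P, hP, rfl⟩ := Finset.mem_image.1 hD
    rw [unglue_parts] at hP
    obtain ⟨D', hD', rfl⟩ := Finset.mem_image.1 hP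
    obtain ⟨hD'1, -⟩ := Finset.mem_filter.1 hD'
    rw [blocks_sup hστ hD'1]
    exact hD'1
  · intro hD
    obtain ⟨C, hC, hDC⟩ := hτπ D hD
    refine ⟨⟨C, hC⟩, Finset.mem_attach _ _, ?_⟩
    rw [Finset.mem_image]
    refine ⟨σ.parts.filter (fun B => B ⊆ D), ?_, blocks_sup hστ hD⟩
    rw [unglue_parts, Finset.mem_image]
    exact ⟨D, Finset.mem_filter.2 ⟨hD, hDC⟩, rfl⟩

lemma unglue_toTau (σ π : Finpartition s) (hσπ : Refines σ π)
    (p : ∀ C ∈ π.parts, Finpartition (σ.parts.filter (fun B => B ⊆ C)))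
    (hστ : Refines σ (toTau σ π hσπ p)) (hτπ : Refines (toTau σ π hσπ p) π)
    {C : Finset S} (hC : C ∈ π.parts) :
    unglue hστ hτπ C hC = p C hC := by
  apply Finpartition.ext
  rw [unglue_parts, toTau_filter σ π hσπ p hC, Finset.image_image]
  ext P
  rw [Finset.mem_image]
  constructor
  · rintro ⟨P', hP', rfl⟩
    have := sigma_filter_sup σ π hC (p C hC) hP'
    simp only [Function.comp] at *
    rw [this]
    exact hP'
  · intro hP
    exact ⟨P, hP, by simp only [Function.comp]; exact sigma_filter_sup σ π hC (p C hC) hP⟩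

lemma toTau_weight {R : Type*} [CommRing R] (q1 q2 q3 : R) (σ π : Finpartition s)
    (hσπ : Refines σ π) (p : ∀ C ∈ π.parts, Finpartition (σ.parts.filter (fun B => B ⊆ C))) :
    (∏ D ∈ (toTau σ π hσπ p).parts, phi q1 q2 (σ.parts.filter (fun B => B ⊆ D)).card)
      * (∏ C ∈ π.parts, phi q2 q3 ((toTau σ π hσπ p).parts.filter (fun D => D ⊆ C)).card)
    = ∏ x ∈ π.parts.attach,
        ((∏ P ∈ (p x.1 x.2).parts, phi q1 q2 P.card) * phi q2 q3 (p x.1 x.2).parts.card) := by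
  have hdisj : Set.PairwiseDisjoint (↑π.parts.attach)
      (fun x : {x // x ∈ π.parts} => (p x.1 x.2).parts.image fun P => P.sup id) := by
    intro x hx y hy hxy
    rw [Function.onFun]
    rw [Finset.disjoint_left]
    intro D hD hD'
    obtain ⟨P, hP, rfl⟩ := Finset.mem_image.1 hD
    obtain ⟨P', hP', hPP'⟩ := Finset.mem_image.1 hD'
    have hxy1 : x.1 ≠ y.1 := fun h => hxy (Subtype.ext h)
    obtain ⟨z, hz⟩ := sup_mem_nonempty σ π x.2 (p x.1 x.2) hP
    have hz1 : z ∈ x.1 := sup_subset_of_mem σ π x.2 (p x.1 x.2) hP hz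
    have hz2 : z ∈ y.1 := sup_subset_of_mem σ π y.2 (p y.1 y.2) hP' (hPP' ▸ hz)
    exact (Finset.disjoint_left.1 (π.disjoint x.2 y.2 hxy1)) hz1 hz2
  have h1 : (∏ D ∈ (toTau σ π hσπ p).parts, phi q1 q2 (σ.parts.filter (fun B => B ⊆ D)).card)
      = ∏ x ∈ π.parts.attach, ∏ P ∈ (p x.1 x.2).parts, phi q1 q2 P.card := by
    rw [toTau_parts, Finset.prod_biUnion hdisj]
    apply Finset.prod_congr rfl
    intro x _
    rw [Finset.prod_image (fun P hP Q hQ h =>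
      sup_injOn (Finset.filter_subset _ _) (p x.1 x.2) hP hQ h)]
    apply Finset.prod_congr rfl
    intro P hP
    rw [sigma_filter_sup σ π x.2 (p x.1 x.2) hP]
  have h2 : (∏ C ∈ π.parts, phi q2 q3 ((toTau σ π hσπ p).parts.filter (fun D => D ⊆ C)).card)
      = ∏ x ∈ π.parts.attach, phi q2 q3 (p x.1 x.2).parts.card := by
    rw [← Finset.prod_attach π.parts
      (fun C => phi q2 q3 ((toTau σ π hσπ p).parts.filter (fun D => D ⊆ C)).card)]
    apply Finset.prod_congr rfl
    intro x _
    rw [toTau_filter σ π hσπ p x.2, Finset.card_image_of_injOn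
      (sup_injOn (Finset.filter_subset _ _) (p x.1 x.2))]
  rw [h1, h2, ← Finset.prod_mul_distrib]

end StepB

theorem stmt4 {S : Type*} [Fintype S] [DecidableEq S] {R : Type*} [CommRing R]
    (q1 q2 q3 : R) (σ π : Finpartition (Finset.univ : Finset S)) :
    ∑ τ : Finpartition (Finset.univ : Finset S), muQ q1 q2 σ τ * muQ q2 q3 τ π
      = muQ q1 q3 σ π := by
  by_cases hσπ : Refines σ π
  · rw [show muQ q1 q3 σ π
        = ∏ C ∈ π.parts, phi q1 q3 (σ.parts.filter (fun B => B ⊆ C)).card from by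
      rw [muQ, if_pos hσπ]; rfl]
    have hL1 : ∀ τ : Finpartition (Finset.univ : Finset S), muQ q1 q2 σ τ * muQ q2 q3 τ π
        = if Refines σ τ ∧ Refines τ π then
            (∏ D ∈ τ.parts, phi q1 q2 (σ.parts.filter (fun B => B ⊆ D)).card)
            * (∏ C ∈ π.parts, phi q2 q3 (τ.parts.filter (fun D => D ⊆ C)).card)
          else 0 := by
      intro τ
      rw [muQ, muQ]
      by_cases h1 : Refines σ τ <;> by_cases h2 : Refines τ π
      · rw [if_pos h1, if_pos h2, if_pos ⟨h1, h2⟩]; rfl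
      · rw [if_pos h1, if_neg h2,
          if_neg (show ¬(Refines σ τ ∧ Refines τ π) from fun h => h2 h.2), mul_zero]
      · rw [if_neg h1,
          if_neg (show ¬(Refines σ τ ∧ Refines τ π) from fun h => h1 h.1), zero_mul]
      · rw [if_neg h1,
          if_neg (show ¬(Refines σ τ ∧ Refines τ π) from fun h => h1 h.1), zero_mul]
    rw [Finset.sum_congr rfl (fun τ _ => hL1 τ), ← Finset.sum_filter]
    have hkey : ∀ C ∈ π.parts, phi q1 q3 (σ.parts.filter (fun B => B ⊆ C)).card
        = ∑ ρ ∈ (Finset.univ : Finset (Finpartition (σ.parts.filter (fun B => B ⊆ C)))),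
            (∏ P ∈ ρ.parts, phi q1 q2 P.card) * phi q2 q3 ρ.parts.card :=
      fun C _ => (keyA q1 q2 q3 _).symm
    rw [Finset.prod_congr rfl hkey, Finset.prod_sum]
    refine Finset.sum_bij'
      (i := fun τ hτ => fun C hC => unglue (Finset.mem_filter.1 hτ).2.1
        (Finset.mem_filter.1 hτ).2.2 C hC)
      (j := fun p _ => toTau σ π hσπ p) ?_ ?_ ?_ ?_ ?_
    · intro τ hτ
      rw [Finset.mem_pi]
      intro C hC
      exact Finset.mem_univ _
    · intro p _
      exact Finset.mem_filter.2 ⟨Finset.mem_univ _,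
        toTau_refines_left σ π hσπ p, toTau_refines_right σ π hσπ p⟩
    · intro τ hτ
      exact toTau_unglue σ τ π hσπ (Finset.mem_filter.1 hτ).2.1 (Finset.mem_filter.1 hτ).2.2
    · intro p hp
      funext C hC
      exact unglue_toTau σ π hσπ p _ _ hC
    · intro τ hτ
      have h1 := (Finset.mem_filter.1 hτ).2.1
      have h2 := (Finset.mem_filter.1 hτ).2.2
      conv_lhs => rw [← toTau_unglue σ τ π hσπ h1 h2]
      exact toTau_weight q1 q2 q3 σ π hσπ (fun C hC => unglue h1 h2 C hC)
  · rw [show muQ q1 q3 σ π = 0 from by rw [muQ, if_neg hσπ]]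
    apply Finset.sum_eq_zero
    intro τ _
    by_cases h1 : Refines σ τ
    · by_cases h2 : Refines τ π
      · refine absurd (fun B hB => ?_) hσπ
        obtain ⟨D, hD, hBD⟩ := h1 B hB
        obtain ⟨C, hC, hDC⟩ := h2 D hD
        exact ⟨C, hC, hBD.trans hDC⟩
      · rw [show muQ q2 q3 τ π = 0 from by rw [muQ, if_neg h2], mul_zero]
    · rw [show muQ q1 q2 σ τ = 0 from by rw [muQ, if_neg h1], zero_mul]
end

section
/- Fortuin–Kasteleyn representation: Let G = (V,E) be a finite simple graph, let R be a commutative ring, let v : E → R be edge weights, and let q ≥ 1 be an integer. Then Σ_{A ⊆ E} (q : R)^{k(A)} ∏_{e ∈ A} v_e = Σ_{σ : V → {1,…,q}} ∏_{e = {i,j} ∈ E} (1 + v_e · δ(σ(i), σ(j))), where k(A) denotes the number of connected components of the spanning subgraph (V, A) and δ is the Kronecker delta (δ(a,b) = 1 if a = b, else 0). -/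
open Finset SimpleGraph

/-- The number of connected components of the graph on the vertex set `W`
with edge set `A` (isolated vertices count as components). -/
noncomputable def kcomp {V : Type*} [Fintype V] [DecidableEq V]
    (W : Finset V) (A : Finset (Sym2 V)) : ℕ :=
  Nat.card ((SimpleGraph.fromEdgeSet (A : Set (Sym2 V))).induce (W : Set V)).ConnectedComponent

lemma kcomp_univ {V : Type*} [Fintype V] [DecidableEq V] (A : Finset (Sym2 V)) :
    kcomp (Finset.univ : Finset V) A
      = Nat.card (SimpleGraph.fromEdgeSet (A : Set (Sym2 V))).ConnectedComponent := by
  unfold kcomp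
  rw [Finset.coe_univ]
  exact Nat.card_congr
    (SimpleGraph.induceUnivIso (SimpleGraph.fromEdgeSet (A : Set (Sym2 V)))).connectedComponentEquiv

lemma card_consts {V : Type*} [Fintype V] [DecidableEq V] (A : Finset (Sym2 V)) (q : ℕ) :
    Nat.card {σ : V → Fin q // ∀ e ∈ A, (e.map σ).IsDiag}
      = q ^ kcomp (Finset.univ : Finset V) A := by
  set H := SimpleGraph.fromEdgeSet (A : Set (Sym2 V)) with hH
  have key : {σ : V → Fin q // ∀ e ∈ A, (e.map σ).IsDiag} ≃ (H.ConnectedComponent → Fin q) := by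
    refine
      { toFun := fun σ => SimpleGraph.ConnectedComponent.lift σ.1 ?_
        invFun := fun g => ⟨fun x => g (H.connectedComponentMk x), ?_⟩
        left_inv := ?_, right_inv := ?_ }
    · intro a b p hp
      clear hp
      have hadj : ∀ x y, H.Adj x y → σ.1 x = σ.1 y := by
        intro x y hxy
        rw [hH, SimpleGraph.fromEdgeSet_adj] at hxy
        have := σ.2 s(x, y) hxy.1
        simpa [Sym2.map_pair_eq, Sym2.isDiag_iff_proj_eq] using this
      induction p with
      | nil => rfl
      | cons h _ ih => exact (hadj _ _ h).trans ih
    · intro e he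
      induction e with
      | h x y =>
        simp only [Sym2.map_pair_eq, Sym2.isDiag_iff_proj_eq]
        rcases eq_or_ne x y with h | h
        · rw [h]
        · have hadj : H.Adj x y := by
            rw [hH, SimpleGraph.fromEdgeSet_adj]; exact ⟨he, h⟩
          exact congrArg g (SimpleGraph.ConnectedComponent.sound hadj.reachable)
    · intro σ; ext x; rfl
    · intro g; ext c
      induction c using SimpleGraph.ConnectedComponent.ind with
      | _ x => rfl
  rw [Nat.card_congr key, Nat.card_fun, kcomp_univ, Nat.card_eq_fintype_card (α := Fin q),
    Fintype.card_fin]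

/-- Fortuin–Kasteleyn representation of the Potts model:
`Σ_{A ⊆ E} q^{k(A)} ∏_{e ∈ A} v_e
  = Σ_{σ : V → [q]} ∏_{e = ij ∈ E} (1 + v_e δ(σ(i),σ(j)))`. -/
theorem stmt5 {V : Type*} [Fintype V] [DecidableEq V] {R : Type*} [CommRing R]
    (G : SimpleGraph V) [DecidableRel G.Adj] (v : Sym2 V → R) (q : ℕ) (hq : 1 ≤ q) :
    ∑ A ∈ G.edgeFinset.powerset, (q : R) ^ kcomp (Finset.univ : Finset V) A * ∏ e ∈ A, v e
      = ∑ σ : V → Fin q, ∏ e ∈ G.edgeFinset,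
          (1 + v e * (if (e.map σ).IsDiag then 1 else 0)) := by
  classical
  have expand : ∀ σ : V → Fin q,
      ∏ e ∈ G.edgeFinset, (1 + v e * (if (e.map σ).IsDiag then 1 else 0))
        = ∑ A ∈ G.edgeFinset.powerset,
            (if ∀ e ∈ A, (e.map σ).IsDiag then 1 else 0) * ∏ e ∈ A, v e := by
    intro σ
    simp_rw [add_comm (1 : R)]
    rw [Finset.prod_add]
    refine Finset.sum_congr rfl fun A hA => ?_
    rw [Finset.prod_const_one, mul_one, Finset.prod_mul_distrib, Finset.prod_boole, mul_comm]
    congr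
  rw [Finset.sum_congr rfl fun σ _ => expand σ, Finset.sum_comm]
  refine Finset.sum_congr rfl fun A hA => ?_
  rw [← Finset.sum_mul]
  congr 1
  rw [Finset.sum_boole]
  have h := card_consts A q
  rw [Nat.card_eq_fintype_card, Fintype.card_subtype] at h
  rw [h]
  push_cast
  rfl
end

section
/- Let G = (V,E) be a finite simple graph with V nonempty, let R be a commutative ring, let v : E → R be edge weights, and let q1, q2 ∈ R. Then Ẑ_G(q2, v) = Σ_{π ∈ Π(V)} ( ∏_{j=1}^{|π|-1} (q2 - j·q1) ) · ∏_{B ∈ π} Ẑ_{G[B]}(q1, v), where the sum runs over all partitions π of V into nonempty blocks, |π| is the number of blocks of π, and G[B] is the induced subgraph of G on the block B. -/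
set_option linter.unusedSectionVars false
set_option linter.unusedVariables false
set_option maxHeartbeats 1000000


open Finset SimpleGraph

/-- The edges of `G` with both endpoints in `W`, i.e. the edges of the
induced subgraph `G[W]`. -/
def edgesWithin {V : Type*} [Fintype V] [DecidableEq V]
    (G : SimpleGraph V) [DecidableRel G.Adj] (W : Finset V) : Finset (Sym2 V) :=
  G.edgeFinset.filter (fun e => ∀ x ∈ e, x ∈ W)

/-- The multivariate Tutte polynomial of the induced subgraph `G[W]`:
`Z_{G[W]}(q,v) = Σ_{A ⊆ E(G[W])} q^{k(A)} ∏_{e ∈ A} v_e`. -/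
noncomputable def Zmv {V : Type*} [Fintype V] [DecidableEq V] {R : Type*} [CommRing R]
    (G : SimpleGraph V) [DecidableRel G.Adj] (W : Finset V) (q : R) (v : Sym2 V → R) : R :=
  ∑ A ∈ (edgesWithin G W).powerset, q ^ kcomp W A * ∏ e ∈ A, v e

/-- `Ẑ_{G[W]}(q,v) = Σ_{A ⊆ E(G[W])} q^{k(A)-1} ∏_{e ∈ A} v_e`. -/
noncomputable def ZhatMv {V : Type*} [Fintype V] [DecidableEq V] {R : Type*} [CommRing R]
    (G : SimpleGraph V) [DecidableRel G.Adj] (W : Finset V) (q : R) (v : Sym2 V → R) : R :=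
  ∑ A ∈ (edgesWithin G W).powerset, q ^ (kcomp W A - 1) * ∏ e ∈ A, v e

/-- The generating polynomial of connected spanning subgraphs of `G[W]`:
`C_{G[W]}(v) = Σ_{A ⊆ E(G[W]) : k(A)=1} ∏_{e ∈ A} v_e`. -/
noncomputable def Cmv {V : Type*} [Fintype V] [DecidableEq V] {R : Type*} [CommRing R]
    (G : SimpleGraph V) [DecidableRel G.Adj] (W : Finset V) (v : Sym2 V → R) : R :=
  ∑ A ∈ (edgesWithin G W).powerset.filter (fun A => kcomp W A = 1), ∏ e ∈ A, v e

section comps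
variable {V : Type*} [Fintype V] [DecidableEq V]

def erel (A : Finset (Sym2 V)) (a b : V) : Prop := s(a, b) ∈ A

def rtg (A : Finset (Sym2 V)) : V → V → Prop := Relation.ReflTransGen (erel A)

lemma erel_symm {A : Finset (Sym2 V)} {a b : V} (h : erel A a b) : erel A b a := by
  rwa [erel, Sym2.eq_swap]

lemma rtg_refl {A : Finset (Sym2 V)} {a : V} : rtg A a a := Relation.ReflTransGen.refl

lemma rtg_symm {A : Finset (Sym2 V)} {a b : V} (h : rtg A a b) : rtg A b a :=
  (@Relation.ReflTransGen.stdSymm _ (erel A) ⟨fun _ _ hab => erel_symm hab⟩).symm _ _ h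

lemma rtg_trans {A : Finset (Sym2 V)} {a b c : V} (h : rtg A a b) (h' : rtg A b c) :
    rtg A a c := Relation.ReflTransGen.trans h h'

lemma rtg_mono {A B : Finset (Sym2 V)} (hAB : A ⊆ B) {a b : V} (h : rtg A a b) :
    rtg B a b := Relation.ReflTransGen.mono (fun _ _ hab => hAB hab) _ _ h

open Classical in
noncomputable def comp (A : Finset (Sym2 V)) (W : Finset V) (x : V) : Finset V :=
  W.filter (fun y => rtg A x y)

lemma mem_comp {A : Finset (Sym2 V)} {W : Finset V} {x y : V} :
    y ∈ comp A W x ↔ y ∈ W ∧ rtg A x y := by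
  classical
  simp [comp]

lemma comp_subset {A : Finset (Sym2 V)} {W : Finset V} {x : V} : comp A W x ⊆ W :=
  fun y hy => (mem_comp.1 hy).1

variable {G : SimpleGraph V} [DecidableRel G.Adj] {W : Finset V} {A : Finset (Sym2 V)}

lemma mem_of_mem_edgesWithin {e : Sym2 V} (he : e ∈ edgesWithin G W) {y : V} (hy : y ∈ e) :
    y ∈ W := by
  rw [edgesWithin, Finset.mem_filter] at he
  exact he.2 y hy

lemma erel_mem_left (hA : A ⊆ edgesWithin G W) {a b : V} (h : erel A a b) : a ∈ W :=
  mem_of_mem_edgesWithin (hA h) (Sym2.mem_mk_left a b)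

lemma erel_mem_right (hA : A ⊆ edgesWithin G W) {a b : V} (h : erel A a b) : b ∈ W :=
  mem_of_mem_edgesWithin (hA h) (Sym2.mem_mk_right a b)

lemma erel_ne (hA : A ⊆ edgesWithin G W) {a b : V} (h : erel A a b) : a ≠ b := by
  have := hA h
  rw [edgesWithin, Finset.mem_filter, mem_edgeFinset, mem_edgeSet] at this
  exact this.1.ne

lemma rtg_mem (hA : A ⊆ edgesWithin G W) {a b : V} (ha : a ∈ W) (h : rtg A a b) : b ∈ W := by
  induction h with
  | refl => exact ha
  | tail _ hbc _ => exact erel_mem_right hA hbc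

/-- reachability in the induced graph matches `rtg`. -/
lemma reachable_of_rtg (hA : A ⊆ edgesWithin G W) {a b : V} (ha : a ∈ W) (h : rtg A a b) :
    ∃ hb : b ∈ W,
      ((fromEdgeSet (A : Set (Sym2 V))).induce (W : Set V)).Reachable
        ⟨a, by exact_mod_cast ha⟩ ⟨b, by exact_mod_cast hb⟩ := by
  induction h with
  | refl => exact ⟨ha, Reachable.refl _⟩
  | @tail b c hab hbc ih =>
    obtain ⟨hb, hr⟩ := ih
    have hc : c ∈ W := erel_mem_right hA hbc
    refine ⟨hc, hr.trans (Adj.reachable ?_)⟩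
    simp only [comap_adj, Function.Embedding.coe_subtype, fromEdgeSet_adj]
    exact ⟨by exact_mod_cast hbc, erel_ne hA hbc⟩

lemma rtg_of_reachable (hA : A ⊆ edgesWithin G W) {a b : (W : Set V)}
    (h : ((fromEdgeSet (A : Set (Sym2 V))).induce (W : Set V)).Reachable a b) :
    rtg A a.1 b.1 := by
  rw [reachable_iff_reflTransGen] at h
  refine Relation.ReflTransGen.lift Subtype.val (fun p q hpq => ?_) _ _ h
  simp only [comap_adj, Function.Embedding.coe_subtype, fromEdgeSet_adj] at hpq
  exact_mod_cast hpq.1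

lemma comp_congr (hA : A ⊆ edgesWithin G W) {x y : V} (h : rtg A x y) :
    comp A W y = comp A W x := by
  ext z
  simp only [mem_comp]
  exact and_congr_right fun _ =>
    ⟨fun hz => rtg_trans h hz, fun hz => rtg_trans (rtg_symm h) hz⟩

lemma kcomp_eq (hA : A ⊆ edgesWithin G W) :
    kcomp W A = (W.image (comp A W)).card := by
  classical
  rw [kcomp, ← Nat.card_eq_finsetCard]
  apply Nat.card_eq_of_bijective
    (f := ConnectedComponent.lift
      (fun u => (⟨comp A W u.1, Finset.mem_image_of_mem _ (by exact_mod_cast u.2)⟩ :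
        {p // p ∈ W.image (comp A W)}))
      (fun u w p _ => by
        ext1
        exact (comp_congr hA (rtg_of_reachable hA ⟨p⟩)).symm))
  constructor
  · intro c d
    refine ConnectedComponent.ind₂ (fun u w huw => ?_) c d
    simp only [ConnectedComponent.lift_mk, Subtype.mk.injEq] at huw
    rw [ConnectedComponent.eq]
    have hu : u.1 ∈ comp A W u.1 := mem_comp.2 ⟨by exact_mod_cast u.2, rtg_refl⟩
    rw [huw] at hu
    obtain ⟨hw, hr⟩ := reachable_of_rtg hA (by exact_mod_cast w.2) (mem_comp.1 hu).2
    exact hr.symm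
  · rintro ⟨p, hp⟩
    obtain ⟨w, hw, rfl⟩ := Finset.mem_image.1 hp
    exact ⟨SimpleGraph.connectedComponentMk _ ⟨w, by exact_mod_cast hw⟩, rfl⟩

end comps

section comps2
variable {V : Type*} [Fintype V] [DecidableEq V]
variable {G : SimpleGraph V} [DecidableRel G.Adj] {W : Finset V} {A : Finset (Sym2 V)}

/-- edges of `A` lying within `B` -/
def ewB (A : Finset (Sym2 V)) (B : Finset V) : Finset (Sym2 V) :=
  A.filter (fun e => ∀ y ∈ e, y ∈ B)

lemma ewB_subset {B : Finset V} : ewB A B ⊆ A := Finset.filter_subset _ _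

lemma mem_ewB {B : Finset V} {e : Sym2 V} : e ∈ ewB A B ↔ e ∈ A ∧ ∀ y ∈ e, y ∈ B :=
  Finset.mem_filter

lemma ewB_subset_edgesWithin {B : Finset V} (hA : A ⊆ edgesWithin G W) :
    ewB A B ⊆ edgesWithin G B := by
  intro e he
  rw [mem_ewB] at he
  have := hA he.1
  rw [edgesWithin, Finset.mem_filter] at this ⊢
  exact ⟨this.1, he.2⟩

lemma edgesWithin_mono {B C : Finset V} (h : B ⊆ C) :
    edgesWithin G B ⊆ edgesWithin G C := by
  intro e he
  rw [edgesWithin, Finset.mem_filter] at he ⊢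
  exact ⟨he.1, fun y hy => h (he.2 y hy)⟩

lemma ewB_eq_self {B : Finset V} (hA : A ⊆ edgesWithin G B) : ewB A B = A := by
  apply Finset.filter_true_of_mem
  intro e he y hy
  exact mem_of_mem_edgesWithin (hA he) hy

lemma ewB_disjoint {B C : Finset V} (h : Disjoint B C) {A' : Finset (Sym2 V)} :
    Disjoint (ewB A B) (ewB A' C) := by
  rw [Finset.disjoint_left]
  intro e he he'
  rw [mem_ewB] at he he'
  induction e with
  | _ a b =>
    exact (Finset.disjoint_left.1 h (he.2 a (Sym2.mem_mk_left a b))) (he'.2 a (Sym2.mem_mk_left a b))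

/-- an rtg-path starting in the component of `x` stays within the edges of that component -/
lemma rtg_ewB_comp (hA : A ⊆ edgesWithin G W) {x z : V} (hx : x ∈ W) (h : rtg A x z) :
    rtg (ewB A (comp A W x)) x z := by
  induction h with
  | refl => exact rtg_refl
  | @tail b c hab hbc ih =>
    refine Relation.ReflTransGen.tail ih ?_
    have hbW : b ∈ W := erel_mem_left hA hbc
    have hcW : c ∈ W := erel_mem_right hA hbc
    have hbS : b ∈ comp A W x := mem_comp.2 ⟨hbW, hab⟩
    have hcS : c ∈ comp A W x := mem_comp.2 ⟨hcW, rtg_trans hab (Relation.ReflTransGen.single hbc)⟩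
    refine mem_ewB.2 ⟨hbc, fun y hy => ?_⟩
    rcases Sym2.mem_iff.1 hy with rfl | rfl
    · exact hbS
    · exact hcS

/-- an rtg-path starting outside the component of `x` stays outside it -/
lemma rtg_ewB_avoid (hA : A ⊆ edgesWithin G W) {x w z : V} (hw : w ∈ W)
    (hwS : w ∉ comp A W x) (h : rtg A w z) :
    z ∉ comp A W x ∧ rtg (ewB A (W \ comp A W x)) w z := by
  induction h with
  | refl => exact ⟨hwS, rtg_refl⟩
  | @tail b c hab hbc ih =>
    obtain ⟨hbS, ih'⟩ := ih
    have hbW : b ∈ W := erel_mem_left hA hbc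
    have hcW : c ∈ W := erel_mem_right hA hbc
    have hcS : c ∉ comp A W x := by
      intro hc
      exact hbS (mem_comp.2 ⟨hbW,
        rtg_trans (mem_comp.1 hc).2 (Relation.ReflTransGen.single (erel_symm hbc))⟩)
    refine ⟨hcS, Relation.ReflTransGen.tail ih' (mem_ewB.2 ⟨hbc, fun y hy => ?_⟩)⟩
    rcases Sym2.mem_iff.1 hy with rfl | rfl
    · exact Finset.mem_sdiff.2 ⟨hbW, hbS⟩
    · exact Finset.mem_sdiff.2 ⟨hcW, hcS⟩

/-- (F1) the edge set splits into the part inside the component of `x` and the rest -/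
lemma ewB_union_eq (hA : A ⊆ edgesWithin G W) {x : V} (hx : x ∈ W) :
    ewB A (comp A W x) ∪ ewB A (W \ comp A W x) = A := by
  apply Finset.Subset.antisymm (Finset.union_subset ewB_subset ewB_subset)
  intro e he
  induction e with
  | _ a b =>
    have haW : a ∈ W := erel_mem_left hA he
    have hbW : b ∈ W := erel_mem_right hA he
    rw [Finset.mem_union]
    by_cases haS : a ∈ comp A W x
    · left
      have hbS : b ∈ comp A W x := mem_comp.2 ⟨hbW,
        rtg_trans (mem_comp.1 haS).2 (Relation.ReflTransGen.single he)⟩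
      refine mem_ewB.2 ⟨he, fun y hy => ?_⟩
      rcases Sym2.mem_iff.1 hy with rfl | rfl
      · exact haS
      · exact hbS
    · right
      have hbS : b ∉ comp A W x := by
        intro hb
        exact haS (mem_comp.2 ⟨haW,
          rtg_trans (mem_comp.1 hb).2 (Relation.ReflTransGen.single (erel_symm he))⟩)
      refine mem_ewB.2 ⟨he, fun y hy => ?_⟩
      rcases Sym2.mem_iff.1 hy with rfl | rfl
      · exact Finset.mem_sdiff.2 ⟨haW, haS⟩
      · exact Finset.mem_sdiff.2 ⟨hbW, hbS⟩

/-- (F2) the component of `x` with its internal edges is connected -/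
lemma kcomp_comp_eq_one (hA : A ⊆ edgesWithin G W) {x : V} (hx : x ∈ W) :
    kcomp (comp A W x) (ewB A (comp A W x)) = 1 := by
  set S := comp A W x with hS
  have hsub : ewB A S ⊆ edgesWithin G S := ewB_subset_edgesWithin hA
  rw [kcomp_eq hsub]
  have himg : ∀ w ∈ S, comp (ewB A S) S w = S := by
    intro w hw
    apply Finset.Subset.antisymm comp_subset
    intro y hy
    refine mem_comp.2 ⟨hy, ?_⟩
    have h1 : rtg (ewB A S) x w := rtg_ewB_comp hA hx (mem_comp.1 hw).2
    have h2 : rtg (ewB A S) x y := rtg_ewB_comp hA hx (mem_comp.1 hy).2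
    exact rtg_trans (rtg_symm h1) h2
  have : S.image (comp (ewB A S) S) = {S} := by
    have hne : S.Nonempty := ⟨x, mem_comp.2 ⟨hx, rtg_refl⟩⟩
    rw [Finset.image_congr (fun w hw => himg w hw)]
    exact Finset.image_const hne S
  rw [this, Finset.card_singleton]

/-- (F4) removing the component of `x` decreases the component count by one. -/
lemma kcomp_split (hA : A ⊆ edgesWithin G W) {x : V} (hx : x ∈ W) :
    kcomp W A = 1 + kcomp (W \ comp A W x) (ewB A (W \ comp A W x)) := by
  set S := comp A W x with hS
  have hsub' : ewB A (W \ S) ⊆ edgesWithin G (W \ S) := ewB_subset_edgesWithin hA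
  rw [kcomp_eq hA, kcomp_eq hsub']
  have hSW : S ⊆ W := comp_subset
  have himage : W.image (comp A W) =
      insert S ((W \ S).image (comp (ewB A (W \ S)) (W \ S))) := by
    have hWsplit : W = S ∪ (W \ S) := (Finset.union_sdiff_of_subset hSW).symm
    rw [Finset.insert_eq]
    nth_rewrite 2 [hWsplit]
    rw [Finset.image_union]
    congr 1
    · have : ∀ w ∈ S, comp A W w = S := fun w hw => comp_congr hA (mem_comp.1 hw).2
      rw [Finset.image_congr (fun w hw => this w hw)]
      exact Finset.image_const ⟨x, mem_comp.2 ⟨hx, rtg_refl⟩⟩ S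
    · apply Finset.image_congr
      intro w hw
      have hwW : w ∈ W := (Finset.mem_sdiff.1 hw).1
      have hwS : w ∉ S := (Finset.mem_sdiff.1 hw).2
      ext y
      simp only [mem_comp, Finset.mem_sdiff]
      constructor
      · rintro ⟨hyW, hr⟩
        obtain ⟨hyS, hr'⟩ := rtg_ewB_avoid hA hwW hwS hr
        exact ⟨⟨hyW, hyS⟩, hr'⟩
      · rintro ⟨⟨hyW, _⟩, hr⟩
        exact ⟨hyW, rtg_mono ewB_subset hr⟩
  rw [himage]
  rw [Finset.card_insert_of_notMem, add_comm]
  intro hmem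
  obtain ⟨w, hw, hcomp⟩ := Finset.mem_image.1 hmem
  have : w ∈ comp (ewB A (W \ S)) (W \ S) w := mem_comp.2 ⟨hw, rtg_refl⟩
  rw [hcomp] at this
  exact (Finset.mem_sdiff.1 hw).2 this

/-- (G1) the component of `x` in a union of a connected piece on `S` and edges avoiding `S`. -/
lemma comp_union_eq {S : Finset V} {B A' : Finset (Sym2 V)}
    (hB : B ⊆ edgesWithin G S) (hone : kcomp S B = 1)
    (hA' : A' ⊆ edgesWithin G (W \ S)) {x : V} (hx : x ∈ S) (hSW : S ⊆ W) :
    comp (B ∪ A') W x = S := by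
  have hkey : ∀ y ∈ S, rtg B x y := by
    rw [kcomp_eq hB, Finset.card_eq_one] at hone
    obtain ⟨T, hT⟩ := hone
    have hTS : T ⊆ S := by
      have : T ∈ S.image (comp B S) := hT ▸ Finset.mem_singleton_self T
      obtain ⟨w, _, rfl⟩ := Finset.mem_image.1 this
      exact comp_subset
    have hmem2 : ∀ w ∈ S, w ∈ T := by
      intro w hw
      have h1 : comp B S w ∈ S.image (comp B S) := Finset.mem_image_of_mem _ hw
      rw [hT, Finset.mem_singleton] at h1
      exact h1 ▸ mem_comp.2 ⟨hw, rtg_refl⟩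
    intro y hy
    have hx' : comp B S x = T := by
      have := Finset.mem_image_of_mem (comp B S) hx
      rwa [hT, Finset.mem_singleton] at this
    have : y ∈ comp B S x := hx' ▸ hmem2 y hy
    exact (mem_comp.1 this).2
  have haux : ∀ z, rtg (B ∪ A') x z → z ∈ S := by
    intro z hz
    induction hz with
    | refl => exact hx
    | @tail b c hab hbc ih =>
      rcases Finset.mem_union.1 hbc with h | h
      · exact mem_of_mem_edgesWithin (hB h) (Sym2.mem_mk_right b c)
      · exact absurd ih
          (fun hb => (Finset.mem_sdiff.1 (mem_of_mem_edgesWithin (hA' h) (Sym2.mem_mk_left b c))).2 hb)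
  apply Finset.Subset.antisymm
  · intro z hz
    exact haux z (mem_comp.1 hz).2
  · intro y hy
    exact mem_comp.2 ⟨hSW hy, rtg_mono Finset.subset_union_left (hkey y hy)⟩

/-- (G2a) -/
lemma ewB_union_left {S : Finset V} {B A' : Finset (Sym2 V)}
    (hB : B ⊆ edgesWithin G S) (hA' : A' ⊆ edgesWithin G (W \ S)) :
    ewB (B ∪ A') S = B := by
  unfold ewB
  rw [Finset.filter_union]
  have h1 : B.filter (fun e => ∀ y ∈ e, y ∈ S) = B :=
    Finset.filter_true_of_mem (fun e he y hy => mem_of_mem_edgesWithin (hB he) hy)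
  have h2 : A'.filter (fun e => ∀ y ∈ e, y ∈ S) = ∅ := by
    apply Finset.filter_false_of_mem
    intro e he hall
    induction e with
    | _ a b =>
      have := mem_of_mem_edgesWithin (hA' he) (Sym2.mem_mk_left a b)
      exact (Finset.mem_sdiff.1 this).2 (hall a (Sym2.mem_mk_left a b))
  rw [h1, h2, Finset.union_empty]

lemma ewB_union_right {S : Finset V} {B A' : Finset (Sym2 V)}
    (hB : B ⊆ edgesWithin G S) (hA' : A' ⊆ edgesWithin G (W \ S)) :
    ewB (B ∪ A') (W \ S) = A' := by
  unfold ewB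
  rw [Finset.filter_union]
  have h2 : A'.filter (fun e => ∀ y ∈ e, y ∈ W \ S) = A' :=
    Finset.filter_true_of_mem (fun e he y hy => mem_of_mem_edgesWithin (hA' he) hy)
  have h1 : B.filter (fun e => ∀ y ∈ e, y ∈ W \ S) = ∅ := by
    apply Finset.filter_false_of_mem
    intro e he hall
    induction e with
    | _ a b =>
      have := mem_of_mem_edgesWithin (hB he) (Sym2.mem_mk_left a b)
      exact (Finset.mem_sdiff.1 (hall a (Sym2.mem_mk_left a b))).2 this
  rw [h1, h2, Finset.empty_union]

end comps2

section graphrec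
variable {V : Type*} [Fintype V] [DecidableEq V] {R : Type*} [CommRing R]
variable (G : SimpleGraph V) [DecidableRel G.Adj] (v : Sym2 V → R)

lemma edgesWithin_empty : edgesWithin G (∅ : Finset V) = ∅ := by
  ext e
  simp only [edgesWithin, Finset.mem_filter, Finset.notMem_empty, iff_false, not_and]
  intro _ h
  induction e with
  | _ a b => simpa using h a (Sym2.mem_mk_left a b)

lemma kcomp_empty (A : Finset (Sym2 V)) : kcomp (∅ : Finset V) A = 0 := by
  have h1 : IsEmpty ((↑(∅ : Finset V)) : Set V) :=
    ⟨fun x => Finset.notMem_empty x.1 (Finset.mem_coe.1 x.2)⟩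
  have h2 : IsEmpty ((SimpleGraph.fromEdgeSet (A : Set (Sym2 V))).induce
      ((↑(∅ : Finset V)) : Set V)).ConnectedComponent :=
    ⟨fun c => by
      obtain ⟨w, _⟩ := c.exists_rep
      exact h1.false w⟩
  rw [kcomp]
  exact Nat.card_of_isEmpty

lemma Zmv_empty (q : R) : Zmv G (∅ : Finset V) q v = 1 := by
  rw [Zmv, edgesWithin_empty, Finset.powerset_empty, Finset.sum_singleton, kcomp_empty,
    pow_zero, Finset.prod_empty, mul_one]

lemma graph_rec {W : Finset V} {x : V} (hx : x ∈ W) (φ : ℕ → R) :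
    ∑ A ∈ (edgesWithin G W).powerset, φ (kcomp W A) * ∏ e ∈ A, v e
      = ∑ S ∈ W.powerset.filter (fun S => x ∈ S), Cmv G S v *
          ∑ A' ∈ (edgesWithin G (W \ S)).powerset,
            φ (1 + kcomp (W \ S) A') * ∏ e ∈ A', v e := by
  classical
  rw [← Finset.sum_fiberwise_of_maps_to (g := fun A => comp A W x)
      (t := W.powerset.filter (fun S => x ∈ S))
      (fun A hA => Finset.mem_filter.2 ⟨Finset.mem_powerset.2 comp_subset,
        mem_comp.2 ⟨hx, rtg_refl⟩⟩)]
  refine Finset.sum_congr rfl fun S hS => ?_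
  rw [Finset.mem_filter, Finset.mem_powerset] at hS
  obtain ⟨hSW, hxS⟩ := hS
  rw [Cmv, Finset.sum_mul_sum, ← Finset.sum_product']
  apply Finset.sum_bij' (i := fun A _ => (ewB A S, ewB A (W \ S)))
    (j := fun p _ => p.1 ∪ p.2)
  · -- i maps to
    intro A hA
    rw [Finset.mem_filter, Finset.mem_powerset] at hA
    obtain ⟨hAE, hcomp⟩ := hA
    rw [Finset.mem_product, Finset.mem_filter, Finset.mem_powerset, Finset.mem_powerset]
    refine ⟨⟨ewB_subset_edgesWithin hAE, ?_⟩, ewB_subset_edgesWithin hAE⟩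
    have := kcomp_comp_eq_one hAE hx
    rwa [hcomp] at this
  · -- j maps to
    intro p hp
    rw [Finset.mem_product, Finset.mem_filter, Finset.mem_powerset, Finset.mem_powerset] at hp
    obtain ⟨⟨hB, hone⟩, hA'⟩ := hp
    rw [Finset.mem_filter, Finset.mem_powerset]
    exact ⟨Finset.union_subset (hB.trans (edgesWithin_mono hSW))
        (hA'.trans (edgesWithin_mono Finset.sdiff_subset)),
      comp_union_eq hB hone hA' hxS hSW⟩
  · -- left_inv
    intro A hA
    rw [Finset.mem_filter, Finset.mem_powerset] at hA
    obtain ⟨hAE, hcomp⟩ := hA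
    have := ewB_union_eq hAE hx
    rwa [hcomp] at this
  · -- right_inv
    intro p hp
    rw [Finset.mem_product, Finset.mem_filter, Finset.mem_powerset, Finset.mem_powerset] at hp
    obtain ⟨⟨hB, _⟩, hA'⟩ := hp
    exact Prod.ext (ewB_union_left hB hA') (ewB_union_right hB hA')
  · -- values
    intro A hA
    rw [Finset.mem_filter, Finset.mem_powerset] at hA
    obtain ⟨hAE, hcomp⟩ := hA
    have hsplit : kcomp W A = 1 + kcomp (W \ S) (ewB A (W \ S)) := by
      have := kcomp_split hAE hx
      rwa [hcomp] at this
    have hunion : ewB A S ∪ ewB A (W \ S) = A := by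
      have := ewB_union_eq hAE hx
      rwa [hcomp] at this
    have hdisj : Disjoint (ewB A S) (ewB A (W \ S)) :=
      ewB_disjoint Finset.disjoint_sdiff
    have hprod : ∏ e ∈ A, v e = (∏ e ∈ ewB A S, v e) * ∏ e ∈ ewB A (W \ S), v e := by
      conv_lhs => rw [← hunion]
      exact Finset.prod_union hdisj
    rw [hsplit, hprod]
    ring

lemma Zmv_rec {W : Finset V} {x : V} (hx : x ∈ W) (q : R) :
    Zmv G W q v = ∑ S ∈ W.powerset.filter (fun S => x ∈ S),
      q * Cmv G S v * Zmv G (W \ S) q v := by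
  rw [Zmv, graph_rec G v hx (fun k => q ^ k)]
  refine Finset.sum_congr rfl fun S _ => ?_
  rw [Zmv, Finset.mul_sum, Finset.mul_sum]
  refine Finset.sum_congr rfl fun A' _ => ?_
  simp only [pow_add, pow_one]
  ring

lemma ZhatMv_rec {W : Finset V} {x : V} (hx : x ∈ W) (q : R) :
    ZhatMv G W q v = ∑ S ∈ W.powerset.filter (fun S => x ∈ S),
      Cmv G S v * Zmv G (W \ S) q v := by
  rw [ZhatMv, graph_rec G v hx (fun k => q ^ (k - 1))]
  refine Finset.sum_congr rfl fun S _ => ?_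
  rw [Zmv, Finset.mul_sum, Finset.mul_sum]
  refine Finset.sum_congr rfl fun A' _ => ?_
  simp only [Nat.add_sub_cancel_left]

end graphrec

section combinat
variable {V : Type*} [Fintype V] [DecidableEq V] {R : Type*} [CommRing R]

lemma sdiff_helper {S U M : Finset V} (hSU : S ⊆ U) :
    M \ U = (M \ S) \ (U \ S) := by
  ext a
  simp only [Finset.mem_sdiff]
  constructor
  · rintro ⟨h1, h2⟩
    exact ⟨⟨h1, fun hs => h2 (hSU hs)⟩, fun h => h2 h.1⟩
  · rintro ⟨⟨h1, h2⟩, h3⟩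
    exact ⟨h1, fun hu => h3 ⟨hu, h2⟩⟩

lemma pair_reindex (x : V) (M : Finset V) (F : Finset V → Finset V → R) :
    ∑ U ∈ M.powerset.filter (fun U => x ∈ U),
        ∑ S ∈ U.powerset.filter (fun S => x ∈ S), F S (U \ S)
      = ∑ S ∈ M.powerset.filter (fun S => x ∈ S), ∑ T ∈ (M \ S).powerset, F S T := by
  rw [Finset.sum_sigma', Finset.sum_sigma']
  apply Finset.sum_bij' (i := fun p _ => (⟨p.2, p.1 \ p.2⟩ : Σ _ : Finset V, Finset V))
    (j := fun p _ => (⟨p.1 ∪ p.2, p.1⟩ : Σ _ : Finset V, Finset V))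
  · intro p hp
    rw [Finset.mem_sigma, Finset.mem_filter, Finset.mem_powerset,
      Finset.mem_filter, Finset.mem_powerset] at hp
    obtain ⟨⟨hUM, hxU⟩, hSU, hxS⟩ := hp
    rw [Finset.mem_sigma, Finset.mem_filter, Finset.mem_powerset, Finset.mem_powerset]
    exact ⟨⟨hSU.trans hUM, hxS⟩, Finset.sdiff_subset_sdiff hUM Finset.Subset.rfl⟩
  · intro p hp
    rw [Finset.mem_sigma, Finset.mem_filter, Finset.mem_powerset, Finset.mem_powerset] at hp
    obtain ⟨⟨hSM, hxS⟩, hT⟩ := hp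
    rw [Finset.mem_sigma, Finset.mem_filter, Finset.mem_powerset,
      Finset.mem_filter, Finset.mem_powerset]
    exact ⟨⟨Finset.union_subset hSM (hT.trans Finset.sdiff_subset), Finset.mem_union_left _ hxS⟩,
      Finset.subset_union_left, hxS⟩
  · intro p hp
    rw [Finset.mem_sigma, Finset.mem_filter, Finset.mem_powerset,
      Finset.mem_filter, Finset.mem_powerset] at hp
    obtain ⟨⟨hUM, hxU⟩, hSU, hxS⟩ := hp
    exact Sigma.ext (Finset.union_sdiff_of_subset hSU) (heq_of_eq rfl)
  · intro p hp
    rw [Finset.mem_sigma, Finset.mem_filter, Finset.mem_powerset, Finset.mem_powerset] at hp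
    obtain ⟨⟨hSM, hxS⟩, hT⟩ := hp
    have hd : Disjoint p.1 p.2 := Finset.disjoint_of_subset_right hT Finset.disjoint_sdiff
    exact Sigma.ext rfl (heq_of_eq (Finset.union_sdiff_cancel_left hd))
  · intro p hp
    rfl

lemma compl0 (M : Finset V) (f : Finset V → R) :
    ∑ U ∈ M.powerset, f U = ∑ U ∈ M.powerset, f (M \ U) := by
  apply Finset.sum_bij' (i := fun U _ => M \ U) (j := fun U _ => M \ U)
  · intro U hU
    exact Finset.mem_powerset.2 Finset.sdiff_subset
  · intro U hU
    exact Finset.mem_powerset.2 Finset.sdiff_subset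
  · intro U hU
    exact Finset.sdiff_sdiff_eq_self (Finset.mem_powerset.1 hU)
  · intro U hU
    exact Finset.sdiff_sdiff_eq_self (Finset.mem_powerset.1 hU)
  · intro U hU
    rw [Finset.sdiff_sdiff_eq_self (Finset.mem_powerset.1 hU)]

lemma compl1 {x : V} {M : Finset V} (hx : x ∈ M) (f : Finset V → R) :
    ∑ U ∈ M.powerset.filter (fun U => x ∉ U), f U
      = ∑ U ∈ M.powerset.filter (fun U => x ∈ U), f (M \ U) := by
  apply Finset.sum_bij' (i := fun U _ => M \ U) (j := fun U _ => M \ U)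
  · intro U hU
    rw [Finset.mem_filter, Finset.mem_powerset] at hU
    exact Finset.mem_filter.2 ⟨Finset.mem_powerset.2 Finset.sdiff_subset,
      Finset.mem_sdiff.2 ⟨hx, hU.2⟩⟩
  · intro U hU
    rw [Finset.mem_filter, Finset.mem_powerset] at hU
    exact Finset.mem_filter.2 ⟨Finset.mem_powerset.2 Finset.sdiff_subset,
      fun h => (Finset.mem_sdiff.1 h).2 hU.2⟩
  · intro U hU
    rw [Finset.mem_filter, Finset.mem_powerset] at hU
    exact Finset.sdiff_sdiff_eq_self hU.1
  · intro U hU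
    rw [Finset.mem_filter, Finset.mem_powerset] at hU
    exact Finset.sdiff_sdiff_eq_self hU.1
  · intro U hU
    rw [Finset.mem_filter, Finset.mem_powerset] at hU
    rw [Finset.sdiff_sdiff_eq_self hU.1]

variable (G : SimpleGraph V) [DecidableRel G.Adj] (v : Sym2 V → R)

lemma conv : ∀ (M : Finset V) (a b : R),
    ∑ U ∈ M.powerset, Zmv G U a v * Zmv G (M \ U) b v = Zmv G M (a + b) v := by
  intro M
  induction M using Finset.strongInduction with
  | _ M ih =>
    intro a b
    rcases M.eq_empty_or_nonempty with rfl | ⟨x, hx⟩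
    · rw [Finset.powerset_empty, Finset.sum_singleton, Finset.sdiff_empty,
        Zmv_empty, Zmv_empty, Zmv_empty, mul_one]
    · have hsplit := Finset.sum_filter_add_sum_filter_not M.powerset (fun U => x ∈ U)
        (fun U => Zmv G U a v * Zmv G (M \ U) b v)
      rw [← hsplit]
      have part1 : ∑ U ∈ M.powerset.filter (fun U => x ∈ U), Zmv G U a v * Zmv G (M \ U) b v
          = ∑ S ∈ M.powerset.filter (fun S => x ∈ S),
              a * Cmv G S v * Zmv G (M \ S) (a + b) v := by
        have e1 : ∑ U ∈ M.powerset.filter (fun U => x ∈ U), Zmv G U a v * Zmv G (M \ U) b v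
            = ∑ U ∈ M.powerset.filter (fun U => x ∈ U),
                ∑ S ∈ U.powerset.filter (fun S => x ∈ S),
                  (a * Cmv G S v * Zmv G (U \ S) a v * Zmv G ((M \ S) \ (U \ S)) b v) := by
          refine Finset.sum_congr rfl fun U hU => ?_
          rw [Finset.mem_filter, Finset.mem_powerset] at hU
          rw [Zmv_rec G v hU.2 a, Finset.sum_mul]
          refine Finset.sum_congr rfl fun S hS => ?_
          rw [Finset.mem_filter, Finset.mem_powerset] at hS
          rw [← sdiff_helper hS.1]
        rw [e1, pair_reindex x M
          (fun S T => a * Cmv G S v * Zmv G T a v * Zmv G ((M \ S) \ T) b v)]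
        refine Finset.sum_congr rfl fun S hS => ?_
        rw [Finset.mem_filter, Finset.mem_powerset] at hS
        have hMS : M \ S ⊂ M := Finset.sdiff_ssubset hS.1 ⟨x, hS.2⟩
        rw [← ih (M \ S) hMS a b, Finset.mul_sum]
        refine Finset.sum_congr rfl fun T _ => ?_
        ring
      have part2 : ∑ U ∈ M.powerset.filter (fun U => x ∉ U), Zmv G U a v * Zmv G (M \ U) b v
          = ∑ S ∈ M.powerset.filter (fun S => x ∈ S),
              b * Cmv G S v * Zmv G (M \ S) (a + b) v := by
        rw [compl1 hx (fun U => Zmv G U a v * Zmv G (M \ U) b v)]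
        have e1 : ∑ U ∈ M.powerset.filter (fun U => x ∈ U),
              Zmv G (M \ U) a v * Zmv G (M \ (M \ U)) b v
            = ∑ U ∈ M.powerset.filter (fun U => x ∈ U),
                ∑ S ∈ U.powerset.filter (fun S => x ∈ S),
                  (b * Cmv G S v * Zmv G ((M \ S) \ (U \ S)) a v * Zmv G (U \ S) b v) := by
          refine Finset.sum_congr rfl fun U hU => ?_
          rw [Finset.mem_filter, Finset.mem_powerset] at hU
          rw [Finset.sdiff_sdiff_eq_self hU.1, Zmv_rec G v hU.2 b, Finset.mul_sum]
          refine Finset.sum_congr rfl fun S hS => ?_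
          rw [Finset.mem_filter, Finset.mem_powerset] at hS
          rw [← sdiff_helper hS.1]
          ring
        rw [e1, pair_reindex x M
          (fun S T => b * Cmv G S v * Zmv G ((M \ S) \ T) a v * Zmv G T b v)]
        refine Finset.sum_congr rfl fun S hS => ?_
        rw [Finset.mem_filter, Finset.mem_powerset] at hS
        have hMS : M \ S ⊂ M := Finset.sdiff_ssubset hS.1 ⟨x, hS.2⟩
        have e2 : ∑ T ∈ (M \ S).powerset,
              b * Cmv G S v * Zmv G ((M \ S) \ T) a v * Zmv G T b v
            = b * Cmv G S v * ∑ T ∈ (M \ S).powerset,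
                Zmv G T a v * Zmv G ((M \ S) \ T) b v := by
          rw [compl0 (M \ S)
            (fun T => b * Cmv G S v * Zmv G ((M \ S) \ T) a v * Zmv G T b v), Finset.mul_sum]
          refine Finset.sum_congr rfl fun T hT => ?_
          rw [Finset.sdiff_sdiff_eq_self (Finset.mem_powerset.1 hT)]
          ring
        rw [e2, ih (M \ S) hMS a b]
      rw [part1, part2, ← Finset.sum_add_distrib, Zmv_rec G v hx (a + b)]
      refine Finset.sum_congr rfl fun S _ => ?_
      ring

end combinat

section partitions
variable {V : Type*} [Fintype V] [DecidableEq V] {R : Type*} [CommRing R]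

lemma avoid_parts_of_mem {W S : Finset V} (π : Finpartition W) (hS : S ∈ π.parts) :
    (π.avoid S).parts = π.parts.erase S := by
  ext c
  rw [Finpartition.mem_avoid, Finset.mem_erase]
  constructor
  · rintro ⟨d, hd, hdS, rfl⟩
    have hne : d ≠ S := by rintro rfl; exact hdS le_rfl
    have hdisj : Disjoint d S := π.disjoint hd hS hne
    rw [Finset.sdiff_eq_self_iff_disjoint.2 hdisj]
    exact ⟨hne, hd⟩
  · rintro ⟨hne, hc⟩
    have hdisj : Disjoint c S := π.disjoint hc hS hne
    refine ⟨c, hc, ?_, Finset.sdiff_eq_self_iff_disjoint.2 hdisj⟩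
    intro hle
    exact π.ne_bot hc (hdisj.eq_bot_of_le hle)

lemma part_rec {W : Finset V} {x : V} (hx : x ∈ W) (F : ℕ → R) (g : Finset V → R) :
    ∑ π : Finpartition W, F π.parts.card * ∏ B ∈ π.parts, g B
      = ∑ S ∈ W.powerset.filter (fun S => x ∈ S),
          g S * ∑ π' : Finpartition (W \ S), F (π'.parts.card + 1) * ∏ B ∈ π'.parts, g B := by
  rw [← Finset.sum_fiberwise_of_maps_to (g := fun π : Finpartition W => π.part x)
      (t := W.powerset.filter (fun S => x ∈ S))
      (fun π _ => Finset.mem_filter.2 ⟨Finset.mem_powerset.2 (π.le (π.part_mem.2 hx)),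
        π.mem_part hx⟩)]
  refine Finset.sum_congr rfl fun S hS => ?_
  rw [Finset.mem_filter, Finset.mem_powerset] at hS
  obtain ⟨hSW, hxS⟩ := hS
  have hSne : S ≠ ⊥ := by
    rw [Finset.bot_eq_empty]
    exact Finset.Nonempty.ne_empty ⟨x, hxS⟩
  have hdisj : Disjoint (W \ S) S := Finset.sdiff_disjoint
  have hsup : (W \ S) ⊔ S = W := by
    rw [Finset.sup_eq_union]
    exact Finset.sdiff_union_of_subset hSW
  rw [Finset.mul_sum]
  refine Finset.sum_bij' (fun π _ => π.avoid S) (fun π' _ => π'.extend hSne hdisj hsup)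
    ?_ ?_ ?_ ?_ ?_
  case refine_1 =>
    intro π _
    exact Finset.mem_univ _
  case refine_2 =>
    intro π' _
    have hmem : S ∈ (π'.extend hSne hdisj hsup).parts := by
      rw [Finpartition.extend_parts]
      exact Finset.mem_insert_self _ _
    exact Finset.mem_filter.2 ⟨Finset.mem_univ _, Finpartition.part_eq_of_mem _ hmem hxS⟩
  case refine_3 =>
    intro π hπ
    rw [Finset.mem_filter] at hπ
    have hSp : S ∈ π.parts := hπ.2 ▸ π.part_mem.2 hx
    apply Finpartition.ext
    rw [Finpartition.extend_parts, avoid_parts_of_mem π hSp, Finset.insert_erase hSp]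
  case refine_4 =>
    intro π' _
    have hSnotin : S ∉ π'.parts := by
      intro h
      exact (Finset.mem_sdiff.1 (π'.le h hxS)).2 hxS
    have hmem : S ∈ (π'.extend hSne hdisj hsup).parts := by
      rw [Finpartition.extend_parts]
      exact Finset.mem_insert_self _ _
    apply Finpartition.ext
    rw [avoid_parts_of_mem _ hmem, Finpartition.extend_parts, Finset.erase_insert hSnotin]
  case refine_5 =>
    intro π hπ
    rw [Finset.mem_filter] at hπ
    have hSp : S ∈ π.parts := hπ.2 ▸ π.part_mem.2 hx
    rw [avoid_parts_of_mem π hSp, Finset.card_erase_add_one hSp,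
      ← Finset.mul_prod_erase π.parts g hSp]
    ring

variable (G : SimpleGraph V) [DecidableRel G.Adj] (v : Sym2 V → R)

lemma chain {x : V} {M : Finset V} (q1 c : R) :
    ∑ S ∈ M.powerset.filter (fun S => x ∈ S), ZhatMv G S q1 v * Zmv G (M \ S) c v
      = ∑ T ∈ M.powerset.filter (fun T => x ∈ T), Cmv G T v * Zmv G (M \ T) (q1 + c) v := by
  have e1 : ∑ S ∈ M.powerset.filter (fun S => x ∈ S), ZhatMv G S q1 v * Zmv G (M \ S) c v
      = ∑ S ∈ M.powerset.filter (fun S => x ∈ S),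
          ∑ T ∈ S.powerset.filter (fun T => x ∈ T),
            (Cmv G T v * Zmv G (S \ T) q1 v * Zmv G ((M \ T) \ (S \ T)) c v) := by
    refine Finset.sum_congr rfl fun S hS => ?_
    rw [Finset.mem_filter, Finset.mem_powerset] at hS
    rw [ZhatMv_rec G v hS.2 q1, Finset.sum_mul]
    refine Finset.sum_congr rfl fun T hT => ?_
    rw [Finset.mem_filter, Finset.mem_powerset] at hT
    rw [← sdiff_helper hT.1]
  rw [e1, pair_reindex x M
    (fun T U => Cmv G T v * Zmv G U q1 v * Zmv G ((M \ T) \ U) c v)]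
  refine Finset.sum_congr rfl fun T hT => ?_
  rw [← conv G v (M \ T) q1 c, Finset.mul_sum]
  refine Finset.sum_congr rfl fun U _ => ?_
  ring

lemma L5 (q1 : R) : ∀ (M : Finset V) (q : R),
    ∑ π : Finpartition M, (∏ j ∈ Finset.range π.parts.card, (q - (j : R) * q1)) *
        ∏ B ∈ π.parts, ZhatMv G B q1 v = Zmv G M q v := by
  intro M
  induction M using Finset.strongInduction with
  | _ M ih =>
    intro q
    rcases M.eq_empty_or_nonempty with rfl | ⟨x, hx⟩
    · haveI : Unique (Finpartition (∅ : Finset V)) :=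
        inferInstanceAs (Unique (Finpartition (⊥ : Finset V)))
      rw [Zmv_empty, Fintype.sum_unique]
      have hparts : (default : Finpartition (∅ : Finset V)).parts = ∅ := by
        rw [Finset.eq_empty_iff_forall_notMem]
        intro B hB
        obtain ⟨y, hy⟩ := (default : Finpartition (∅ : Finset V)).nonempty_of_mem_parts hB
        exact Finset.notMem_empty y ((default : Finpartition (∅ : Finset V)).le hB hy)
      rw [hparts, Finset.card_empty, Finset.range_zero, Finset.prod_empty,
        Finset.prod_empty, mul_one]
    · rw [part_rec hx (fun m => ∏ j ∈ Finset.range m, (q - (j : R) * q1))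
        (fun B => ZhatMv G B q1 v)]
      have hF : ∀ m : ℕ, (∏ j ∈ Finset.range (m + 1), (q - (j : R) * q1))
          = q * ∏ j ∈ Finset.range m, ((q - q1) - (j : R) * q1) := by
        intro m
        rw [Finset.prod_range_succ']
        have h0 : (q - ((0 : ℕ) : R) * q1) = q := by push_cast; ring
        have h1 : ∀ i : ℕ, (q - ((i + 1 : ℕ) : R) * q1) = ((q - q1) - (i : R) * q1) := by
          intro i; push_cast; ring
        rw [h0, Finset.prod_congr rfl (fun i _ => h1 i)]
        ring
      have e1 : ∀ S ∈ M.powerset.filter (fun S => x ∈ S),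
          ZhatMv G S q1 v * ∑ π' : Finpartition (M \ S),
            (∏ j ∈ Finset.range (π'.parts.card + 1), (q - (j : R) * q1)) *
              ∏ B ∈ π'.parts, ZhatMv G B q1 v
          = q * (ZhatMv G S q1 v * Zmv G (M \ S) (q - q1) v) := by
        intro S hS
        rw [Finset.mem_filter, Finset.mem_powerset] at hS
        have hMS : M \ S ⊂ M := Finset.sdiff_ssubset hS.1 ⟨x, hS.2⟩
        have : ∑ π' : Finpartition (M \ S),
            (∏ j ∈ Finset.range (π'.parts.card + 1), (q - (j : R) * q1)) *
              ∏ B ∈ π'.parts, ZhatMv G B q1 v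
            = q * Zmv G (M \ S) (q - q1) v := by
          rw [← ih (M \ S) hMS (q - q1), Finset.mul_sum]
          refine Finset.sum_congr rfl fun π' _ => ?_
          rw [hF]
          ring
        rw [this]
        ring
      rw [Finset.sum_congr rfl e1, ← Finset.mul_sum, chain G v q1 (q - q1),
        Zmv_rec G v hx q, Finset.mul_sum]
      refine Finset.sum_congr rfl fun T _ => ?_
      have : q1 + (q - q1) = q := by ring
      rw [this]
      ring

end partitions

theorem stmt7 {V : Type*} [Fintype V] [DecidableEq V] [Nonempty V] {R : Type*} [CommRing R]
    (G : SimpleGraph V) [DecidableRel G.Adj] (v : Sym2 V → R) (q1 q2 : R) :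
    ZhatMv G Finset.univ q2 v
      = ∑ π : Finpartition (Finset.univ : Finset V),
          (∏ j ∈ Finset.Icc 1 (π.parts.card - 1), (q2 - (j : R) * q1)) *
            ∏ B ∈ π.parts, ZhatMv G B q1 v := by
  classical
  obtain ⟨x⟩ := ‹Nonempty V›
  have hx : x ∈ (Finset.univ : Finset V) := Finset.mem_univ x
  symm
  refine Eq.trans (part_rec hx (fun m => ∏ j ∈ Finset.Icc 1 (m - 1), (q2 - (j : R) * q1))
    (fun B => ZhatMv G B q1 v)) ?_
  have hF : ∀ m : ℕ, (∏ j ∈ Finset.Icc 1 ((m + 1) - 1), (q2 - (j : R) * q1))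
      = ∏ j ∈ Finset.range m, ((q2 - q1) - (j : R) * q1) := by
    intro m
    rw [Nat.add_sub_cancel, ← Finset.Ico_add_one_right_eq_Icc, Finset.prod_Ico_eq_prod_range]
    try simp only [Nat.add_sub_cancel]
    refine Finset.prod_congr rfl fun i _ => ?_
    push_cast
    ring
  have e1 : ∀ S ∈ (Finset.univ : Finset V).powerset.filter (fun S => x ∈ S),
      ZhatMv G S q1 v * ∑ π' : Finpartition ((Finset.univ : Finset V) \ S),
        (∏ j ∈ Finset.Icc 1 ((π'.parts.card + 1) - 1), (q2 - (j : R) * q1)) *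
          ∏ B ∈ π'.parts, ZhatMv G B q1 v
      = ZhatMv G S q1 v * Zmv G ((Finset.univ : Finset V) \ S) (q2 - q1) v := by
    intro S hS
    congr 1
    rw [← L5 G v q1 ((Finset.univ : Finset V) \ S) (q2 - q1)]
    refine Finset.sum_congr rfl fun π' _ => ?_
    rw [hF]
  refine Eq.trans (Finset.sum_congr rfl e1) ?_
  rw [chain G v q1 (q2 - q1), show q1 + (q2 - q1) = q2 by ring]
  exact (ZhatMv_rec G v hx q2).symm
end

section
/- Let G = (V,E) be a finite simple graph, let R be a commutative ring, let v : E → R be edge weights, and let q ∈ R. Then Z_G(q, v) = Σ_{π ∈ Π(V)} ( ∏_{j=0}^{|π|-1} (q - j) ) · ∏_{B ∈ π} ∏_{e ∈ E(G[B])} (1 + v_e), where the sum runs over all partitions π of V into nonempty blocks, |π| is the number of blocks, and E(G[B]) is the edge set of the induced subgraph of G on the block B. -/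
open Finset SimpleGraph

namespace TutteAux


variable {α : Type*} [Fintype α] [DecidableEq α]

/-- Restriction of a partition of `Option α` to `α`. -/
def resPart (π : Finpartition (Finset.univ : Finset (Option α))) :
    Finpartition (Finset.univ : Finset α) :=
  Finpartition.ofErase (π.parts.image Finset.eraseNone)
    (by
      rw [Finset.supIndep_iff_pairwiseDisjoint]
      rintro C₁ hC₁ C₂ hC₂ hne
      simp only [coe_image, Set.mem_image, mem_coe] at hC₁ hC₂
      obtain ⟨B₁, hB₁, rfl⟩ := hC₁
      obtain ⟨B₂, hB₂, rfl⟩ := hC₂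
      have hBne : B₁ ≠ B₂ := by rintro rfl; exact hne rfl
      have hd := π.disjoint hB₁ hB₂ hBne
      simp only [Function.onFun, id] at hd ⊢
      rw [Finset.disjoint_left] at hd ⊢
      intro a ha₁ ha₂
      rw [Finset.mem_eraseNone] at ha₁ ha₂
      exact hd ha₁ ha₂)
    (by
      ext a
      simp only [Finset.sup_image, Finset.mem_sup, Finset.mem_univ, iff_true,
        Function.comp, id]
      obtain ⟨B, hB, haB⟩ := π.exists_mem (Finset.mem_univ (some a))
      exact ⟨B, hB, Finset.mem_eraseNone.2 haB⟩)

lemma parts_resPart (π : Finpartition (Finset.univ : Finset (Option α))) :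
    (resPart π).parts = (π.parts.image Finset.eraseNone).erase ∅ := rfl

/-- Glue: extend a partition of `α` to `Option α` by putting `none` into the block `B`
(`B = ∅` means `none` becomes a singleton). -/
def glue (ρ : Finpartition (Finset.univ : Finset α)) (B : Finset α)
    (hB : B = ∅ ∨ B ∈ ρ.parts) : Finpartition (Finset.univ : Finset (Option α)) where
  parts := insert (Finset.insertNone B) ((ρ.parts.erase B).image (Finset.image some))
  supIndep := by
    rw [Finset.supIndep_iff_pairwiseDisjoint]
    rintro C₁ hC₁ C₂ hC₂ hne
    simp only [coe_insert, Set.mem_insert_iff, coe_image, Set.mem_image, mem_coe,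
      mem_erase] at hC₁ hC₂
    simp only [Function.onFun, id]
    rw [Finset.disjoint_left]
    rintro x hx₁ hx₂
    rcases hC₁ with rfl | ⟨D₁, ⟨hD₁ne, hD₁⟩, rfl⟩ <;>
      rcases hC₂ with rfl | ⟨D₂, ⟨hD₂ne, hD₂⟩, rfl⟩
    · exact hne rfl
    · -- x ∈ insertNone B and x ∈ D₂.image some
      obtain ⟨a, ha, rfl⟩ := Finset.mem_image.1 hx₂
      have haB : a ∈ B := by simpa using hx₁
      rcases hB with rfl | hBp
      · exact absurd haB (notMem_empty a)
      · exact (Finset.disjoint_left.1 (ρ.disjoint hBp hD₂ (Ne.symm hD₂ne)) haB) ha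
    · obtain ⟨a, ha, rfl⟩ := Finset.mem_image.1 hx₁
      have haB : a ∈ B := by simpa using hx₂
      rcases hB with rfl | hBp
      · exact absurd haB (notMem_empty a)
      · exact (Finset.disjoint_left.1 (ρ.disjoint hBp hD₁ (Ne.symm hD₁ne)) haB) ha
    · obtain ⟨a, ha₁, rfl⟩ := Finset.mem_image.1 hx₁
      have : a ∈ D₂ := by
        obtain ⟨b, hb, hba⟩ := Finset.mem_image.1 hx₂
        cases Option.some_injective _ hba; exact hb
      have hDne : D₁ ≠ D₂ := by
        rintro rfl; exact hne rfl
      exact (Finset.disjoint_left.1 (ρ.disjoint hD₁ hD₂ hDne) ha₁) this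
  sup_parts := by
    ext o
    simp only [Finset.sup_insert, Finset.mem_univ, iff_true, id]
    rcases o with _ | a
    · exact Finset.mem_union_left _ (by simp)
    · obtain ⟨C, hC, haC⟩ := ρ.exists_mem (Finset.mem_univ a)
      by_cases hCB : C = B
      · subst hCB
        exact Finset.mem_union_left _ (by simpa using haC)
      · refine Finset.mem_union_right _ ?_
        rw [Finset.sup_image, Finset.mem_sup]
        exact ⟨C, Finset.mem_erase.2 ⟨hCB, hC⟩, by simpa using Finset.mem_image_of_mem some haC⟩
  bot_notMem := by
    simp only [bot_eq_empty, mem_insert, mem_image, not_or]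
    constructor
    · intro h
      have : none ∈ Finset.insertNone B := by simp
      rw [← h] at this; exact notMem_empty _ this
    · rintro ⟨C, hC, hCe⟩
      have hCne := ρ.nonempty_of_mem_parts (Finset.mem_of_mem_erase hC)
      obtain ⟨a, ha⟩ := hCne
      have : some a ∈ C.image some := Finset.mem_image_of_mem _ ha
      rw [hCe] at this; exact notMem_empty _ this

lemma parts_glue (ρ : Finpartition (Finset.univ : Finset α)) (B : Finset α) (hB) :
    (glue ρ B hB).parts
      = insert (Finset.insertNone B) ((ρ.parts.erase B).image (Finset.image some)) := rfl

lemma card_parts_glue (ρ : Finpartition (Finset.univ : Finset α)) (B : Finset α) (hB) :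
    (glue ρ B hB).parts.card = (ρ.parts.erase B).card + 1 := by
  rw [parts_glue, Finset.card_insert_of_notMem, Finset.card_image_of_injective _
    (Finset.image_injective (Option.some_injective α))]
  intro h
  obtain ⟨C, _, hCe⟩ := Finset.mem_image.1 h
  have : none ∈ Finset.insertNone B := by simp
  rw [← hCe] at this
  obtain ⟨b, _, hb⟩ := Finset.mem_image.1 this
  exact Option.some_ne_none _ hb



lemma resPart_glue (ρ : Finpartition (Finset.univ : Finset α)) (B : Finset α) (hB) :
    resPart (glue ρ B hB) = ρ := by
  apply Finpartition.ext
  rw [parts_resPart, parts_glue, Finset.image_insert, Finset.eraseNone_insertNone,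
    Finset.image_image]
  have himg : (ρ.parts.erase B).image (⇑Finset.eraseNone ∘ Finset.image some)
      = ρ.parts.erase B := by
    have : ∀ C : Finset α, Finset.eraseNone (C.image some) = C := fun C =>
      Finset.eraseNone_image_some C
    simp only [Function.comp_def, this, Finset.image_id']
  rw [himg]
  rcases hB with rfl | hBp
  · rw [Finset.erase_insert (by simp), Finset.erase_eq_of_notMem (by simpa using ρ.bot_notMem)]
  · rw [Finset.insert_erase hBp, Finset.erase_eq_of_notMem (by simpa using ρ.bot_notMem)]

lemma part_none_glue (ρ : Finpartition (Finset.univ : Finset α)) (B : Finset α) (hB) :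
    (glue ρ B hB).part none = Finset.insertNone B :=
  Finpartition.part_eq_of_mem _ (by rw [parts_glue]; exact mem_insert_self _ _) (by simp)

lemma hB_of (π : Finpartition (Finset.univ : Finset (Option α))) :
    Finset.eraseNone (π.part none) = ∅ ∨ Finset.eraseNone (π.part none) ∈ (resPart π).parts := by
  by_cases h : Finset.eraseNone (π.part none) = ∅
  · exact Or.inl h
  · right
    rw [parts_resPart]
    exact Finset.mem_erase.2 ⟨h, Finset.mem_image_of_mem _ (π.part_mem.2 (mem_univ none))⟩

lemma glue_resPart (π : Finpartition (Finset.univ : Finset (Option α))) :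
    glue (resPart π) (Finset.eraseNone (π.part none)) (hB_of π) = π := by
  have hPmem : π.part none ∈ π.parts := π.part_mem.2 (mem_univ none)
  have hnP : none ∈ π.part none := π.mem_part (mem_univ none)
  apply Finpartition.ext
  rw [parts_glue, Finset.insertNone_eraseNone, Finset.insert_eq_self.2 hnP]
  ext Q
  simp only [mem_insert, mem_image]
  constructor
  · rintro (rfl | ⟨C, hC, rfl⟩)
    · exact hPmem
    · rw [parts_resPart] at hC
      obtain ⟨hCP, hC⟩ := Finset.mem_erase.1 hC
      obtain ⟨hCne, hCimg⟩ := Finset.mem_erase.1 hC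
      obtain ⟨Q', hQ', rfl⟩ := Finset.mem_image.1 hCimg
      have hnQ' : none ∉ Q' := by
        intro hn
        exact hCP (by rw [π.eq_of_mem_parts hQ' hPmem hn hnP])
      rw [Finset.image_some_eraseNone, Finset.erase_eq_of_notMem hnQ']
      exact hQ'
  · intro hQ
    by_cases hn : none ∈ Q
    · exact Or.inl (π.eq_of_mem_parts hQ hPmem hn hnP)
    · right
      refine ⟨Finset.eraseNone Q, ?_, by
        rw [Finset.image_some_eraseNone, Finset.erase_eq_of_notMem hn]⟩
      refine Finset.mem_erase.2 ⟨?_, ?_⟩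
      · -- eraseNone Q ≠ eraseNone (π.part none)
        intro hEq
        obtain ⟨x, hx⟩ := π.nonempty_of_mem_parts hQ
        obtain ⟨a, rfl⟩ : ∃ a, x = some a := by
          cases x with
          | none => exact absurd hx hn
          | some a => exact ⟨a, rfl⟩
        have haQ : a ∈ Finset.eraseNone Q := Finset.mem_eraseNone.2 hx
        rw [hEq] at haQ
        have haP : some a ∈ π.part none := Finset.mem_eraseNone.1 haQ
        have : Q = π.part none := π.eq_of_mem_parts hQ hPmem hx haP
        exact hn (this ▸ hnP)
      · rw [parts_resPart]
        refine Finset.mem_erase.2 ⟨?_, Finset.mem_image_of_mem _ hQ⟩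
        intro hEmpty
        obtain ⟨x, hx⟩ := π.nonempty_of_mem_parts hQ
        cases x with
        | none => exact hn hx
        | some a =>
          have : a ∈ Finset.eraseNone Q := Finset.mem_eraseNone.2 hx
          rw [hEmpty] at this
          exact notMem_empty _ this


variable {R : Type*} [CommRing R]

lemma fiber_sum (q : R) (ρ : Finpartition (Finset.univ : Finset α)) :
    ∑ π ∈ Finset.univ.filter (fun π : Finpartition (Finset.univ : Finset (Option α)) =>
        resPart π = ρ), ∏ j ∈ Finset.range π.parts.card, (q - (j : R))
      = q * ∏ j ∈ Finset.range ρ.parts.card, (q - (j : R)) := by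
  have hEmpty : (∅ : Finset α) ∉ ρ.parts := by simpa using ρ.bot_notMem
  have key : ∑ π ∈ Finset.univ.filter (fun π : Finpartition (Finset.univ : Finset (Option α)) =>
        resPart π = ρ), ∏ j ∈ Finset.range π.parts.card, (q - (j : R))
      = ∑ B ∈ insert ∅ ρ.parts,
          ∏ j ∈ Finset.range (if B = ∅ then ρ.parts.card + 1 else ρ.parts.card), (q - (j : R)) := by
    refine Finset.sum_bij' (i := fun π _ => Finset.eraseNone (π.part none))
      (j := fun B hB => glue ρ B (Finset.mem_insert.1 hB))
      (fun π hπ => ?_) (fun B hB => ?_) (fun π hπ => ?_) (fun B hB => ?_) (fun π hπ => ?_)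
    · -- i maps into insert ∅ ρ.parts
      have hρ : resPart π = ρ := (Finset.mem_filter.1 hπ).2
      rcases hB_of π with h | h
      · exact Finset.mem_insert.2 (Or.inl h)
      · rw [hρ] at h
        exact Finset.mem_insert.2 (Or.inr h)
    · -- j maps into the fiber
      exact Finset.mem_filter.2 ⟨Finset.mem_univ _, resPart_glue ρ B _⟩
    · -- left inverse
      have hρ : resPart π = ρ := (Finset.mem_filter.1 hπ).2
      subst hρ
      exact glue_resPart π
    · -- right inverse
      show Finset.eraseNone ((glue ρ B (Finset.mem_insert.1 hB)).part none) = B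
      rw [part_none_glue, Finset.eraseNone_insertNone]
    · -- values agree
      have hρ : resPart π = ρ := (Finset.mem_filter.1 hπ).2
      subst hρ
      congr 1
      have hcard := card_parts_glue (resPart π) (Finset.eraseNone (π.part none)) (hB_of π)
      rw [glue_resPart π] at hcard
      rw [hcard]
      rcases hB_of π with h | h
      · rw [if_pos h, h, Finset.erase_eq_of_notMem (by simpa using (resPart π).bot_notMem)]
      · have hne : Finset.eraseNone (π.part none) ≠ ∅ := by
          intro h0
          rw [h0] at h
          have hb := (resPart π).bot_notMem
          rw [Finset.bot_eq_empty] at hb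
          exact hb h
        rw [if_neg hne, Finset.card_erase_of_mem h,
          Nat.sub_add_cancel (Finset.card_pos.2 ⟨_, h⟩)]
  rw [key, Finset.sum_insert hEmpty, if_pos rfl, Finset.prod_range_succ]
  have hrest : ∑ B ∈ ρ.parts,
      ∏ j ∈ Finset.range (if B = ∅ then ρ.parts.card + 1 else ρ.parts.card), (q - (j : R))
      = (ρ.parts.card : R) * ∏ j ∈ Finset.range ρ.parts.card, (q - (j : R)) := by
    have hcongr : ∀ B ∈ ρ.parts,
        (∏ j ∈ Finset.range (if B = ∅ then ρ.parts.card + 1 else ρ.parts.card), (q - (j : R)))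
          = ∏ j ∈ Finset.range ρ.parts.card, (q - (j : R)) := fun B hB => by
      rw [if_neg (by rintro rfl; exact hEmpty hB)]
    rw [Finset.sum_congr rfl hcongr, Finset.sum_const, nsmul_eq_mul]
  rw [hrest]
  ring


section Transfer

variable {W γ : Type*} [Fintype W] [DecidableEq W] [Fintype γ] [DecidableEq γ]

/-- Compatibility of a partition with the fibres of `c`. -/
def IsCompat (c : W → γ) (π : Finpartition (Finset.univ : Finset W)) : Prop :=
  ∀ x y : W, c x = c y → ∀ B ∈ π.parts, x ∈ B → y ∈ B

/-- Pushforward of a compatible partition along a surjection. -/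
def pushPart (c : W → γ) (hc : Function.Surjective c)
    (π : Finpartition (Finset.univ : Finset W)) (hπ : IsCompat c π) :
    Finpartition (Finset.univ : Finset γ) where
  parts := π.parts.image (Finset.image c)
  supIndep := by
    rw [Finset.supIndep_iff_pairwiseDisjoint]
    rintro C₁ hC₁ C₂ hC₂ hne
    simp only [coe_image, Set.mem_image, mem_coe] at hC₁ hC₂
    obtain ⟨B₁, hB₁, rfl⟩ := hC₁
    obtain ⟨B₂, hB₂, rfl⟩ := hC₂
    have hBne : B₁ ≠ B₂ := by rintro rfl; exact hne rfl
    simp only [Function.onFun, id]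
    rw [Finset.disjoint_left]
    rintro x hx₁ hx₂
    obtain ⟨a₁, ha₁, rfl⟩ := Finset.mem_image.1 hx₁
    obtain ⟨a₂, ha₂, hca⟩ := Finset.mem_image.1 hx₂
    have : a₂ ∈ B₁ := hπ a₁ a₂ hca.symm B₁ hB₁ ha₁
    exact (Finset.disjoint_left.1 (π.disjoint hB₁ hB₂ hBne) this) ha₂
  sup_parts := by
    ext g
    simp only [Finset.mem_univ, iff_true]
    obtain ⟨x, rfl⟩ := hc g
    obtain ⟨B, hB, hxB⟩ := π.exists_mem (Finset.mem_univ x)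
    rw [Finset.mem_sup]
    exact ⟨B.image c, Finset.mem_image_of_mem _ hB, Finset.mem_image_of_mem c hxB⟩
  bot_notMem := by
    simp only [bot_eq_empty, mem_image, not_exists, not_and]
    intro B hB h
    obtain ⟨a, ha⟩ := π.nonempty_of_mem_parts hB
    have : c a ∈ B.image c := Finset.mem_image_of_mem c ha
    rw [h] at this
    exact notMem_empty _ this

lemma parts_pushPart (c : W → γ) (hc) (π) (hπ : IsCompat c π) :
    (pushPart c hc π hπ).parts = π.parts.image (Finset.image c) := rfl

lemma card_parts_pushPart (c : W → γ) (hc) (π) (hπ : IsCompat c π) :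
    (pushPart c hc π hπ).parts.card = π.parts.card := by
  rw [parts_pushPart]
  apply Finset.card_image_of_injOn
  intro B₁ hB₁ B₂ hB₂ hEq
  obtain ⟨a₁, ha₁⟩ := π.nonempty_of_mem_parts hB₁
  have : c a₁ ∈ B₂.image c := by rw [← hEq]; exact Finset.mem_image_of_mem c ha₁
  obtain ⟨a₂, ha₂, hca⟩ := Finset.mem_image.1 this
  have ha₁B₂ : a₁ ∈ B₂ := hπ a₂ a₁ hca B₂ hB₂ ha₂
  exact π.eq_of_mem_parts hB₁ hB₂ ha₁ ha₁B₂

/-- Pullback of a partition along a surjection. -/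
def pullPart (c : W → γ) (hc : Function.Surjective c)
    (ρ : Finpartition (Finset.univ : Finset γ)) :
    Finpartition (Finset.univ : Finset W) where
  parts := ρ.parts.image (fun C => Finset.univ.filter (fun x => c x ∈ C))
  supIndep := by
    rw [Finset.supIndep_iff_pairwiseDisjoint]
    rintro D₁ hD₁ D₂ hD₂ hne
    simp only [coe_image, Set.mem_image, mem_coe] at hD₁ hD₂
    obtain ⟨C₁, hC₁, rfl⟩ := hD₁
    obtain ⟨C₂, hC₂, rfl⟩ := hD₂
    have hCne : C₁ ≠ C₂ := by rintro rfl; exact hne rfl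
    simp only [Function.onFun, id]
    rw [Finset.disjoint_left]
    rintro x hx₁ hx₂
    rw [Finset.mem_filter] at hx₁ hx₂
    exact (Finset.disjoint_left.1 (ρ.disjoint hC₁ hC₂ hCne) hx₁.2) hx₂.2
  sup_parts := by
    ext x
    simp only [Finset.mem_univ, iff_true]
    obtain ⟨C, hC, hxC⟩ := ρ.exists_mem (Finset.mem_univ (c x))
    rw [Finset.mem_sup]
    exact ⟨_, Finset.mem_image_of_mem _ hC, Finset.mem_filter.2 ⟨Finset.mem_univ x, hxC⟩⟩
  bot_notMem := by
    simp only [bot_eq_empty, mem_image, not_exists, not_and]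
    intro C hC h
    obtain ⟨g, hg⟩ := ρ.nonempty_of_mem_parts hC
    obtain ⟨x, rfl⟩ := hc g
    have : x ∈ Finset.univ.filter (fun x => c x ∈ C) :=
      Finset.mem_filter.2 ⟨Finset.mem_univ x, hg⟩
    rw [h] at this
    exact notMem_empty _ this

lemma parts_pullPart (c : W → γ) (hc) (ρ) :
    (pullPart c hc ρ).parts = ρ.parts.image (fun C => Finset.univ.filter (fun x => c x ∈ C)) := rfl

lemma isCompat_pullPart (c : W → γ) (hc) (ρ) : IsCompat c (pullPart c hc ρ) := by
  intro x y hxy B hB hxB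
  rw [parts_pullPart] at hB
  obtain ⟨C, hC, rfl⟩ := Finset.mem_image.1 hB
  rw [Finset.mem_filter] at hxB ⊢
  exact ⟨Finset.mem_univ y, hxy ▸ hxB.2⟩

lemma pullPart_pushPart (c : W → γ) (hc) (π) (hπ : IsCompat c π) :
    pullPart c hc (pushPart c hc π hπ) = π := by
  apply Finpartition.ext
  rw [parts_pullPart, parts_pushPart, Finset.image_image]
  have : ∀ B ∈ π.parts,
      (Finset.univ.filter (fun x => c x ∈ B.image c)) = B := by
    intro B hB
    ext x
    rw [Finset.mem_filter]
    constructor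
    · rintro ⟨-, hx⟩
      obtain ⟨a, ha, hca⟩ := Finset.mem_image.1 hx
      exact hπ a x hca B hB ha
    · intro hx
      exact ⟨Finset.mem_univ x, Finset.mem_image_of_mem c hx⟩
  calc π.parts.image _ = π.parts.image id := Finset.image_congr (fun B hB => this B hB)
    _ = π.parts := Finset.image_id

lemma pushPart_pullPart (c : W → γ) (hc) (ρ) (h') :
    pushPart c hc (pullPart c hc ρ) h' = ρ := by
  apply Finpartition.ext
  rw [parts_pushPart, parts_pullPart, Finset.image_image]
  have : ∀ C ∈ ρ.parts,
      (Finset.univ.filter (fun x => c x ∈ C)).image c = C := by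
    intro C hC
    ext g
    constructor
    · intro hg
      obtain ⟨x, hx, rfl⟩ := Finset.mem_image.1 hg
      exact (Finset.mem_filter.1 hx).2
    · intro hg
      obtain ⟨x, rfl⟩ := hc g
      exact Finset.mem_image_of_mem c (Finset.mem_filter.2 ⟨Finset.mem_univ x, hg⟩)
  calc ρ.parts.image _ = ρ.parts.image id := Finset.image_congr (fun C hC => this C hC)
    _ = ρ.parts := Finset.image_id

open scoped Classical in
lemma transfer_sum {R : Type*} [CommRing R] (c : W → γ) (hc : Function.Surjective c) (q : R) :
    ∑ π ∈ Finset.univ.filter (fun π : Finpartition (Finset.univ : Finset W) => IsCompat c π),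
        ∏ j ∈ Finset.range π.parts.card, (q - (j : R))
      = ∑ ρ : Finpartition (Finset.univ : Finset γ),
          ∏ j ∈ Finset.range ρ.parts.card, (q - (j : R)) := by
  refine Finset.sum_bij'
    (i := fun π hπ => pushPart c hc π ((Finset.mem_filter.1 hπ).2))
    (j := fun ρ _ => pullPart c hc ρ)
    (fun π hπ => Finset.mem_univ _)
    (fun ρ hρ => Finset.mem_filter.2 ⟨Finset.mem_univ _, isCompat_pullPart c hc ρ⟩)
    (fun π hπ => pullPart_pushPart c hc π _)
    (fun ρ hρ => pushPart_pullPart c hc ρ _)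
    (fun π hπ => by rw [card_parts_pushPart])

end Transfer


section Stirling

variable {R : Type*} [CommRing R]

lemma stirling_option_step {α : Type*} [Fintype α] [DecidableEq α] (q : R)
    (ih : ∑ π : Finpartition (Finset.univ : Finset α),
        ∏ j ∈ Finset.range π.parts.card, (q - (j : R)) = q ^ Fintype.card α) :
    ∑ π : Finpartition (Finset.univ : Finset (Option α)),
        ∏ j ∈ Finset.range π.parts.card, (q - (j : R)) = q ^ Fintype.card (Option α) := by
  rw [← Finset.sum_fiberwise_of_maps_to (g := resPart)
    (t := (Finset.univ : Finset (Finpartition (Finset.univ : Finset α))))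
    (fun π _ => Finset.mem_univ _)]
  calc ∑ ρ : Finpartition (Finset.univ : Finset α),
        ∑ π ∈ Finset.univ.filter (fun π => resPart π = ρ),
          ∏ j ∈ Finset.range π.parts.card, (q - (j : R))
      = ∑ ρ : Finpartition (Finset.univ : Finset α),
          q * ∏ j ∈ Finset.range ρ.parts.card, (q - (j : R)) :=
        Finset.sum_congr rfl (fun ρ _ => fiber_sum q ρ)
    _ = q * ∑ ρ : Finpartition (Finset.univ : Finset α),
          ∏ j ∈ Finset.range ρ.parts.card, (q - (j : R)) := by rw [Finset.mul_sum]
    _ = q ^ Fintype.card (Option α) := by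
        rw [ih, Fintype.card_option, pow_succ, mul_comm]

def StirP (q : R) (γ : Type*) [Fintype γ] : Prop :=
  ∀ (_ : DecidableEq γ),
    ∑ π : Finpartition (Finset.univ : Finset γ),
      ∏ j ∈ Finset.range π.parts.card, (q - (j : R)) = q ^ Fintype.card γ

lemma stirling (q : R) (β : Type*) [Fintype β] : StirP q β := by
  refine Fintype.induction_empty_option (P := fun γ i => @StirP R _ q γ i) ?_ ?_ ?_ β
  · -- of_equiv
    intro α β instβF e ih
    letI : Fintype α := Fintype.ofEquiv β e.symm
    intro instβ
    classical
    letI instα : DecidableEq α := fun a b => Classical.decEq α a b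
    have hs := transfer_sum (W := β) (γ := α) (c := e.symm) e.symm.surjective q
    have hfilter : (Finset.univ.filter
        (fun π : Finpartition (Finset.univ : Finset β) => IsCompat (⇑e.symm) π))
        = Finset.univ := by
      refine Finset.filter_true_of_mem (fun π _ => ?_)
      intro x y hxy B hB hxB
      have : x = y := e.symm.injective hxy
      rwa [← this]
    rw [hfilter] at hs
    rw [hs, ih instα, Fintype.card_congr e.symm]
  · -- empty
    intro _
    have h0 : ∀ π : Finpartition (Finset.univ : Finset PEmpty), π.parts = ∅ := fun π =>
      Finset.eq_empty_of_forall_notMem (fun B hB =>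
        (π.nonempty_of_mem_parts hB).elim (fun x _ => x.elim))
    have huniv : (Finset.univ : Finset PEmpty) = ⊥ := Finset.eq_empty_of_forall_notMem
      (fun x _ => x.elim)
    have hne : Nonempty (Finpartition (Finset.univ : Finset PEmpty)) := by
      rw [huniv]; exact ⟨default⟩
    obtain ⟨π₀⟩ := hne
    have hcard : Fintype.card (Finpartition (Finset.univ : Finset PEmpty)) = 1 :=
      Fintype.card_eq_one_iff.2 ⟨π₀, fun π => Finpartition.ext (by rw [h0, h0])⟩
    calc ∑ π : Finpartition (Finset.univ : Finset PEmpty),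
          ∏ j ∈ Finset.range π.parts.card, (q - (j : R))
        = ∑ _π : Finpartition (Finset.univ : Finset PEmpty), 1 :=
          Finset.sum_congr rfl (fun π _ => by rw [h0]; simp)
      _ = 1 := by rw [Finset.sum_const, Finset.card_univ, hcard, one_smul]
      _ = q ^ Fintype.card PEmpty := by simp
  · -- option
    intro α _ ih
    intro instO
    letI instα : DecidableEq α := Classical.decEq α
    haveI hss : Subsingleton (DecidableEq (Option α)) :=
      ⟨fun a b => funext fun x => funext fun y => Subsingleton.elim _ _⟩
    obtain rfl : instO = (Option.instDecidableEq : DecidableEq (Option α)) :=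
      Subsingleton.elim _ _
    exact stirling_option_step q (ih instα)

end Stirling


section Graph

variable {V : Type*} [Fintype V] [DecidableEq V]

lemma kcomp_univ_eq (A : Finset (Sym2 V)) :
    kcomp (Finset.univ : Finset V) A
      = Nat.card (SimpleGraph.fromEdgeSet (A : Set (Sym2 V))).ConnectedComponent := by
  unfold kcomp
  rw [Finset.coe_univ]
  exact Nat.card_congr (Iso.connectedComponentEquiv (induceUnivIso _))

lemma compat_iff (G : SimpleGraph V) [DecidableRel G.Adj] (A : Finset (Sym2 V))
    (hA : A ⊆ G.edgeFinset) (π : Finpartition (Finset.univ : Finset V)) :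
    A ⊆ π.parts.biUnion (edgesWithin G)
      ↔ IsCompat (SimpleGraph.fromEdgeSet (A : Set (Sym2 V))).connectedComponentMk π := by
  constructor
  · intro hsub
    have walk_lemma : ∀ (x y : V)
        (_ : (SimpleGraph.fromEdgeSet (A : Set (Sym2 V))).Walk x y)
        (B : Finset V), B ∈ π.parts → x ∈ B → y ∈ B := by
      intro x y w
      induction w with
      | nil => intro B _ hx; exact hx
      | @cons a b c hadj p ih =>
        intro B hB ha
        obtain ⟨hmem, -⟩ := (SimpleGraph.fromEdgeSet_adj _).1 hadj
        have heA : s(a, b) ∈ A := hmem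
        obtain ⟨B', hB', heB'⟩ := Finset.mem_biUnion.1 (hsub heA)
        obtain ⟨-, hall⟩ := Finset.mem_filter.1 heB'
        have haB' : a ∈ B' := hall a (by simp)
        have hbB' : b ∈ B' := hall b (by simp)
        have hBB' : B = B' := π.eq_of_mem_parts hB hB' ha haB'
        exact ih B hB (by rw [hBB']; exact hbB')
    intro x y hxy B hB hxB
    obtain ⟨w⟩ := SimpleGraph.ConnectedComponent.exact hxy
    exact walk_lemma x y w B hB hxB
  · intro hcomp e he
    induction e using Sym2.ind with
    | _ x y =>
      have hGe : s(x, y) ∈ G.edgeFinset := hA he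
      have hne : x ≠ y := by
        intro h
        subst h
        have := SimpleGraph.mem_edgeFinset.1 hGe
        rw [SimpleGraph.mem_edgeSet] at this
        exact G.irrefl this
      have hadj : (SimpleGraph.fromEdgeSet (A : Set (Sym2 V))).Adj x y :=
        (SimpleGraph.fromEdgeSet_adj _).2 ⟨he, hne⟩
      have hxy := SimpleGraph.ConnectedComponent.sound hadj.reachable
      have hB := π.part_mem.2 (Finset.mem_univ x)
      have hxB := π.mem_part (Finset.mem_univ x)
      have hyB : y ∈ π.part x := hcomp x y hxy _ hB hxB
      refine Finset.mem_biUnion.2 ⟨π.part x, hB, Finset.mem_filter.2 ⟨hGe, ?_⟩⟩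
      intro z hz
      rcases Sym2.mem_iff.1 hz with rfl | rfl
      · exact hxB
      · exact hyB

lemma key_count {R : Type*} [CommRing R] (G : SimpleGraph V) [DecidableRel G.Adj] (q : R)
    (A : Finset (Sym2 V)) (hA : A ⊆ edgesWithin G Finset.univ) :
    ∑ π ∈ Finset.univ.filter (fun π : Finpartition (Finset.univ : Finset V) =>
        A ⊆ π.parts.biUnion (edgesWithin G)),
      ∏ j ∈ Finset.range π.parts.card, (q - (j : R))
    = q ^ kcomp Finset.univ A := by
  classical
  have hAE : A ⊆ G.edgeFinset := fun e he => (Finset.mem_filter.1 (hA he)).1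
  letI : DecidableEq (SimpleGraph.fromEdgeSet (A : Set (Sym2 V))).ConnectedComponent :=
    Classical.decEq _
  letI : Fintype (SimpleGraph.fromEdgeSet (A : Set (Sym2 V))).ConnectedComponent :=
    Fintype.ofFinite _
  have hsurj : Function.Surjective
      (SimpleGraph.fromEdgeSet (A : Set (Sym2 V))).connectedComponentMk :=
    fun c => c.exists_rep
  have hfil : Finset.univ.filter (fun π : Finpartition (Finset.univ : Finset V) =>
        A ⊆ π.parts.biUnion (edgesWithin G))
      = Finset.univ.filter (fun π : Finpartition (Finset.univ : Finset V) =>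
        IsCompat (SimpleGraph.fromEdgeSet (A : Set (Sym2 V))).connectedComponentMk π) :=
    Finset.filter_congr (fun π _ => compat_iff G A hAE π)
  rw [hfil, transfer_sum _ hsurj q,
    stirling q (SimpleGraph.fromEdgeSet (A : Set (Sym2 V))).ConnectedComponent inferInstance,
    kcomp_univ_eq, Nat.card_eq_fintype_card]

end Graph


section Main

variable {V : Type*} [Fintype V] [DecidableEq V] {R : Type*} [CommRing R]

lemma biUnion_edges_subset (G : SimpleGraph V) [DecidableRel G.Adj]
    (π : Finpartition (Finset.univ : Finset V)) :
    π.parts.biUnion (edgesWithin G) ⊆ edgesWithin G Finset.univ := by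
  intro e he
  obtain ⟨B, _, heB⟩ := Finset.mem_biUnion.1 he
  obtain ⟨h1, _⟩ := Finset.mem_filter.1 heB
  exact Finset.mem_filter.2 ⟨h1, fun x _ => Finset.mem_univ x⟩

lemma powerset_biUnion_eq (G : SimpleGraph V) [DecidableRel G.Adj]
    (π : Finpartition (Finset.univ : Finset V)) :
    (π.parts.biUnion (edgesWithin G)).powerset
      = (edgesWithin G Finset.univ).powerset.filter
          (fun A => A ⊆ π.parts.biUnion (edgesWithin G)) := by
  ext A
  simp only [Finset.mem_powerset, Finset.mem_filter]
  exact ⟨fun h => ⟨h.trans (biUnion_edges_subset G π), h⟩, fun h => h.2⟩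

lemma prod_parts_eq_sum (G : SimpleGraph V) [DecidableRel G.Adj]
    (π : Finpartition (Finset.univ : Finset V)) (v : Sym2 V → R) :
    ∏ B ∈ π.parts, ∏ e ∈ edgesWithin G B, (1 + v e)
      = ∑ A ∈ (π.parts.biUnion (edgesWithin G)).powerset, ∏ e ∈ A, v e := by
  have hdisj : ∀ B₁ ∈ π.parts, ∀ B₂ ∈ π.parts, B₁ ≠ B₂ →
      Disjoint (edgesWithin G B₁) (edgesWithin G B₂) := by
    intro B₁ hB₁ B₂ hB₂ hne
    rw [Finset.disjoint_left]
    intro e he₁ he₂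
    obtain ⟨-, hall₁⟩ := Finset.mem_filter.1 he₁
    obtain ⟨-, hall₂⟩ := Finset.mem_filter.1 he₂
    have hx : e.out.1 ∈ e := Sym2.out_fst_mem e
    exact absurd (π.eq_of_mem_parts hB₁ hB₂ (hall₁ _ hx) (hall₂ _ hx)) hne
  rw [← Finset.prod_biUnion hdisj]
  calc ∏ e ∈ π.parts.biUnion (edgesWithin G), (1 + v e)
      = ∏ e ∈ π.parts.biUnion (edgesWithin G), (v e + 1) := by
        refine Finset.prod_congr rfl fun e _ => add_comm _ _
    _ = ∑ A ∈ (π.parts.biUnion (edgesWithin G)).powerset,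
          (∏ e ∈ A, v e) * ∏ _e ∈ π.parts.biUnion (edgesWithin G) \ A, 1 :=
        Finset.prod_add _ _ _
    _ = ∑ A ∈ (π.parts.biUnion (edgesWithin G)).powerset, ∏ e ∈ A, v e := by simp

theorem stmt9' (G : SimpleGraph V) [DecidableRel G.Adj] (v : Sym2 V → R) (q : R) :
    Zmv G Finset.univ q v
      = ∑ π : Finpartition (Finset.univ : Finset V),
          (∏ j ∈ Finset.range π.parts.card, (q - (j : R))) *
            ∏ B ∈ π.parts, ∏ e ∈ edgesWithin G B, (1 + v e) := by
  calc Zmv G Finset.univ q v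
      = ∑ A ∈ (edgesWithin G Finset.univ).powerset, q ^ kcomp Finset.univ A * ∏ e ∈ A, v e :=
        rfl
    _ = ∑ A ∈ (edgesWithin G Finset.univ).powerset,
          (∑ π ∈ Finset.univ.filter (fun π : Finpartition (Finset.univ : Finset V) =>
              A ⊆ π.parts.biUnion (edgesWithin G)),
            ∏ j ∈ Finset.range π.parts.card, (q - (j : R))) * ∏ e ∈ A, v e := by
        refine Finset.sum_congr rfl fun A hA => ?_
        rw [key_count G q A (Finset.mem_powerset.1 hA)]
    _ = ∑ A ∈ (edgesWithin G Finset.univ).powerset,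
          ∑ π : Finpartition (Finset.univ : Finset V),
            (if A ⊆ π.parts.biUnion (edgesWithin G) then
              (∏ j ∈ Finset.range π.parts.card, (q - (j : R))) * ∏ e ∈ A, v e else 0) := by
        refine Finset.sum_congr rfl fun A hA => ?_
        rw [Finset.sum_filter, Finset.sum_mul]
        refine Finset.sum_congr rfl fun π _ => ?_
        rw [ite_mul, zero_mul]
    _ = ∑ π : Finpartition (Finset.univ : Finset V),
          ∑ A ∈ (edgesWithin G Finset.univ).powerset,
            (if A ⊆ π.parts.biUnion (edgesWithin G) then
              (∏ j ∈ Finset.range π.parts.card, (q - (j : R))) * ∏ e ∈ A, v e else 0) :=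
        Finset.sum_comm
    _ = ∑ π : Finpartition (Finset.univ : Finset V),
          (∏ j ∈ Finset.range π.parts.card, (q - (j : R))) *
            ∏ B ∈ π.parts, ∏ e ∈ edgesWithin G B, (1 + v e) := by
        refine Finset.sum_congr rfl fun π _ => ?_
        rw [← Finset.sum_filter, ← powerset_biUnion_eq, prod_parts_eq_sum, Finset.mul_sum]

end Main

end TutteAux

theorem stmt9 {V : Type*} [Fintype V] [DecidableEq V] {R : Type*} [CommRing R]
    (G : SimpleGraph V) [DecidableRel G.Adj] (v : Sym2 V → R) (q : R) :
    Zmv G Finset.univ q v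
      = ∑ π : Finpartition (Finset.univ : Finset V),
          (∏ j ∈ Finset.range π.parts.card, (q - (j : R))) *
            ∏ B ∈ π.parts, ∏ e ∈ edgesWithin G B, (1 + v e) := by
  exact TutteAux.stmt9' G v q
end

section
/- Let G = (V,E) be a finite simple graph with V nonempty, let R be a commutative ring, and let v : E → R be edge weights. Then C_G(v) = Σ_{π ∈ Π(V)} (-1)^{|π|-1} · (|π|-1)! · ∏_{B ∈ π} ∏_{e ∈ E(G[B])} (1 + v_e), where C_G(v) = Σ_{A ⊆ E : (V,A) connected} ∏_{e∈A} v_e, the sum runs over all partitions π of V into nonempty blocks, |π| is the number of blocks, and E(G[B]) is the edge set of the induced subgraph of G on block B. -/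
open Finset SimpleGraph

section PartitionAux
open Finset
open scoped Classical
variable {α : Type*} [DecidableEq α]

variable {α : Type*} [DecidableEq α]

lemma avoid_parts_of_mem_s10 {s : Finset α} (P : Finpartition s) {c : Finset α} (hc : c ∈ P.parts) :
    (P.avoid c).parts = P.parts.erase c := by
  ext x
  rw [Finpartition.mem_avoid, mem_erase]
  constructor
  · rintro ⟨d, hd, hdc, rfl⟩
    have hdnec : d ≠ c := by rintro rfl; exact hdc le_rfl
    have hdisj : Disjoint d c := P.disjoint hd hc hdnec
    rw [sdiff_eq_self_of_disjoint hdisj]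
    exact ⟨hdnec, hd⟩
  · rintro ⟨hxc, hx⟩
    have hdisj : Disjoint x c := P.disjoint hx hc hxc
    refine ⟨x, hx, fun h => ?_, sdiff_eq_self_of_disjoint hdisj⟩
    obtain ⟨a, ha⟩ := P.nonempty_of_mem_parts hx
    exact disjoint_left.mp hdisj ha (h ha)

lemma avoid_parts_of_subset {s : Finset α} (P : Finpartition s) {C b0 : Finset α}
    (hC : C ∈ P.parts) (hb0 : b0 ⊆ C) (hb0ne : b0.Nonempty) (hne : C ≠ b0) :
    (P.avoid b0).parts = insert (C \ b0) (P.parts.erase C) := by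
  ext x
  rw [Finpartition.mem_avoid, mem_insert, mem_erase]
  constructor
  · rintro ⟨d, hd, hdb, rfl⟩
    by_cases h : d = C
    · left; rw [h]
    · right
      have hdisj : Disjoint d b0 := (P.disjoint hd hC h).mono_right hb0
      rw [sdiff_eq_self_of_disjoint hdisj]
      exact ⟨h, hd⟩
  · rintro (rfl | ⟨hxC, hx⟩)
    · exact ⟨C, hC, fun h => hne (le_antisymm h hb0), rfl⟩
    · have hdisj : Disjoint x b0 := (P.disjoint hx hC hxC).mono_right hb0
      refine ⟨x, hx, fun h => ?_, sdiff_eq_self_of_disjoint hdisj⟩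
      obtain ⟨a, ha⟩ := P.nonempty_of_mem_parts hx
      exact disjoint_left.mp hdisj ha (h ha)

lemma avoid_mono {s : Finset α} {P Q : Finpartition s} (h : P ≤ Q) (b0 : Finset α) :
    P.avoid b0 ≤ Q.avoid b0 := by
  intro x hx
  rw [Finpartition.mem_avoid] at hx
  obtain ⟨d, hd, hdb, rfl⟩ := hx
  obtain ⟨c, hc, hdc⟩ := h hd
  refine ⟨c \ b0, ?_, sdiff_subset_sdiff hdc (Finset.Subset.refl _)⟩
  rw [Finpartition.mem_avoid]
  exact ⟨c, hc, fun hcb => hdb (hdc.trans hcb), rfl⟩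

/-- Merge the extra block `b0` into the block `c` of `π'`. -/
def mergePart {s b0 : Finset α} (hb0s : b0 ⊆ s) (hb0ne : b0.Nonempty)
    (π' : Finpartition (s \ b0)) (c : Finset α) (hc : c ∈ π'.parts) : Finpartition s :=
  (π'.avoid c).extend (b := c ∪ b0) (c := s)
    (by
      simp only [bot_eq_empty, ← nonempty_iff_ne_empty]
      exact hb0ne.mono subset_union_right)
    (by
      rw [disjoint_union_right]
      exact ⟨sdiff_disjoint, sdiff_disjoint.mono_left sdiff_subset⟩)
    (by
      have hcs : c ⊆ s \ b0 := π'.le hc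
      rw [sup_eq_union]
      ext x
      simp only [mem_union, mem_sdiff]
      constructor
      · rintro (⟨⟨hx, _⟩, _⟩ | (hx | hx))
        · exact hx
        · exact (mem_sdiff.1 (hcs hx)).1
        · exact hb0s hx
      · intro hx
        by_cases hxb : x ∈ b0
        · exact Or.inr (Or.inr hxb)
        · by_cases hxc : x ∈ c
          · exact Or.inr (Or.inl hxc)
          · exact Or.inl ⟨⟨hx, hxb⟩, hxc⟩)

lemma mergePart_parts {s b0 : Finset α} (hb0s : b0 ⊆ s) (hb0ne : b0.Nonempty)
    (π' : Finpartition (s \ b0)) (c : Finset α) (hc : c ∈ π'.parts) :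
    (mergePart hb0s hb0ne π' c hc).parts = insert (c ∪ b0) (π'.parts.erase c) := by
  rw [mergePart, Finpartition.extend_parts, avoid_parts_of_mem_s10 π' hc]

lemma mergePart_parts_card {s b0 : Finset α} (hb0s : b0 ⊆ s) (hb0ne : b0.Nonempty)
    (π' : Finpartition (s \ b0)) (c : Finset α) (hc : c ∈ π'.parts) :
    (mergePart hb0s hb0ne π' c hc).parts.card = π'.parts.card := by
  rw [mergePart_parts]
  have hnot : c ∪ b0 ∉ π'.parts.erase c := by
    intro h
    obtain ⟨a, ha⟩ := hb0ne
    have := π'.le (mem_of_mem_erase h) (mem_union_right _ ha)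
    exact (mem_sdiff.1 this).2 ha
  rw [card_insert_of_notMem hnot, card_erase_of_mem hc]
  have : 1 ≤ π'.parts.card := card_pos.2 ⟨c, hc⟩
  omega

lemma sum_coarsenings {R : Type*} [CommRing R] {s : Finset α} (hs : s.Nonempty)
    (σ : Finpartition s) :
    ∑ π ∈ univ.filter (fun π : Finpartition s => σ ≤ π),
        ((-1 : R) ^ (π.parts.card - 1) * ((π.parts.card - 1).factorial : R))
      = if σ.parts.card = 1 then 1 else 0 := by
  classical
  by_cases hk : σ.parts.card = 1
  · rw [if_pos hk]
    obtain ⟨b, hb0⟩ := card_eq_one.1 hk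
    have hbs : b = s := by
      have := σ.sup_parts; rwa [hb0, Finset.sup_singleton, id] at this
    have hb : σ.parts = {s} := by rw [hb0, hbs]
    have hfil : univ.filter (fun π : Finpartition s => σ ≤ π) = {σ} := by
      ext π
      simp only [mem_filter, mem_univ, true_and, mem_singleton]
      constructor
      · intro h
        have hsmem : s ∈ π.parts := by
          obtain ⟨c, hc, hbc⟩ := h (hb ▸ mem_singleton_self s)
          have : c = s := le_antisymm (π.le hc) hbc
          rwa [this] at hc
        apply Finpartition.ext
        rw [hb]
        ext q
        simp only [mem_singleton]
        constructor
        · intro hq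
          by_contra hqb
          have hd := π.disjoint hq hsmem hqb
          obtain ⟨a, ha⟩ := π.nonempty_of_mem_parts hq
          exact disjoint_left.mp hd ha (π.le hq ha)
        · rintro rfl; exact hsmem
      · rintro rfl; exact le_refl _
    rw [hfil, Finset.sum_singleton, hk]
    norm_num
  · rw [if_neg hk]
    have h1 : 1 ≤ σ.parts.card := by
      refine card_pos.2 (σ.parts_nonempty fun h => hs.ne_empty ?_)
      rwa [Finset.bot_eq_empty] at h
    have h2 : 1 < σ.parts.card := by omega
    obtain ⟨b0, hb0, b1, hb1, hbne⟩ := Finset.one_lt_card.mp h2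
    have hb0s : b0 ⊆ s := σ.le hb0
    have hb0ne : b0.Nonempty := σ.nonempty_of_mem_parts hb0
    have htne : (s \ b0).Nonempty := by
      obtain ⟨a, ha⟩ := σ.nonempty_of_mem_parts hb1
      refine ⟨a, mem_sdiff.2 ⟨σ.le hb1 ha, fun hab0 => ?_⟩⟩
      exact disjoint_left.mp (σ.disjoint hb1 hb0 hbne.symm) ha hab0
    have hb0bot : b0 ≠ (⊥ : Finset α) := fun h => hb0ne.ne_empty (by rwa [Finset.bot_eq_empty] at h)
    have hsup0 : (s \ b0) ⊔ b0 = s := by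
      rw [sup_eq_union]; exact sdiff_union_of_subset hb0s
    rw [← Finset.sum_fiberwise_of_maps_to (g := fun π : Finpartition s => π.avoid b0)
        (t := univ.filter (fun π' : Finpartition (s \ b0) => σ.avoid b0 ≤ π'))
        (fun π hπ => by
          simp only [mem_filter, mem_univ, true_and] at *
          exact avoid_mono hπ b0)]
    apply Finset.sum_eq_zero
    intro π' hπ'
    rw [mem_filter] at hπ'
    have hπ'le : σ.avoid b0 ≤ π' := hπ'.2
    have hm : 1 ≤ π'.parts.card := by
      refine card_pos.2 (π'.parts_nonempty fun h => htne.ne_empty ?_)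
      rwa [Finset.bot_eq_empty] at h
    have hb0notin : b0 ∉ π'.parts := by
      intro h
      obtain ⟨a, ha⟩ := hb0ne
      exact (mem_sdiff.1 (π'.le h ha)).2 ha
    have hfiber : ((univ.filter (fun π : Finpartition s => σ ≤ π)).filter
          (fun π => π.avoid b0 = π'))
        = insert (π'.extend hb0bot sdiff_disjoint hsup0)
            (π'.parts.attach.image (fun c => mergePart hb0s hb0ne π' c.1 c.2)) := by
      ext π
      simp only [mem_filter, mem_univ, true_and, mem_insert, Finset.mem_image, mem_attach,
        true_and, Subtype.exists]
      constructor
      · rintro ⟨hσπ, hg⟩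
        obtain ⟨a0, ha0⟩ := id hb0ne
        have ha0s : a0 ∈ s := hb0s ha0
        have hCmem : π.part a0 ∈ π.parts := π.part_mem.2 ha0s
        have hb0C : b0 ⊆ π.part a0 := by
          obtain ⟨c, hc, hbc⟩ := hσπ hb0
          rwa [π.part_eq_of_mem hc (hbc ha0)]
        by_cases hCb : π.part a0 = b0
        · left
          apply Finpartition.ext
          rw [Finpartition.extend_parts, ← hg, avoid_parts_of_mem_s10 π (hCb ▸ hCmem),
            insert_erase (hCb ▸ hCmem)]
        · right
          have hCns : ¬ π.part a0 ⊆ b0 := fun h => hCb (le_antisymm h hb0C)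
          have hcmem : π.part a0 \ b0 ∈ π'.parts := by
            rw [← hg, Finpartition.mem_avoid]
            exact ⟨π.part a0, hCmem, hCns, rfl⟩
          refine ⟨π.part a0 \ b0, hcmem, ?_⟩
          apply Finpartition.ext
          have hnotmem : π.part a0 \ b0 ∉ π.parts.erase (π.part a0) := by
            intro h
            have hd := π.disjoint (mem_of_mem_erase h) hCmem (ne_of_mem_erase h)
            obtain ⟨a, ha⟩ := sdiff_nonempty.mpr hCns
            exact disjoint_left.mp hd ha (sdiff_subset ha)
          rw [mergePart_parts, ← hg,
            avoid_parts_of_subset π hCmem hb0C ⟨a0, ha0⟩ hCb,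
            Finset.erase_insert hnotmem, sdiff_union_of_subset hb0C, insert_erase hCmem]
      · rintro (rfl | ⟨c, hc, rfl⟩)
        · constructor
          · intro p hp
            by_cases hpb : p = b0
            · exact ⟨b0, by rw [Finpartition.extend_parts]; exact mem_insert_self _ _,
                hpb ▸ le_rfl⟩
            · have hp' : p ∈ (σ.avoid b0).parts := by
                rw [avoid_parts_of_mem_s10 σ hb0]; exact mem_erase.2 ⟨hpb, hp⟩
              obtain ⟨c', hc', hpc'⟩ := hπ'le hp'
              exact ⟨c', by rw [Finpartition.extend_parts]; exact mem_insert_of_mem hc', hpc'⟩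
          · apply Finpartition.ext
            have hb0E0 : b0 ∈ (π'.extend hb0bot sdiff_disjoint hsup0).parts := by
              rw [Finpartition.extend_parts]; exact mem_insert_self _ _
            rw [avoid_parts_of_mem_s10 _ hb0E0, Finpartition.extend_parts,
              Finset.erase_insert hb0notin]
        · constructor
          · intro p hp
            by_cases hpb : p = b0
            · refine ⟨c ∪ b0, ?_, hpb ▸ subset_union_right⟩
              rw [mergePart_parts]; exact mem_insert_self _ _
            · have hp' : p ∈ (σ.avoid b0).parts := by
                rw [avoid_parts_of_mem_s10 σ hb0]; exact mem_erase.2 ⟨hpb, hp⟩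
              obtain ⟨c', hc', hpc'⟩ := hπ'le hp'
              by_cases hcc : c' = c
              · refine ⟨c ∪ b0, ?_, (hcc ▸ hpc').trans subset_union_left⟩
                rw [mergePart_parts]; exact mem_insert_self _ _
              · refine ⟨c', ?_, hpc'⟩
                rw [mergePart_parts]
                exact mem_insert_of_mem (mem_erase.2 ⟨hcc, hc'⟩)
          · apply Finpartition.ext
            have hcd : Disjoint c b0 := sdiff_disjoint.mono_left (π'.le hc)
            have hCm : c ∪ b0 ∈ (mergePart hb0s hb0ne π' c hc).parts := by
              rw [mergePart_parts]; exact mem_insert_self _ _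
            have hCnb : c ∪ b0 ≠ b0 := by
              intro h
              obtain ⟨a, ha⟩ := π'.nonempty_of_mem_parts hc
              have : a ∈ b0 := h ▸ mem_union_left _ ha
              exact disjoint_left.mp hcd ha this
            have hnotin2 : c ∪ b0 ∉ π'.parts.erase c := by
              intro h
              obtain ⟨a, ha⟩ := hb0ne
              exact (mem_sdiff.1 (π'.le (mem_of_mem_erase h) (mem_union_right _ ha))).2 ha
            rw [avoid_parts_of_subset _ hCm subset_union_right hb0ne hCnb,
              union_sdiff_right, sdiff_eq_self_of_disjoint hcd, mergePart_parts,
              Finset.erase_insert hnotin2, insert_erase hc]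
    rw [hfiber]
    have hE0notin : π'.extend hb0bot sdiff_disjoint hsup0
        ∉ π'.parts.attach.image (fun c => mergePart hb0s hb0ne π' c.1 c.2) := by
      intro h
      obtain ⟨c, _, hEq⟩ := Finset.mem_image.1 h
      have h1 := mergePart_parts_card hb0s hb0ne π' c.1 c.2
      rw [hEq, Finpartition.card_extend] at h1
      omega
    have hMinj : ∀ x ∈ π'.parts.attach, ∀ y ∈ π'.parts.attach,
        mergePart hb0s hb0ne π' x.1 x.2 = mergePart hb0s hb0ne π' y.1 y.2 → x = y := by
      rintro ⟨c1, h1⟩ - ⟨c2, h2⟩ - h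
      have hp := congrArg Finpartition.parts h
      rw [mergePart_parts, mergePart_parts] at hp
      have hmem : c1 ∪ b0 ∈ insert (c2 ∪ b0) (π'.parts.erase c2) :=
        hp ▸ mem_insert_self _ _
      rcases mem_insert.1 hmem with heq | hmem'
      · have hd1 : Disjoint c1 b0 := sdiff_disjoint.mono_left (π'.le h1)
        have hd2 : Disjoint c2 b0 := sdiff_disjoint.mono_left (π'.le h2)
        have : c1 = c2 := by
          have e1 : (c1 ∪ b0) \ b0 = c1 := by
            rw [union_sdiff_right, sdiff_eq_self_of_disjoint hd1]
          have e2 : (c2 ∪ b0) \ b0 = c2 := by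
            rw [union_sdiff_right, sdiff_eq_self_of_disjoint hd2]
          rw [← e1, ← e2, heq]
        exact Subtype.ext this
      · exfalso
        obtain ⟨a, ha⟩ := hb0ne
        exact (mem_sdiff.1 (π'.le (mem_of_mem_erase hmem') (mem_union_right _ ha))).2 ha
    rw [Finset.sum_insert hE0notin, Finset.sum_image hMinj]
    have hcards : ∀ c : {x // x ∈ π'.parts},
        (mergePart hb0s hb0ne π' c.1 c.2).parts.card = π'.parts.card :=
      fun c => mergePart_parts_card hb0s hb0ne π' c.1 c.2
    rw [Finset.sum_congr rfl (fun c _ => by rw [hcards c]), Finset.sum_const,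
      Finset.card_attach, Finpartition.card_extend]
    obtain ⟨n, hn⟩ : ∃ n, π'.parts.card = n + 1 := ⟨π'.parts.card - 1, by omega⟩
    rw [hn]
    simp only [Nat.add_sub_cancel, nsmul_eq_mul, Nat.factorial_succ, pow_succ,
      Nat.cast_mul, Nat.cast_add, Nat.cast_one]
    ring

lemma parts_card_ofSetoid {α : Type*} [Fintype α] [DecidableEq α] (sd : Setoid α)
    [DecidableRel sd.r] :
    (Finpartition.ofSetoid sd).parts.card = Nat.card (Quotient sd) := by
  classical
  set P := Finpartition.ofSetoid sd with hP
  have hparts : P.parts = univ.image P.part := by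
    ext p
    simp only [Finset.mem_image]
    constructor
    · intro hp
      obtain ⟨x, -, hxp⟩ := P.part_surjOn hp
      exact ⟨x, mem_univ x, hxp⟩
    · rintro ⟨x, -, rfl⟩
      exact P.part_mem.2 (mem_univ x)
  have hwd : ∀ a b : α, sd.r a b → P.part a = P.part b := by
    intro a b hab
    have hb : b ∈ P.part a := Finpartition.mem_part_ofSetoid_iff_rel.2 hab
    exact (P.part_eq_of_mem (P.part_mem.2 (mem_univ a)) hb).symm
  have hinj' : ∀ a b : α, P.part a = P.part b → sd.r a b := by
    intro a b h
    have : a ∈ P.part b := h ▸ P.mem_part (mem_univ a)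
    exact sd.iseqv.symm (Finpartition.mem_part_ofSetoid_iff_rel.1 this)
  haveI : Fintype (Quotient sd) := Quotient.fintype sd
  have hsurj : Function.Surjective (Quotient.mk sd) := fun q => ⟨q.out, Quotient.out_eq q⟩
  have hinj : Function.Injective (Quotient.lift P.part hwd) := by
    intro q1 q2 h
    induction q1 using Quotient.ind with | _ a =>
    induction q2 using Quotient.ind with | _ b =>
    exact Quotient.sound (hinj' a b h)
  rw [hparts, Nat.card_eq_fintype_card,
    show P.part = (Quotient.lift P.part hwd) ∘ (Quotient.mk sd) from rfl,
    ← Finset.image_image, Finset.image_univ_of_surjective hsurj,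
    Finset.card_image_of_injective _ hinj, Finset.card_univ]

section Graph
variable {V : Type*} [Fintype V] [DecidableEq V]

/-- The partition of the vertices into connected components of the graph with edge set `A`. -/
noncomputable def compPart (A : Finset (Sym2 V)) : Finpartition (univ : Finset V) :=
  @Finpartition.ofSetoid V _ _
    (SimpleGraph.fromEdgeSet (A : Set (Sym2 V))).reachableSetoid (Classical.decRel _)

lemma mem_part_compPart (A : Finset (Sym2 V)) (a b : V) :
    b ∈ (compPart A).part a ↔ (SimpleGraph.fromEdgeSet (A : Set (Sym2 V))).Reachable a b := by
  unfold compPart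
  exact Finpartition.mem_part_ofSetoid_iff_rel

lemma compPart_card (A : Finset (Sym2 V)) : (compPart A).parts.card = kcomp univ A := by
  unfold compPart kcomp
  rw [parts_card_ofSetoid]
  rw [Finset.coe_univ]
  exact Nat.card_congr
    (SimpleGraph.Iso.connectedComponentEquiv
      (SimpleGraph.induceUnivIso (SimpleGraph.fromEdgeSet (A : Set (Sym2 V))))).symm

variable (G : SimpleGraph V) [DecidableRel G.Adj]

lemma reachable_part_eq {π : Finpartition (univ : Finset V)}
    {A : Finset (Sym2 V)} (hA : A ⊆ π.parts.biUnion (edgesWithin G)) {x y : V}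
    (h : (SimpleGraph.fromEdgeSet (A : Set (Sym2 V))).Reachable x y) : π.part x = π.part y := by
  obtain ⟨w⟩ := h
  induction w with
  | nil => rfl
  | @cons x' y' z' hadj w ih =>
    rw [SimpleGraph.fromEdgeSet_adj] at hadj
    obtain ⟨hmem, hne⟩ := hadj
    have hmem' : s(x', y') ∈ π.parts.biUnion (edgesWithin G) := hA hmem
    obtain ⟨B, hB, heB⟩ := Finset.mem_biUnion.1 hmem'
    simp only [edgesWithin, Finset.mem_filter] at heB
    have hxB : x' ∈ B := heB.2 x' (by simp)
    have hyB : y' ∈ B := heB.2 y' (by simp)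
    rw [π.part_eq_of_mem hB hxB, ← π.part_eq_of_mem hB hyB]
    exact ih

lemma subset_iff_compPart_le
    {A : Finset (Sym2 V)} (hA : A ⊆ G.edgeFinset) (π : Finpartition (univ : Finset V)) :
    A ⊆ π.parts.biUnion (edgesWithin G) ↔ compPart A ≤ π := by
  constructor
  · intro h p hp
    obtain ⟨a, ha⟩ := (compPart A).nonempty_of_mem_parts hp
    refine ⟨π.part a, π.part_mem.2 (mem_univ a), ?_⟩
    intro b hb
    have hb' : b ∈ (compPart A).part a := by
      rwa [(compPart A).part_eq_of_mem hp ha]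
    have hr := (mem_part_compPart A a b).1 hb'
    rw [reachable_part_eq G h hr]
    exact π.mem_part (mem_univ b)
  · intro h e he
    induction e using Sym2.ind with
    | _ x y =>
      have hadjG : G.Adj x y := by
        have := hA he
        rwa [SimpleGraph.mem_edgeFinset, SimpleGraph.mem_edgeSet] at this
      have hadj : (SimpleGraph.fromEdgeSet (A : Set (Sym2 V))).Adj x y := by
        rw [SimpleGraph.fromEdgeSet_adj]
        exact ⟨he, hadjG.ne⟩
      have hy : y ∈ (compPart A).part x := (mem_part_compPart A x y).2 hadj.reachable
      have hx : x ∈ (compPart A).part x := (compPart A).mem_part (mem_univ x)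
      obtain ⟨B, hB, hsub⟩ := h ((compPart A).part_mem.2 (mem_univ x))
      refine Finset.mem_biUnion.2 ⟨B, hB, ?_⟩
      simp only [edgesWithin, Finset.mem_filter]
      refine ⟨hA he, ?_⟩
      intro z hz
      rw [Sym2.mem_iff] at hz
      rcases hz with rfl | rfl
      · exact hsub hx
      · exact hsub hy

lemma edgesWithin_pairwiseDisjoint (π : Finpartition (univ : Finset V)) :
    Set.PairwiseDisjoint ↑π.parts (edgesWithin G) := by
  intro B hB B' hB' hne
  rw [Function.onFun, Finset.disjoint_left]
  intro e heB heB'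
  simp only [edgesWithin, Finset.mem_filter] at heB heB'
  have hx : e.out.1 ∈ e := Sym2.out_fst_mem e
  exact hne (π.eq_of_mem_parts hB hB' (heB.2 _ hx) (heB'.2 _ hx))

end Graph
end PartitionAux

theorem stmt10 {V : Type*} [Fintype V] [DecidableEq V] [Nonempty V] {R : Type*} [CommRing R]
    (G : SimpleGraph V) [DecidableRel G.Adj] (v : Sym2 V → R) :
    Cmv G Finset.univ v
      = ∑ π : Finpartition (Finset.univ : Finset V),
          (-1 : R) ^ (π.parts.card - 1) * ((π.parts.card - 1).factorial : R) *
            ∏ B ∈ π.parts, ∏ e ∈ edgesWithin G B, (1 + v e) := by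
  classical
  have hEdge : edgesWithin G (univ : Finset V) = G.edgeFinset := by
    simp [edgesWithin]
  have hsubE : ∀ π : Finpartition (univ : Finset V),
      π.parts.biUnion (edgesWithin G) ⊆ G.edgeFinset := by
    intro π
    refine Finset.biUnion_subset.2 fun B _ => ?_
    simp only [edgesWithin]
    exact Finset.filter_subset _ _
  have step1 : ∀ π : Finpartition (univ : Finset V),
      ∏ B ∈ π.parts, ∏ e ∈ edgesWithin G B, (1 + v e)
        = ∑ A ∈ G.edgeFinset.powerset,
            (if A ⊆ π.parts.biUnion (edgesWithin G) then ∏ e ∈ A, v e else 0) := by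
    intro π
    rw [← Finset.prod_biUnion (edgesWithin_pairwiseDisjoint G π)]
    rw [Finset.prod_congr rfl (fun e _ => add_comm 1 (v e)), Finset.prod_add]
    simp only [Finset.prod_const_one, mul_one]
    have hpow : (π.parts.biUnion (edgesWithin G)).powerset
        = G.edgeFinset.powerset.filter (fun A => A ⊆ π.parts.biUnion (edgesWithin G)) := by
      ext A
      simp only [Finset.mem_powerset, Finset.mem_filter]
      exact ⟨fun h => ⟨h.trans (hsubE π), h⟩, fun h => h.2⟩
    rw [hpow, Finset.sum_filter]
  have hRHS : ∑ π : Finpartition (univ : Finset V),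
      (-1:R) ^ (π.parts.card - 1) * ((π.parts.card - 1).factorial : R) *
        ∏ B ∈ π.parts, ∏ e ∈ edgesWithin G B, (1 + v e)
    = ∑ A ∈ G.edgeFinset.powerset,
        (if kcomp univ A = 1 then (1:R) else 0) * ∏ e ∈ A, v e := by
    have e1 : ∑ π : Finpartition (univ : Finset V),
        (-1:R) ^ (π.parts.card - 1) * ((π.parts.card - 1).factorial : R) *
          ∏ B ∈ π.parts, ∏ e ∈ edgesWithin G B, (1 + v e)
      = ∑ π : Finpartition (univ : Finset V), ∑ A ∈ G.edgeFinset.powerset,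
          (if compPart A ≤ π then
            (-1:R) ^ (π.parts.card - 1) * ((π.parts.card - 1).factorial : R) * ∏ e ∈ A, v e
          else 0) := by
      refine Finset.sum_congr rfl fun π _ => ?_
      rw [step1 π, Finset.mul_sum]
      refine Finset.sum_congr rfl fun A hA => ?_
      rw [Finset.mem_powerset] at hA
      rw [mul_ite, mul_zero]
      simp only [subset_iff_compPart_le G hA π]
    rw [e1, Finset.sum_comm]
    refine Finset.sum_congr rfl fun A hA => ?_
    have key := sum_coarsenings (R := R) Finset.univ_nonempty (compPart A)
    rw [Finset.sum_filter, compPart_card A] at key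
    calc ∑ π : Finpartition (univ : Finset V),
          (if compPart A ≤ π then
            (-1:R) ^ (π.parts.card - 1) * ((π.parts.card - 1).factorial : R) * ∏ e ∈ A, v e
          else 0)
        = (∑ π : Finpartition (univ : Finset V),
            (if compPart A ≤ π then
              (-1:R) ^ (π.parts.card - 1) * ((π.parts.card - 1).factorial : R)
            else 0)) * ∏ e ∈ A, v e := by
          rw [Finset.sum_mul]
          refine Finset.sum_congr rfl fun π _ => ?_
          rw [ite_mul, zero_mul]
      _ = (if kcomp univ A = 1 then (1:R) else 0) * ∏ e ∈ A, v e := by rw [key]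
  rw [hRHS, Cmv, hEdge, Finset.sum_filter]
  refine Finset.sum_congr rfl fun A _ => ?_
  rw [ite_mul, one_mul, zero_mul]
end

section
/- Let G = (V,E) be a finite simple graph with |V| = n ≥ 1, and for 1 ≤ k ≤ n let Q_G(k) denote the number of partitions of V into exactly k nonempty independent sets (sets containing no edge of G). Then for every integer q ≥ 0, the number of proper q-colorings P_G(q) satisfies P_G(q) = Σ_{k=1}^{n} q(q-1)⋯(q-k+1) · Q_G(k); moreover C_G(-1) = Σ_{k=1}^{n} (-1)^{k-1} (k-1)! · Q_G(k), where C_G(-1) = Σ_{A ⊆ E : (V,A) connected} (-1)^{|A|}. -/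
open Finset SimpleGraph

section Part1
variable {V : Type*} [Fintype V] [DecidableEq V] {q : ℕ}

instance kerDec (σ : V → Fin q) : DecidableRel (Setoid.ker σ).r :=
  fun a b => inferInstanceAs (Decidable (σ a = σ b))

def fpart (σ : V → Fin q) : Finpartition (univ : Finset V) :=
  Finpartition.ofSetoid (Setoid.ker σ)

lemma mem_fpart_part {σ : V → Fin q} {a b : V} : b ∈ (fpart σ).part a ↔ σ a = σ b :=
  Finpartition.mem_part_ofSetoid_iff_rel

lemma parts_eq_image_part (π : Finpartition (univ : Finset V)) :
    π.parts = univ.image π.part := by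
  ext B
  simp only [mem_image, mem_univ, true_and]
  constructor
  · intro hB
    obtain ⟨a, ha⟩ := π.nonempty_of_mem_parts hB
    exact ⟨a, π.part_eq_of_mem hB ha⟩
  · rintro ⟨a, rfl⟩
    exact π.part_mem.mpr (mem_univ a)

lemma finpartition_eq_of_part {π₁ π₂ : Finpartition (univ : Finset V)}
    (h : ∀ a, π₁.part a = π₂.part a) : π₁ = π₂ := by
  ext1
  rw [parts_eq_image_part, parts_eq_image_part]
  exact Finset.image_congr fun a _ => h a

lemma const_on_fpart {σ : V → Fin q} {B : Finset V} (hB : B ∈ (fpart σ).parts)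
    {i j : V} (hi : i ∈ B) (hj : j ∈ B) : σ i = σ j :=
  mem_fpart_part.mp (((fpart σ).part_eq_of_mem hB hi) ▸ hj)

lemma fpart_eq_iff {σ : V → Fin q} {π : Finpartition (univ : Finset V)} :
    fpart σ = π ↔ ∀ a b, (σ a = σ b ↔ b ∈ π.part a) := by
  constructor
  · rintro rfl a b
    exact mem_fpart_part.symm
  · intro h
    apply finpartition_eq_of_part
    intro a
    ext b
    rw [mem_fpart_part, h a b]

instance : DecidableEq (Finpartition (univ : Finset V)) :=
  fun π₁ π₂ => decidable_of_iff (π₁.parts = π₂.parts)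
    ⟨fun h => Finpartition.ext h, fun h => h ▸ rfl⟩

variable (G : SimpleGraph V) [DecidableRel G.Adj]

/-- The equivalence between colorings with fiber partition `π` and injections of
the parts of `π` into the colors. -/
noncomputable def pRepr (π : Finpartition (univ : Finset V)) (B : {B // B ∈ π.parts}) : V :=
  (π.nonempty_of_mem_parts B.2).choose

lemma pRepr_mem (π : Finpartition (univ : Finset V)) (B : {B // B ∈ π.parts}) :
    pRepr π B ∈ B.1 :=
  (π.nonempty_of_mem_parts B.2).choose_spec

noncomputable def fiberEquiv (π : Finpartition (univ : Finset V)) :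
    {σ : V → Fin q // fpart σ = π} ≃ ({B // B ∈ π.parts} ↪ Fin q) where
  toFun σh := ⟨fun B => σh.1 (pRepr π B), by
    intro B₁ B₂ h
    have hb₁ := pRepr_mem π B₁
    have hb₂ := pRepr_mem π B₂
    have hm0 : pRepr π B₂ ∈ (fpart σh.1).part (pRepr π B₁) := mem_fpart_part.mpr h
    have hpe : (fpart σh.1).part (pRepr π B₁) = π.part (pRepr π B₁) :=
      congrArg (fun p => Finpartition.part p (pRepr π B₁)) σh.2
    have hm : pRepr π B₂ ∈ π.part (pRepr π B₁) := hpe ▸ hm0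
    have hp1 : π.part (pRepr π B₁) = B₁.1 := π.part_eq_of_mem B₁.2 hb₁
    exact Subtype.ext (π.eq_of_mem_parts B₁.2 B₂.2 (hp1 ▸ hm) hb₂)⟩
  invFun g := ⟨fun v => g ⟨π.part v, π.part_mem.mpr (mem_univ v)⟩, by
    rw [fpart_eq_iff]
    intro a b
    constructor
    · intro h
      have := g.injective h
      have hpp : π.part a = π.part b := congrArg Subtype.val this
      exact hpp ▸ π.mem_part (mem_univ b)
    · intro hb
      have : π.part b = π.part a := π.part_eq_of_mem (π.part_mem.mpr (mem_univ a)) hb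
      exact congrArg g (Subtype.ext this.symm)⟩
  left_inv := by
    rintro ⟨σ, hσ⟩
    apply Subtype.ext
    funext v
    simp only
    have h2 : π.part v = (fpart σ).part v :=
      (congrArg (fun p => Finpartition.part p v) hσ).symm
    have hm : pRepr π ⟨π.part v, π.part_mem.mpr (mem_univ v)⟩ ∈ (fpart σ).part v :=
      h2 ▸ pRepr_mem π ⟨π.part v, π.part_mem.mpr (mem_univ v)⟩
    exact (mem_fpart_part.mp hm).symm
  right_inv := by
    intro g
    apply Function.Embedding.ext
    intro B
    have hb := pRepr_mem π B
    simp only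
    exact congrArg g (Subtype.ext (π.part_eq_of_mem B.2 hb))

def properSet : Finset (V → Fin q) := univ.filter (fun σ => ∀ i j, G.Adj i j → σ i ≠ σ j)

lemma fiber_filter_eq (π : Finpartition (univ : Finset V))
    (hπ : ∀ B ∈ π.parts, ∀ i ∈ B, ∀ j ∈ B, ¬ G.Adj i j) :
    (properSet (q := q) G).filter (fun σ => fpart σ = π)
      = univ.filter (fun σ => fpart σ = π) := by
  ext σ
  simp only [properSet, mem_filter, mem_univ, true_and, and_iff_right_iff_imp]
  intro hσ i j hij hcol
  have hb : j ∈ π.part i :=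
    (congrArg (fun p => Finpartition.part p i) hσ) ▸ mem_fpart_part.mpr hcol
  exact hπ _ (π.part_mem.mpr (mem_univ i)) i (π.mem_part (mem_univ i)) j hb hij

lemma fiber_card (π : Finpartition (univ : Finset V))
    (hπ : ∀ B ∈ π.parts, ∀ i ∈ B, ∀ j ∈ B, ¬ G.Adj i j) :
    ((properSet (q := q) G).filter (fun σ => fpart σ = π)).card
      = q.descFactorial π.parts.card := by
  rw [fiber_filter_eq G π hπ, ← Fintype.card_subtype]
  rw [Fintype.card_congr (fiberEquiv (q := q) π), Fintype.card_embedding_eq]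
  simp [Fintype.card_coe]

lemma proper_maps_to (σ : V → Fin q) (hσ : σ ∈ properSet (q := q) G) :
    fpart σ ∈ univ.filter (fun π : Finpartition (univ : Finset V) =>
      ∀ B ∈ π.parts, ∀ i ∈ B, ∀ j ∈ B, ¬ G.Adj i j) := by
  simp only [properSet, mem_filter, mem_univ, true_and] at hσ ⊢
  intro B hB i hi j hj hAdj
  exact hσ i j hAdj (const_on_fpart hB hi hj)

lemma part1_count [Nonempty V] :
    Nat.card {σ : V → Fin q // ∀ i j, G.Adj i j → σ i ≠ σ j}
      = ∑ k ∈ Finset.Icc 1 (Fintype.card V),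
          q.descFactorial k *
            (univ.filter (fun π : Finpartition (univ : Finset V) =>
              π.parts.card = k ∧ ∀ B ∈ π.parts, ∀ i ∈ B, ∀ j ∈ B, ¬ G.Adj i j)).card := by
  rw [Nat.card_eq_fintype_card, Fintype.card_subtype]
  have h1 : (univ.filter (fun σ : V → Fin q => ∀ i j, G.Adj i j → σ i ≠ σ j))
      = properSet (q := q) G := rfl
  rw [h1]
  set Parts := univ.filter (fun π : Finpartition (univ : Finset V) =>
    ∀ B ∈ π.parts, ∀ i ∈ B, ∀ j ∈ B, ¬ G.Adj i j) with hParts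
  rw [Finset.card_eq_sum_card_fiberwise (f := fpart) (t := Parts)
    (fun σ hσ => proper_maps_to G σ hσ)]
  have h2 : ∀ π ∈ Parts, ((properSet (q := q) G).filter (fun σ => fpart σ = π)).card
      = q.descFactorial π.parts.card := by
    intro π hπ
    simp only [hParts, mem_filter, mem_univ, true_and] at hπ
    exact fiber_card G π hπ
  rw [Finset.sum_congr rfl h2]
  have hmaps : ∀ π ∈ Parts, π.parts.card ∈ Finset.Icc 1 (Fintype.card V) := by
    intro π hπ
    simp only [Finset.mem_Icc]
    constructor
    · have : π.parts.Nonempty := π.parts_nonempty (by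
        simp [Finset.bot_eq_empty, Finset.univ_nonempty.ne_empty])
      exact Finset.card_pos.mpr this
    · calc π.parts.card ≤ (univ : Finset V).card := π.card_parts_le_card
        _ = Fintype.card V := Finset.card_univ
  have h4 := Finset.sum_fiberwise_of_maps_to hmaps
    (fun π : Finpartition (univ : Finset V) => q.descFactorial π.parts.card)
  rw [← h4]
  refine Finset.sum_congr rfl fun k _ => ?_
  have h3 : ∀ π ∈ Parts.filter (fun π : Finpartition (univ : Finset V) => π.parts.card = k),
      q.descFactorial π.parts.card = q.descFactorial k := by
    intro π hπ
    simp only [mem_filter] at hπ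
    rw [hπ.2]
  rw [Finset.sum_congr rfl h3, Finset.sum_const, smul_eq_mul, mul_comm]
  congr 1
  rw [hParts, Finset.filter_filter]
  congr 1
  ext π
  simp only [Finset.mem_filter]
  tauto

end Part1


section Part2
variable {V : Type*} [Fintype V] [DecidableEq V]

/-- Maps constant on the adjacency classes of `H` are in bijection with maps on components. -/
def constEquiv (H : SimpleGraph V) (β : Type*) :
    {σ : V → β // ∀ i j, H.Adj i j → σ i = σ j} ≃ (H.ConnectedComponent → β) where
  toFun σh := ConnectedComponent.lift σh.1 (by
    have walk_const : ∀ {v w : V} (p : H.Walk v w), σh.1 v = σh.1 w := by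
      intro v w p
      induction p with
      | nil => rfl
      | cons h p ih => exact (σh.2 _ _ h).trans ih
    exact fun v w p _ => walk_const p)
  invFun c := ⟨fun v => c (H.connectedComponentMk v),
    fun i j hij => congrArg c (ConnectedComponent.sound hij.reachable)⟩
  left_inv σh := Subtype.ext rfl
  right_inv c := by
    funext x
    refine x.ind (fun v => ?_)
    rfl

/-- Iso between the induced graph on `univ` and the graph itself. -/
def univIso (H : SimpleGraph V) : H.induce (↑(Finset.univ : Finset V) : Set V) ≃g H where
  toEquiv := Equiv.subtypeUnivEquiv (fun x => Finset.mem_coe.mpr (mem_univ x))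
  map_rel_iff' := Iff.rfl

lemma kcomp_univ_eq (A : Finset (Sym2 V)) :
    kcomp (univ : Finset V) A
      = Nat.card (SimpleGraph.fromEdgeSet (A : Set (Sym2 V))).ConnectedComponent :=
  Nat.card_congr (univIso _).connectedComponentEquiv

lemma card_const (H : SimpleGraph V) (q : ℕ) :
    Nat.card {σ : V → Fin q // ∀ i j, H.Adj i j → σ i = σ j}
      = q ^ Nat.card H.ConnectedComponent := by
  rw [Nat.card_congr (constEquiv H (Fin q)), Nat.card_fun, Nat.card_eq_fintype_card (α := Fin q),
    Fintype.card_fin]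

variable (G : SimpleGraph V) [DecidableRel G.Adj]

lemma const_iff_mono {q : ℕ} (σ : V → Fin q) (A : Finset (Sym2 V)) :
    (∀ i j, (SimpleGraph.fromEdgeSet (A : Set (Sym2 V))).Adj i j → σ i = σ j)
      ↔ ∀ e ∈ A, ∀ x ∈ e, ∀ y ∈ e, σ x = σ y := by
  constructor
  · intro h e he
    refine e.ind (fun u v hm => ?_) he
    have key : σ u = σ v := by
      by_cases huv : u = v
      · rw [huv]
      · exact h u v ((SimpleGraph.fromEdgeSet_adj _).mpr ⟨hm, huv⟩)
    intro x hx y hy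
    rw [Sym2.mem_iff] at hx hy
    rcases hx with rfl | rfl <;> rcases hy with rfl | rfl <;>
      first | rfl | exact key | exact key.symm
  · intro h i j hij
    rw [SimpleGraph.fromEdgeSet_adj _] at hij
    exact h _ hij.1 i (Sym2.mem_mk_left i j) j (Sym2.mem_mk_right i j)

/-- Whitney's rank expansion evaluated: the number of proper colorings. -/
lemma whitney [Nonempty V] (q : ℕ) :
    ∑ A ∈ G.edgeFinset.powerset, (-1 : ℤ) ^ A.card * (q : ℤ) ^ (kcomp (univ : Finset V) A)
      = (Nat.card {σ : V → Fin q // ∀ i j, G.Adj i j → σ i ≠ σ j} : ℤ) := by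
  have h1 : ∀ A ∈ G.edgeFinset.powerset,
      (-1 : ℤ) ^ A.card * (q : ℤ) ^ (kcomp (univ : Finset V) A)
        = (-1 : ℤ) ^ A.card *
            ((univ.filter (fun σ : V → Fin q => ∀ e ∈ A, ∀ x ∈ e, ∀ y ∈ e, σ x = σ y)).card : ℤ) := by
    intro A _
    congr 1
    rw [kcomp_univ_eq]
    have hc : (univ.filter (fun σ : V → Fin q => ∀ e ∈ A, ∀ x ∈ e, ∀ y ∈ e, σ x = σ y)).card
        = q ^ Nat.card (SimpleGraph.fromEdgeSet (A : Set (Sym2 V))).ConnectedComponent :=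
      calc (univ.filter (fun σ : V → Fin q => ∀ e ∈ A, ∀ x ∈ e, ∀ y ∈ e, σ x = σ y)).card
          = Fintype.card {σ : V → Fin q // ∀ e ∈ A, ∀ x ∈ e, ∀ y ∈ e, σ x = σ y} :=
            (Fintype.card_subtype _).symm
        _ = Nat.card {σ : V → Fin q // ∀ e ∈ A, ∀ x ∈ e, ∀ y ∈ e, σ x = σ y} :=
            Nat.card_eq_fintype_card.symm
        _ = Nat.card {σ : V → Fin q //
              ∀ i j, (SimpleGraph.fromEdgeSet (A : Set (Sym2 V))).Adj i j → σ i = σ j} :=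
            Nat.card_congr (Equiv.subtypeEquivRight fun σ => (const_iff_mono σ A).symm)
        _ = q ^ Nat.card (SimpleGraph.fromEdgeSet (A : Set (Sym2 V))).ConnectedComponent :=
            card_const _ q
    rw [hc]
    push_cast
    rfl
  rw [Finset.sum_congr rfl h1]
  -- turn card into a sum over σ and swap
  have h2 : ∀ A : Finset (Sym2 V),
      ((univ.filter (fun σ : V → Fin q => ∀ e ∈ A, ∀ x ∈ e, ∀ y ∈ e, σ x = σ y)).card : ℤ)
        = ∑ σ : V → Fin q, if ∀ e ∈ A, ∀ x ∈ e, ∀ y ∈ e, σ x = σ y then (1 : ℤ) else 0 := by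
    intro A
    rw [Finset.sum_boole]
  simp_rw [h2, Finset.mul_sum]
  rw [Finset.sum_comm]
  have h3 : ∀ σ : V → Fin q,
      (∑ A ∈ G.edgeFinset.powerset,
        (-1 : ℤ) ^ A.card * (if ∀ e ∈ A, ∀ x ∈ e, ∀ y ∈ e, σ x = σ y then (1:ℤ) else 0))
      = if (∀ i j, G.Adj i j → σ i ≠ σ j) then 1 else 0 := by
    intro σ
    set M : Finset (Sym2 V) :=
      G.edgeFinset.filter (fun e => ∀ x ∈ e, ∀ y ∈ e, σ x = σ y) with hM
    have hsub : ∀ A ∈ G.edgeFinset.powerset,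
        (∀ e ∈ A, ∀ x ∈ e, ∀ y ∈ e, σ x = σ y) ↔ A ⊆ M := by
      intro A hA
      rw [Finset.mem_powerset] at hA
      constructor
      · intro h e he
        exact Finset.mem_filter.mpr ⟨hA he, h e he⟩
      · intro h e he
        exact (Finset.mem_filter.mp (h he)).2
    calc ∑ A ∈ G.edgeFinset.powerset,
          (-1 : ℤ) ^ A.card * (if ∀ e ∈ A, ∀ x ∈ e, ∀ y ∈ e, σ x = σ y then (1:ℤ) else 0)
        = ∑ A ∈ G.edgeFinset.powerset, (if A ⊆ M then (-1 : ℤ) ^ A.card else 0) := by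
          refine Finset.sum_congr rfl fun A hA => ?_
          rw [if_congr (hsub A hA) rfl rfl, mul_ite, mul_one, mul_zero]
      _ = ∑ A ∈ G.edgeFinset.powerset.filter (fun A => A ⊆ M), (-1 : ℤ) ^ A.card :=
          (Finset.sum_filter _ _).symm
      _ = ∑ A ∈ M.powerset, (-1 : ℤ) ^ A.card := by
          congr 1
          ext A
          simp only [Finset.mem_filter, Finset.mem_powerset]
          constructor
          · exact fun h => h.2
          · exact fun h => ⟨h.trans (Finset.filter_subset _ _), h⟩
      _ = if M = ∅ then 1 else 0 := Finset.sum_powerset_neg_one_pow_card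
      _ = if (∀ i j, G.Adj i j → σ i ≠ σ j) then 1 else 0 := by
          refine if_congr ?_ rfl rfl
          rw [Finset.filter_eq_empty_iff]
          constructor
          · intro h i j hij hc
            refine h (SimpleGraph.mem_edgeFinset.mpr ((SimpleGraph.mem_edgeSet G).mpr hij)) ?_
            intro x hx y hy
            rw [Sym2.mem_iff] at hx hy
            rcases hx with rfl | rfl <;> rcases hy with rfl | rfl <;>
              first | rfl | exact hc | exact hc.symm
          · intro h e he
            revert he
            refine e.ind (fun u v he hmono => ?_)
            have hadj : G.Adj u v := (SimpleGraph.mem_edgeSet G).mp (SimpleGraph.mem_edgeFinset.mp he)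
            exact h u v hadj (hmono u (Sym2.mem_mk_left u v) v (Sym2.mem_mk_right u v))
  rw [Finset.sum_congr rfl (fun σ _ => h3 σ)]
  rw [Finset.sum_boole, Nat.card_eq_fintype_card, Fintype.card_subtype]

end Part2

lemma dp_coeff_one (m : ℕ) :
    (descPochhammer ℤ (m + 1)).coeff 1 = (-1 : ℤ) ^ m * m.factorial := by
  induction m with
  | zero => simp [descPochhammer_one]
  | succ m ih =>
    have h0 : (descPochhammer ℤ (m + 1) * Polynomial.X).coeff 1 = (descPochhammer ℤ (m + 1)).coeff 0 :=
      Polynomial.coeff_mul_X _ 0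
    rw [descPochhammer_succ_right, ← Polynomial.C_eq_natCast, mul_sub, Polynomial.coeff_sub,
      Polynomial.coeff_mul_C, ih, h0, Polynomial.coeff_zero_eq_eval_zero,
      descPochhammer_ne_zero_eval_zero ℤ (Nat.succ_ne_zero m)]
    push_cast [Nat.factorial_succ]
    ring
set_option maxHeartbeats 1000000 in
theorem stmt11 {V : Type*} [Fintype V] [DecidableEq V] [Nonempty V]
    (G : SimpleGraph V) [DecidableRel G.Adj] (q : ℕ)
    (Q : ℕ → ℕ)
    (hQ : ∀ k, Q k = Nat.card {π : Finpartition (Finset.univ : Finset V) //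
      π.parts.card = k ∧ ∀ B ∈ π.parts, ∀ i ∈ B, ∀ j ∈ B, ¬ G.Adj i j}) :
    Nat.card {σ : V → Fin q // ∀ i j, G.Adj i j → σ i ≠ σ j}
        = ∑ k ∈ Finset.Icc 1 (Fintype.card V), q.descFactorial k * Q k
      ∧ (∑ A ∈ (edgesWithin G Finset.univ).powerset.filter
            (fun A => kcomp (Finset.univ : Finset V) A = 1), (-1 : ℤ) ^ A.card)
        = ∑ k ∈ Finset.Icc 1 (Fintype.card V),
            (-1 : ℤ) ^ (k - 1) * ((k - 1).factorial : ℤ) * (Q k : ℤ) := by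
  classical
  have hE : edgesWithin G Finset.univ = G.edgeFinset := by
    ext e; simp [edgesWithin]
  have hQ' : ∀ k, Q k = (univ.filter (fun π : Finpartition (univ : Finset V) =>
      π.parts.card = k ∧ ∀ B ∈ π.parts, ∀ i ∈ B, ∀ j ∈ B, ¬ G.Adj i j)).card := by
    intro k
    rw [hQ k, Nat.card_eq_fintype_card, Fintype.card_subtype]
  have hcount : ∀ q' : ℕ, Nat.card {σ : V → Fin q' // ∀ i j, G.Adj i j → σ i ≠ σ j}
      = ∑ k ∈ Finset.Icc 1 (Fintype.card V), q'.descFactorial k * Q k := by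
    intro q'
    rw [part1_count G]
    exact Finset.sum_congr rfl fun k _ => by rw [hQ' k]
  refine ⟨hcount q, ?_⟩
  set P1 : Polynomial ℤ := ∑ A ∈ G.edgeFinset.powerset,
    Polynomial.C ((-1 : ℤ) ^ A.card) * Polynomial.X ^ (kcomp (univ : Finset V) A) with hP1
  set P2 : Polynomial ℤ := ∑ k ∈ Finset.Icc 1 (Fintype.card V),
    Polynomial.C ((Q k : ℤ)) * descPochhammer ℤ k with hP2
  have heval : ∀ q' : ℕ, P1.eval (q' : ℤ) = P2.eval (q' : ℤ) := by
    intro q'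
    have e1 : P1.eval (q' : ℤ) = ∑ A ∈ G.edgeFinset.powerset,
        (-1 : ℤ) ^ A.card * (q' : ℤ) ^ (kcomp (univ : Finset V) A) := by
      simp [hP1, Polynomial.eval_finset_sum]
    have e2 : P2.eval (q' : ℤ) = ∑ k ∈ Finset.Icc 1 (Fintype.card V),
        (Q k : ℤ) * (q'.descFactorial k : ℤ) := by
      simp [hP2, Polynomial.eval_finset_sum, descPochhammer_eval_eq_descFactorial]
    rw [e1, e2, whitney G q', hcount q']
    push_cast
    exact Finset.sum_congr rfl fun k _ => mul_comm _ _
  have hPP : P1 = P2 := by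
    apply Polynomial.eq_of_infinite_eval_eq
    refine (Set.infinite_range_of_injective (fun a b h => by exact_mod_cast h :
      Function.Injective ((↑) : ℕ → ℤ))).mono ?_
    rintro x ⟨q', rfl⟩
    exact heval q'
  have hc1 : P1.coeff 1 = ∑ A ∈ G.edgeFinset.powerset.filter
      (fun A => kcomp (univ : Finset V) A = 1), (-1 : ℤ) ^ A.card := by
    rw [hP1, Polynomial.finset_sum_coeff, Finset.sum_filter]
    refine Finset.sum_congr rfl fun A _ => ?_
    rw [Polynomial.coeff_C_mul, Polynomial.coeff_X_pow]
    by_cases h : kcomp (univ : Finset V) A = 1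
    · simp [h]
    · rw [if_neg h, if_neg (fun h' => h h'.symm), mul_zero]
  have hc2 : P2.coeff 1 = ∑ k ∈ Finset.Icc 1 (Fintype.card V),
      (-1 : ℤ) ^ (k - 1) * ((k - 1).factorial : ℤ) * (Q k : ℤ) := by
    rw [hP2, Polynomial.finset_sum_coeff]
    refine Finset.sum_congr rfl fun k hk => ?_
    rw [Finset.mem_Icc] at hk
    obtain ⟨m, rfl⟩ : ∃ m, k = m + 1 := ⟨k - 1, by omega⟩
    rw [Polynomial.coeff_C_mul, dp_coeff_one]
    simp only [Nat.add_sub_cancel]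
    ring
  rw [hE, ← hc1, hPP, hc2]
end
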